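/- arXiv:2110.08040 — 8 statements merged into one kernel-verified Lean document; each statement's English description precedes it below -/
import Mathlib

section
/- Let L be a complete lattice that is distributive and satisfies (MR). Then every equivalence class of the prime interval projectivity relation on Cm is a singleton: for all φ, ψ ∈ Cm, φ ∼ ψ implies φ = ψ. (This is the implication (i) ⇒ (ii) of Proposition 2 of the paper, which characterizes distributivity of a congruence lattice by triviality of the PIP relation.) -/
variable {L : Type*} [CompleteLattice L]

/-- `eta` is completely meet irreducible with (unique) cover `p`. -/
def IsCMIL (η p : L) : Prop := η < p ∧ ∀ β, η < β → p ≤ β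

/-- A single up or down transposition between the intervals `I[pq.1, pq.2]`
and `I[rs.1, rs.2]`. -/
def PerspL (pq rs : L × L) : Prop :=
  (pq.1 = pq.2 ⊓ rs.1 ∧ rs.2 = pq.2 ⊔ rs.1) ∨
    (rs.1 = rs.2 ⊓ pq.1 ∧ pq.2 = rs.2 ⊔ pq.1)

/-- Projectivity of intervals: a finite chain of up and down transpositions. -/
def ProjectiveL : L × L → L × L → Prop := Relation.ReflTransGen PerspL

/-- Prime interval projectivity: the prime intervals `I[φ,φ⁺]` and `I[ψ,ψ⁺]`
over completely meet irreducible elements are projective. -/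
def PIPL (φ ψ : L) : Prop :=
  ∃ p q, IsCMIL φ p ∧ IsCMIL ψ q ∧ ProjectiveL (φ, p) (ψ, q)

/-- Proposition 2, (i) ⇒ (ii): in a distributive complete lattice satisfying (MR),
every PIP equivalence class is a singleton. -/
theorem stmt0
    (hMR : ∀ x : L, x = sInf {η | (∃ p, IsCMIL η p) ∧ x ≤ η})
    (hdist : ∀ x y z : L, x ⊓ (y ⊔ z) = x ⊓ y ⊔ x ⊓ z) :
    ∀ φ ψ : L, PIPL φ ψ → φ = ψ := by
  -- join distributivity follows from meet distributivity
  have hjd : ∀ x y z : L, x ⊔ (y ⊓ z) = (x ⊔ y) ⊓ (x ⊔ z) := by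
    intro x y z
    have h1 : (x ⊔ y) ⊓ (x ⊔ z) = (x ⊔ y) ⊓ x ⊔ (x ⊔ y) ⊓ z := hdist _ _ _
    have h2 : (x ⊔ y) ⊓ x = x := inf_eq_right.mpr le_sup_left
    have h3 : (x ⊔ y) ⊓ z = z ⊓ x ⊔ z ⊓ y := by
      rw [inf_comm]; exact hdist _ _ _
    rw [h1, h2, h3, ← sup_assoc, sup_eq_left.mpr (inf_le_right : z ⊓ x ≤ x), inf_comm y z]
  -- key lemma: completely meet irreducibles are meet-prime-ish
  have key : ∀ η p b c : L, IsCMIL η p → b ⊓ c ≤ η → ¬ b ≤ η → c ≤ η := by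
    intro η p b c hcmi hbc hb
    by_contra hc
    have h1 : p ≤ η ⊔ b := hcmi.2 _ (left_lt_sup.mpr hb)
    have h2 : p ≤ η ⊔ c := hcmi.2 _ (left_lt_sup.mpr hc)
    have h3 : (η ⊔ b) ⊓ (η ⊔ c) = η := by
      rw [← hjd]; exact sup_eq_left.mpr hbc
    exact absurd (le_trans (le_inf h1 h2) h3.le) (not_le_of_gt hcmi.1)
  -- separation invariant
  have inv : ∀ η p : L, IsCMIL η p → ∀ ab cd : L × L, PerspL ab cd →
      ((ab.1 ≤ η ∧ ¬ ab.2 ≤ η) ↔ (cd.1 ≤ η ∧ ¬ cd.2 ≤ η)) := by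
    intro η p hcmi ab cd hpersp
    obtain ⟨ha, hd⟩ | ⟨hc, hb⟩ := hpersp
    · constructor
      · rintro ⟨h1, h2⟩
        refine ⟨key η p ab.2 cd.1 hcmi (ha ▸ h1) h2, fun h => h2 ?_⟩
        · exact le_trans le_sup_left (hd ▸ h)
      · rintro ⟨h1, h2⟩
        constructor
        · exact ha ▸ le_trans inf_le_right h1
        · intro h; exact h2 (hd ▸ sup_le h h1)
    · constructor
      · rintro ⟨h1, h2⟩
        constructor
        · exact hc ▸ le_trans inf_le_right h1
        · intro h; exact h2 (hb ▸ sup_le h h1)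
      · rintro ⟨h1, h2⟩
        refine ⟨key η p cd.2 ab.1 hcmi (hc ▸ h1) h2, fun h => h2 ?_⟩
        · exact le_trans le_sup_left (hb ▸ h)
  have inv' : ∀ η p : L, IsCMIL η p → ∀ ab cd : L × L, ProjectiveL ab cd →
      ((ab.1 ≤ η ∧ ¬ ab.2 ≤ η) ↔ (cd.1 ≤ η ∧ ¬ cd.2 ≤ η)) := by
    intro η p hcmi ab cd hproj
    induction hproj with
    | refl => rfl
    | tail _ hstep ih => exact ih.trans (inv η p hcmi _ _ hstep)
  rintro φ ψ ⟨p, q, hφ, hψ, hproj⟩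
  have h1 : ψ ≤ φ ∧ ¬ q ≤ φ :=
    (inv' φ p hφ (φ, p) (ψ, q) hproj).mp ⟨le_refl φ, not_le_of_gt hφ.1⟩
  have h2 : φ ≤ ψ ∧ ¬ p ≤ ψ :=
    (inv' ψ q hψ (φ, p) (ψ, q) hproj).mpr ⟨le_refl ψ, not_le_of_gt hψ.1⟩
  exact le_antisymm h2.1 h1.1
end

section
/- Let L be a complete modular lattice satisfying (MR) and the decomposition property (D): for all α, β ∈ L and η ∈ Cm with α ⊓ β ≤ η there exist μ₁, μ₂ ∈ (η/∼) ∪ {⊤} such that α ≤ μ₁, β ≤ μ₂ and μ₁ ⊓ μ₂ ≤ η. If every equivalence class of the prime interval projectivity relation on Cm is a singleton, then L is distributive. (This is the implication (ii) ⇒ (i) of Proposition 2 of the paper, proved using Theorem 1 of the paper, whose conclusion is hypothesis (D).) -/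
variable {L : Type*} [CompleteLattice L]

/-- Proposition 2, (ii) ⇒ (i): a complete modular lattice satisfying (MR) and the
decomposition property (D) in which every PIP class is a singleton is distributive. -/
theorem stmt1
    (hmod : ∀ x y z : L, x ≤ z → x ⊔ y ⊓ z = (x ⊔ y) ⊓ z)
    (hMR : ∀ x : L, x = sInf {η | (∃ p, IsCMIL η p) ∧ x ≤ η})
    (hD : ∀ α β η p : L, IsCMIL η p → α ⊓ β ≤ η →
      ∃ μ₁ μ₂ : L, (μ₁ = ⊤ ∨ PIPL μ₁ η) ∧ (μ₂ = ⊤ ∨ PIPL μ₂ η) ∧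
        α ≤ μ₁ ∧ β ≤ μ₂ ∧ μ₁ ⊓ μ₂ ≤ η)
    (hsing : ∀ φ ψ : L, PIPL φ ψ → φ = ψ) :
    ∀ x y z : L, x ⊓ (y ⊔ z) = x ⊓ y ⊔ x ⊓ z := by
  intro x y z
  apply le_antisymm
  · rw [hMR (x ⊓ y ⊔ x ⊓ z)]
    apply le_sInf
    rintro η ⟨⟨p, hp⟩, hle⟩
    have h1 : x ⊓ y ≤ η := le_trans le_sup_left hle
    have h2 : x ⊓ z ≤ η := le_trans le_sup_right hle
    obtain ⟨μ₁, μ₂, hμ₁, hμ₂, hxμ, hyμ, hμη⟩ := hD x y η p hp h1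
    obtain ⟨ν₁, ν₂, hν₁, hν₂, hxν, hzν, hνη⟩ := hD x z η p hp h2
    have key : x ≤ η ∨ (y ≤ η ∧ z ≤ η) ∨ η = ⊤ := by
      rcases hμ₁ with h | h
      · rcases hν₁ with h' | h'
        · rcases hμ₂ with h2' | h2'
          · right; right
            rw [h, h2'] at hμη
            simpa using le_antisymm le_top (by simpa using hμη)
          · have hy : y ≤ η := le_trans hyμ (hsing _ _ h2').le
            rcases hν₂ with h3' | h3'
            · right; right
              rw [h', h3'] at hνη
              simpa using le_antisymm le_top (by simpa using hνη)
            · exact Or.inr (Or.inl ⟨hy, le_trans hzν (hsing _ _ h3').le⟩)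
        · exact Or.inl (le_trans hxν (hsing _ _ h').le)
      · exact Or.inl (le_trans hxμ (hsing _ _ h).le)
    rcases key with h | h | h
    · exact le_trans inf_le_left h
    · exact le_trans inf_le_right (sup_le h.1 h.2)
    · simp [h]
  · exact sup_le (inf_le_inf_left x le_sup_left) (inf_le_inf_left x le_sup_right)
end

section
/- Let L be a complete modular lattice satisfying (MR), and let α₁, β₁, α₂, β₂, α₃, β₃ ∈ L be such that β₂ covers α₂ and I[α₁,β₁] ↗ I[α₂,β₂] ↘ I[α₃,β₃]. Then there exists μ ∈ Cm such that I[α₁,β₁] ↗ I[μ,μ⁺] ↘ I[α₃,β₃]; in particular, any μ ∈ Cm with μ ≥ α₂ and μ ≱ β₂ has this property. (This is the observation proved in Section 2 of the paper which allows every projectivity chain between prime intervals to be rewritten so that all intermediate upper intervals are of the form I[μ,μ⁺] with μ completely meet irreducible.) -/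
variable {L : Type*} [CompleteLattice L]

/-- The observation of Section 2: if `I[α₁,β₁] ↗ I[α₂,β₂] ↘ I[α₃,β₃]` with `I[α₂,β₂]`
prime, then there is a completely meet irreducible `μ` with
`I[α₁,β₁] ↗ I[μ,μ⁺] ↘ I[α₃,β₃]`; in particular any `μ ∈ Cm` with `μ ≥ α₂`, `μ ≱ β₂`
works. -/
theorem stmt2
    (hmod : ∀ x y z : L, x ≤ z → x ⊔ y ⊓ z = (x ⊔ y) ⊓ z)
    (hMR : ∀ x : L, x = sInf {η | (∃ p, IsCMIL η p) ∧ x ≤ η})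
    (α₁ β₁ α₂ β₂ α₃ β₃ : L) (hcov : α₂ ⋖ β₂)
    (hup : α₁ = β₁ ⊓ α₂ ∧ β₂ = β₁ ⊔ α₂)
    (hdn : α₃ = β₃ ⊓ α₂ ∧ β₂ = β₃ ⊔ α₂) :
    (∀ μ p : L, IsCMIL μ p → α₂ ≤ μ → ¬ β₂ ≤ μ →
      (α₁ = β₁ ⊓ μ ∧ p = β₁ ⊔ μ) ∧ (α₃ = β₃ ⊓ μ ∧ p = β₃ ⊔ μ)) ∧
    ∃ μ p : L, IsCMIL μ p ∧
      (α₁ = β₁ ⊓ μ ∧ p = β₁ ⊔ μ) ∧ (α₃ = β₃ ⊓ μ ∧ p = β₃ ⊔ μ) := by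

  obtain ⟨hA1, hB1⟩ := hup
  obtain ⟨hA3, hB3⟩ := hdn
  have hb1le : β₁ ≤ β₂ := hB1 ▸ le_sup_left
  have hb3le : β₃ ≤ β₂ := hB3 ▸ le_sup_left
  have main : ∀ μ p : L, IsCMIL μ p → α₂ ≤ μ → ¬ β₂ ≤ μ →
      (α₁ = β₁ ⊓ μ ∧ p = β₁ ⊔ μ) ∧ (α₃ = β₃ ⊓ μ ∧ p = β₃ ⊔ μ) := by
    intro μ p hμ hle hnle
    have hmeet : β₂ ⊓ μ = α₂ := by
      rcases hcov.eq_or_eq (c := β₂ ⊓ μ) (le_inf hcov.le hle) inf_le_left with h | h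
      · exact h
      · exact absurd (h ▸ inf_le_right) hnle
    have hμlt : μ < β₂ ⊔ μ := right_lt_sup.mpr hnle
    have hcovμ : μ ⋖ β₂ ⊔ μ := by
      refine ⟨hμlt, fun t hμt htlt => ?_⟩
      have ht1 : α₂ ≤ t ⊓ β₂ := le_inf (hle.trans hμt.le) hcov.le
      rcases hcov.eq_or_eq (c := t ⊓ β₂) ht1 inf_le_right with h | h
      · have hteq : t = μ := by
          have := hmod μ β₂ t hμt.le
          have ht2 : (μ ⊔ β₂) ⊓ t = t := inf_eq_right.mpr (by
            rw [sup_comm]; exact htlt.le)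
          rw [ht2] at this
          rw [← this, inf_comm β₂ t, h, sup_eq_left.mpr hle]
        exact absurd hteq.symm hμt.ne
      · have : β₂ ⊔ μ ≤ t := sup_le (h ▸ inf_le_left) hμt.le
        exact absurd this htlt.not_ge
    have hp : p = β₂ ⊔ μ := by
      rcases hcovμ.eq_or_eq (c := p) hμ.1.le (hμ.2 _ hμlt) with h | h
      · exact absurd h.symm hμ.1.ne
      · exact h
    have hb1 : ¬ β₁ ≤ μ := fun h => hnle (hB1 ▸ sup_le h hle)
    have hb3 : ¬ β₃ ≤ μ := fun h => hnle (hB3 ▸ sup_le h hle)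
    have hsup : ∀ β : L, β ≤ β₂ → ¬ β ≤ μ → p = β ⊔ μ := by
      intro β hβ hnβ
      have h1 : μ < β ⊔ μ := right_lt_sup.mpr hnβ
      have h2 : β ⊔ μ ≤ β₂ ⊔ μ := sup_le_sup_right hβ _
      rcases hcovμ.eq_or_eq (c := β ⊔ μ) h1.le h2 with h | h
      · exact absurd h.symm h1.ne
      · exact (hp.trans h.symm)
    have hinf : ∀ β : L, β ≤ β₂ → β ⊓ μ = β ⊓ α₂ := by
      intro β hβ
      calc β ⊓ μ = (β ⊓ β₂) ⊓ μ := by rw [inf_eq_left.mpr hβ]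
        _ = β ⊓ (β₂ ⊓ μ) := inf_assoc _ _ _
        _ = β ⊓ α₂ := by rw [hmeet]
    exact ⟨⟨hA1.trans (hinf β₁ hb1le).symm, hsup β₁ hb1le hb1⟩,
           ⟨hA3.trans (hinf β₃ hb3le).symm, hsup β₃ hb3le hb3⟩⟩
  refine ⟨main, ?_⟩
  by_contra hcon
  push_neg at hcon
  have hall : ∀ η ∈ {η : L | (∃ p, IsCMIL η p) ∧ α₂ ≤ η}, β₂ ≤ η := by
    rintro η ⟨⟨p, hp⟩, hle⟩
    by_contra hn
    obtain ⟨⟨h1, h2⟩, h3, h4⟩ := main η p hp hle hn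
    exact hcon η p hp ⟨h1, h2⟩ h3 h4
  have : β₂ ≤ α₂ := by
    conv_rhs => rw [hMR α₂]
    exact le_sInf hall
  exact hcov.lt.not_ge this
end

section
/- Let L be a complete modular lattice satisfying (MR) and condition (P): φ ∼ ψ implies φ⁺ = ψ⁺ for all φ, ψ ∈ Cm. Then for all φ, ψ ∈ Cm with φ ∼ ψ there exist α, β ∈ L such that I[φ,φ⁺] ↘ I[α,β] ↗ I[ψ,ψ⁺], i.e., φ ⊓ β = α = ψ ⊓ β and φ ⊔ β = φ⁺ and ψ ⊔ β = ψ⁺. (This is Lemma 6 of the paper: under (SC1), which yields condition (P), projectivity of prime intervals over completely meet irreducible congruences can always be realized by a single down–up transposition.) -/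
variable {L : Type*} [CompleteLattice L]

/-- Auxiliary covering relation. -/
def CovL (a b : L) : Prop := a < b ∧ ∀ z, a < z → z < b → False

/-- A common "down-up" witness between `φ` and `η` below `p`. -/
def Wit (p φ η : L) : Prop := ∃ β, β ⊓ φ = β ⊓ η ∧ β ⊔ φ = p ∧ β ⊔ η = p

lemma covEqL {a b z : L} (h : CovL a b) (h1 : a ≤ z) (h2 : z ≤ b) (h3 : z ≠ b) : z = a := by
  rcases eq_or_lt_of_le h1 with h4 | h4
  · exact h4.symm
  · exact (h.2 z h4 (lt_of_le_of_ne h2 h3)).elim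

/-- down transfer of covering in a modular lattice -/
lemma covL1 (hmod : ∀ x y z : L, x ≤ z → x ⊔ y ⊓ z = (x ⊔ y) ⊓ z)
    {a b c d : L} (ha : a = b ⊓ c) (hd : d = b ⊔ c) (hcd : CovL c d) : CovL a b := by
  have hab : a ≤ b := ha ▸ inf_le_left
  have hne : a ≠ b := by
    intro h
    have hbc : b ≤ c := inf_eq_left.mp (by rw [h] at ha; exact ha.symm)
    exact hcd.1.ne' (by rw [hd, sup_eq_right.2 hbc])
  refine ⟨lt_of_le_of_ne hab hne, ?_⟩
  intro z hz hzb
  have h1 : ¬ z ≤ c := by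
    intro h
    exact hz.not_ge (ha ▸ le_inf hzb.le h)
  have h2 : z ⊔ c = d := by
    have hle : z ⊔ c ≤ d := by rw [hd]; exact sup_le (hzb.le.trans le_sup_left) le_sup_right
    rcases eq_or_lt_of_le (le_sup_right : c ≤ z ⊔ c) with h3 | h3
    · exact absurd (h3 ▸ le_sup_left) h1
    · rcases eq_or_lt_of_le hle with h4 | h4
      · exact h4
      · exact (hcd.2 _ h3 h4).elim
  have hmz := hmod z c b hzb.le
  rw [h2, inf_comm c b, ← ha, sup_eq_left.2 hz.le] at hmz
  have hbd : b ≤ d := by rw [hd]; exact le_sup_left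
  rw [inf_eq_right.2 hbd] at hmz
  exact hzb.ne hmz

/-- up transfer of covering in a modular lattice -/
lemma covL2 (hmod : ∀ x y z : L, x ≤ z → x ⊔ y ⊓ z = (x ⊔ y) ⊓ z)
    {a b c d : L} (ha : a = b ⊓ c) (hd : d = b ⊔ c) (hab : CovL a b) : CovL c d := by
  have hcd : c ≤ d := hd ▸ le_sup_right
  have hne : c ≠ d := by
    intro h
    have hbd : b ≤ d := by rw [hd]; exact le_sup_left
    have hbc : b ≤ c := by rw [h]; exact hbd
    exact hab.1.ne (by rw [ha, inf_eq_left.2 hbc])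
  refine ⟨lt_of_le_of_ne hcd hne, ?_⟩
  intro z hz hzd
  have hbz : ¬ b ≤ z := by
    intro h
    exact hzd.ne (le_antisymm hzd.le (by rw [hd]; exact sup_le h hz.le))
  have hac : a ≤ c := ha ▸ inf_le_right
  have h1 : a ≤ b ⊓ z := le_inf (ha ▸ inf_le_left) (hac.trans hz.le)
  have h2 : b ⊓ z < b := lt_of_le_of_ne inf_le_left (fun h => hbz (h ▸ inf_le_right))
  rcases eq_or_lt_of_le h1 with h3 | h3
  · have hmz := hmod c b z hz.le
    rw [← h3, sup_eq_left.2 hac, sup_comm c b, ← hd, inf_eq_right.2 hzd.le] at hmz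
    exact hz.ne hmz
  · exact hab.2 _ h3 h2

lemma coatomL {x p : L} (h : IsCMIL x p) : CovL x p :=
  ⟨h.1, fun z h1 h2 => h2.not_ge (h.2 z h1)⟩

lemma pairL (hmod : ∀ x y z : L, x ≤ z → x ⊔ y ⊓ z = (x ⊔ y) ⊓ z)
    {p x y : L} (hx : IsCMIL x p) (hy : IsCMIL y p) (hne : x ≠ y) :
    x ⊔ y = p ∧ CovL (x ⊓ y) x ∧ CovL (x ⊓ y) y := by
  have hxy : ¬ x ≤ y := fun h => (hx.2 y (lt_of_le_of_ne h hne)).not_gt hy.1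
  have hyx : ¬ y ≤ x := fun h => (hy.2 x (lt_of_le_of_ne h hne.symm)).not_gt hx.1
  have hsup : x ⊔ y = p := le_antisymm (sup_le hx.1.le hy.1.le) (hx.2 _ (left_lt_sup.2 hyx))
  refine ⟨hsup, covL1 hmod rfl hsup.symm (coatomL hy), ?_⟩
  exact covL1 hmod (inf_comm x y) (by rw [sup_comm, hsup]) (coatomL hx)

lemma pickL (hMR : ∀ x : L, x = sInf {η | (∃ p, IsCMIL η p) ∧ x ≤ η})
    {x y : L} (h : ¬ y ≤ x) : ∃ η q, IsCMIL η q ∧ x ≤ η ∧ ¬ y ≤ η := by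
  by_contra hc
  push_neg at hc
  apply h
  rw [hMR x]
  refine le_sInf ?_
  rintro η ⟨⟨q, hq⟩, hxη⟩
  exact hc η q hq hxη

lemma joinCMIL {p η c : L} (hη : IsCMIL η p) (hc : c ≤ p) (h : ¬ c ≤ η) : η ⊔ c = p :=
  le_antisymm (sup_le hη.1.le hc) (hη.2 _ (left_lt_sup.2 h))

lemma strongWit (hmod : ∀ x y z : L, x ≤ z → x ⊔ y ⊓ z = (x ⊔ y) ⊓ z)
    {p φ η : L} (hφ : IsCMIL φ p) (hη : IsCMIL η p) (hne : φ ≠ η) (hw : Wit p φ η) :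
    ∃ m, m ⊓ φ = φ ⊓ η ∧ m ⊓ η = φ ⊓ η ∧ m ⊔ φ = p ∧ m ⊔ η = p ∧ CovL m p := by
  obtain ⟨β, h1, h2, h3⟩ := hw
  obtain ⟨hsup, hcφ, hcη⟩ := pairL hmod hφ hη hne
  have hδ : β ⊓ φ ≤ φ ⊓ η := le_inf inf_le_right (h1 ▸ inf_le_right)
  have hmφ : (φ ⊓ η ⊔ β) ⊓ φ = φ ⊓ η := by
    rw [← hmod (φ ⊓ η) β φ inf_le_left]
    exact sup_eq_left.2 hδ
  have hmη : (φ ⊓ η ⊔ β) ⊓ η = φ ⊓ η := by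
    rw [← hmod (φ ⊓ η) β η inf_le_right, ← h1]
    exact sup_eq_left.2 hδ
  have hmφs : (φ ⊓ η ⊔ β) ⊔ φ = p := by
    rw [sup_assoc, h2]
    exact sup_eq_right.2 (inf_le_left.trans hφ.1.le)
  have hmηs : (φ ⊓ η ⊔ β) ⊔ η = p := by
    rw [sup_assoc, h3]
    exact sup_eq_right.2 (inf_le_left.trans hφ.1.le)
  refine ⟨φ ⊓ η ⊔ β, hmφ, hmη, hmφs, hmηs, ?_⟩
  exact covL2 hmod (by rw [inf_comm η (φ ⊓ η ⊔ β), hmη]) (by rw [sup_comm, hmηs]) hcη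

lemma witTrans (hmod : ∀ x y z : L, x ≤ z → x ⊔ y ⊓ z = (x ⊔ y) ⊓ z)
    {p φ η θ : L} (hφ : IsCMIL φ p) (hη : IsCMIL η p) (hθ : IsCMIL θ p)
    (h1 : Wit p φ η) (h2 : Wit p η θ) : Wit p φ θ := by
  rcases eq_or_ne φ θ with rfl | hφθ
  · exact ⟨p, rfl, sup_eq_left.2 hφ.1.le, sup_eq_left.2 hφ.1.le⟩
  rcases eq_or_ne φ η with rfl | hφη
  · exact h2
  rcases eq_or_ne η θ with rfl | hηθ
  · exact h1
  obtain ⟨m, hm1, hm2, hm3, hm4, hm5⟩ := strongWit hmod hφ hη hφη h1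
  obtain ⟨n, hn1, hn2, hn3, hn4, hn5⟩ := strongWit hmod hη hθ hηθ h2
  obtain ⟨hsφη, hc12φ, hc12η⟩ := pairL hmod hφ hη hφη
  obtain ⟨hsηθ, hc23η, hc23θ⟩ := pairL hmod hη hθ hηθ
  obtain ⟨hsφθ, hc13φ, hc13θ⟩ := pairL hmod hφ hθ hφθ
  by_cases hA : φ ⊓ θ ≤ η
  · have e1 : φ ⊓ η = φ ⊓ θ := by
      have hle : φ ⊓ θ ≤ φ ⊓ η := le_inf inf_le_left hA
      rcases eq_or_lt_of_le hle with h | h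
      · exact h.symm
      · exact (hc13φ.2 _ h hc12φ.1).elim
    have e2 : η ⊓ θ = φ ⊓ θ := by
      have hle : φ ⊓ θ ≤ η ⊓ θ := le_inf hA inf_le_right
      rcases eq_or_lt_of_le hle with h | h
      · exact h.symm
      · exact (hc13θ.2 _ h hc23θ.1).elim
    refine ⟨η, ?_, by rw [sup_comm]; exact hsφη, hsηθ⟩
    rw [inf_comm η φ, e1, ← e2, inf_comm η θ]
  · -- Case B
    have hδ13θlt : φ ⊓ θ < θ := by
      refine lt_of_le_of_ne inf_le_right (fun h => hφ.1.ne ?_)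
      rw [← hsφθ, sup_eq_left.2 (h ▸ inf_le_left)]
    have hδ13φlt : φ ⊓ θ < φ := by
      refine lt_of_le_of_ne inf_le_left (fun h => hθ.1.ne ?_)
      rw [← hsφθ, sup_eq_right.2 (h ▸ inf_le_right)]
    have keyA : ¬ η ⊓ θ ≤ φ := by
      intro h
      have hle : η ⊓ θ ≤ φ ⊓ θ := le_inf h inf_le_right
      rcases eq_or_lt_of_le hle with h' | h'
      · exact hA (h' ▸ inf_le_left)
      · exact hc23θ.2 _ h' hδ13θlt
    have keyB : ¬ φ ⊓ η ≤ θ := by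
      intro h
      have hle : φ ⊓ η ≤ φ ⊓ θ := le_inf inf_le_left h
      rcases eq_or_lt_of_le hle with h' | h'
      · exact hA (h' ▸ inf_le_right)
      · exact hc12φ.2 _ h' hδ13φlt
    have hmn : m ≠ n := by
      intro h
      refine keyA ?_
      rw [← hn1, ← h, hm2]
      exact inf_le_left
    have hmnp : m ⊔ n = p := by
      have hnm : ¬ n ≤ m := by
        intro h
        rcases eq_or_lt_of_le h with h' | h'
        · exact hmn h'.symm
        · exact hn5.2 _ h' hm5.1
      have hnlt : ¬ m ⊔ n < p := fun hh => hm5.2 _ (left_lt_sup.2 hnm) hh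
      exact eq_of_le_of_not_lt (sup_le hm5.1.le hn5.1.le) hnlt
    have hgm : CovL (m ⊓ n) m := covL1 hmod rfl hmnp.symm hn5
    have hgn : CovL (m ⊓ n) n := covL1 hmod (inf_comm m n) (by rw [sup_comm, hmnp]) hm5
    have hiii : m ⊓ n ⊓ φ ≤ φ ⊓ θ := by
      have ha : m ⊓ n ⊓ φ ≤ n := inf_le_left.trans inf_le_right
      have hb : m ⊓ n ⊓ φ ≤ η :=
        (le_inf (inf_le_left.trans inf_le_left) inf_le_right).trans (hm1.le.trans inf_le_right)
      exact le_inf inf_le_right (((le_inf ha hb).trans hn1.le).trans inf_le_right)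
    have hiv : m ⊓ n ⊓ θ ≤ φ ⊓ θ := by
      have ha : m ⊓ n ⊓ θ ≤ m := inf_le_left.trans inf_le_left
      have hb : m ⊓ n ⊓ θ ≤ η :=
        (le_inf (inf_le_left.trans inf_le_right) inf_le_right).trans (hn2.le.trans inf_le_left)
      exact le_inf (((le_inf ha hb).trans hm2.le).trans inf_le_left) inf_le_right
    have hi : ¬ m ⊓ n ≤ φ := by
      intro h
      have hgη : m ⊓ n ≤ η := (le_inf inf_le_left h).trans (hm1.le.trans inf_le_right)
      have hgδ23 : m ⊓ n ≤ η ⊓ θ := (le_inf inf_le_right hgη).trans hn1.le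
      rcases eq_or_lt_of_le hgδ23 with h' | h'
      · exact keyA (h' ▸ h)
      · have hle : η ⊓ θ ≤ n := hn1.symm.le.trans inf_le_left
        have hne2 : η ⊓ θ ≠ n := by
          intro hh
          exact hη.1.ne' (by rw [← hn3, sup_eq_right.2 (hh ▸ (inf_le_left : η ⊓ θ ≤ η))])
        exact hgn.2 _ h' (lt_of_le_of_ne hle hne2)
    have hii : ¬ m ⊓ n ≤ θ := by
      intro h
      have hgη : m ⊓ n ≤ η := (le_inf inf_le_right h).trans (hn2.le.trans inf_le_left)
      have hgδ12 : m ⊓ n ≤ φ ⊓ η := (le_inf inf_le_left hgη).trans hm2.le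
      rcases eq_or_lt_of_le hgδ12 with h' | h'
      · exact keyB (h' ▸ h)
      · have hle : φ ⊓ η ≤ m := hm1.symm.le.trans inf_le_left
        have hne2 : φ ⊓ η ≠ m := by
          intro hh
          exact hη.1.ne' (by rw [← hm4, sup_eq_right.2 (hh ▸ (inf_le_right : φ ⊓ η ≤ η))])
        exact hgm.2 _ h' (lt_of_le_of_ne hle hne2)
    refine ⟨φ ⊓ θ ⊔ m ⊓ n, ?_, ?_, ?_⟩
    · have e1 : (φ ⊓ θ ⊔ m ⊓ n) ⊓ φ = φ ⊓ θ := by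
        rw [← hmod (φ ⊓ θ) (m ⊓ n) φ inf_le_left]
        exact sup_eq_left.2 hiii
      have e2 : (φ ⊓ θ ⊔ m ⊓ n) ⊓ θ = φ ⊓ θ := by
        rw [← hmod (φ ⊓ θ) (m ⊓ n) θ inf_le_right]
        exact sup_eq_left.2 hiv
      rw [e1, e2]
    · have e3 : (φ ⊓ θ ⊔ m ⊓ n) ⊔ φ = m ⊓ n ⊔ φ := by
        rw [sup_comm (φ ⊓ θ) (m ⊓ n), sup_assoc, sup_eq_right.2 (inf_le_left : φ ⊓ θ ≤ φ)]
      rw [e3]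
      exact le_antisymm (sup_le (inf_le_left.trans hm5.1.le) hφ.1.le) (hφ.2 _ (right_lt_sup.2 hi))
    · have e3 : (φ ⊓ θ ⊔ m ⊓ n) ⊔ θ = m ⊓ n ⊔ θ := by
        rw [sup_comm (φ ⊓ θ) (m ⊓ n), sup_assoc, sup_eq_right.2 (inf_le_right : φ ⊓ θ ≤ θ)]
      rw [e3]
      exact le_antisymm (sup_le (inf_le_left.trans hm5.1.le) hθ.1.le) (hθ.2 _ (right_lt_sup.2 hii))

/-- Lemma 6: in a complete modular lattice with (MR) and (P), projectivity of prime
intervals over completely meet irreducible elements is realized by a single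
down-up transposition. -/
theorem stmt3
    (hmod : ∀ x y z : L, x ≤ z → x ⊔ y ⊓ z = (x ⊔ y) ⊓ z)
    (hMR : ∀ x : L, x = sInf {η | (∃ p, IsCMIL η p) ∧ x ≤ η})
    (hP : ∀ φ ψ p q : L, IsCMIL φ p → IsCMIL ψ q → ProjectiveL (φ, p) (ψ, q) → p = q) :
    ∀ φ ψ p q : L, IsCMIL φ p → IsCMIL ψ q → ProjectiveL (φ, p) (ψ, q) →
      ∃ α β : L, φ ⊓ β = α ∧ ψ ⊓ β = α ∧ φ ⊔ β = p ∧ ψ ⊔ β = q := by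
  intro φ ψ p q hφ hψ hproj
  have hpq : p = q := hP φ ψ p q hφ hψ hproj
  subst hpq
  have main : ∀ z : L × L, Relation.ReflTransGen PerspL (φ, p) z →
      CovL z.1 z.2 ∧ z.2 ≤ p ∧
        ∃ η, IsCMIL η p ∧ η ⊓ z.2 = z.1 ∧ η ⊔ z.2 = p ∧ Wit p φ η := by
    intro z hz
    induction hz with
    | refl =>
      refine ⟨coatomL hφ, le_rfl, φ, hφ, inf_eq_left.2 hφ.1.le, sup_eq_right.2 hφ.1.le, ?_⟩
      exact ⟨p, rfl, sup_eq_left.2 hφ.1.le, sup_eq_left.2 hφ.1.le⟩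
    | @tail b c hab hbc ih =>
      obtain ⟨x, y⟩ := b
      obtain ⟨x', y'⟩ := c
      obtain ⟨hcov, hyp, η, hη, hηy, hηy2, hW⟩ := ih
      simp only at hcov hyp hηy hηy2 ⊢
      have hbc' : PerspL (x, y) (x', y') := hbc
      rcases hbc' with ⟨h1, h2⟩ | ⟨h1, h2⟩
      · -- up step: x = y ⊓ x', y' = y ⊔ x'
        simp only at h1 h2
        have hx'y' : CovL x' y' := covL2 hmod h1 h2 hcov
        obtain ⟨θ, qθ, hθ, hx'θ, hy'θ⟩ := pickL hMR hx'y'.1.not_ge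
        have hθy' : θ ⊓ y' = x' := by
          refine covEqL hx'y' (le_inf hx'θ hx'y'.1.le) inf_le_right (fun h => hy'θ ?_)
          exact h ▸ inf_le_left
        have hθcov : CovL θ (y' ⊔ θ) :=
          covL2 hmod (by rw [inf_comm y' θ]; exact hθy'.symm) rfl hx'y'
        have hq : qθ = y' ⊔ θ := by
          have h4 : θ < y' ⊔ θ := right_lt_sup.2 hy'θ
          have h5 : qθ ≤ y' ⊔ θ := hθ.2 _ h4
          rcases eq_or_lt_of_le h5 with h6 | h6
          · exact h6
          · exact (hθcov.2 _ hθ.1 h6).elim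
        have hstep : PerspL (x', y') (θ, qθ) := by
          refine Or.inl ⟨?_, ?_⟩
          · simpa using by rw [inf_comm]; exact hθy'.symm
          · simpa using hq
        have hproj' : ProjectiveL (φ, p) (θ, qθ) := (hab.tail hbc).tail hstep
        have hpθ : p = qθ := hP φ θ p qθ hφ hθ hproj'
        rw [← hpθ] at hθ hq
        have hy'p : y' ≤ p := by rw [hq]; exact le_sup_left
        have hxθ : x ≤ θ := by rw [h1]; exact inf_le_right.trans hx'θ
        have hyθ : ¬ y ≤ θ := fun h => hy'θ (by rw [h2]; exact sup_le h hx'θ)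
        have hθy : θ ⊓ y = x := by
          refine covEqL hcov (le_inf hxθ hcov.1.le) inf_le_right (fun h => hyθ ?_)
          exact h ▸ inf_le_left
        have hθsy : θ ⊔ y = p :=
          le_antisymm (sup_le hθ.1.le hyp) (hθ.2 _ (left_lt_sup.2 hyθ))
        have hWηθ : Wit p η θ := by
          refine ⟨y, ?_, ?_, ?_⟩
          · rw [inf_comm y η, inf_comm y θ, hηy, hθy]
          · rw [sup_comm]; exact hηy2
          · rw [sup_comm]; exact hθsy
        refine ⟨hx'y', hy'p, θ, hθ, hθy', ?_, witTrans hmod hφ hη hθ hW hWηθ⟩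
        rw [sup_comm]; exact hq.symm
      · -- down step: x' = y' ⊓ x, y = y' ⊔ x
        simp only at h1 h2
        have hx'y' : CovL x' y' := covL1 hmod h1 h2 hcov
        have hy'p : y' ≤ p := le_trans (by rw [h2]; exact le_sup_left) hyp
        have hxη : x ≤ η := by rw [← hηy]; exact inf_le_left
        have hx'η : x' ≤ η := by rw [h1]; exact inf_le_right.trans hxη
        have hyη : ¬ y ≤ η := by
          intro h
          have : x = y := by rw [← hηy, inf_eq_right.2 h]
          exact hcov.1.ne this
        have hy'η : ¬ y' ≤ η := fun h => hyη (by rw [h2]; exact sup_le h hxη)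
        have hηy' : η ⊓ y' = x' := by
          refine covEqL hx'y' (le_inf hx'η (by rw [h1]; exact inf_le_left)) inf_le_right
            (fun h => hy'η ?_)
          exact h ▸ inf_le_left
        have hηsy' : η ⊔ y' = p :=
          le_antisymm (sup_le hη.1.le hy'p) (hη.2 _ (left_lt_sup.2 hy'η))
        exact ⟨hx'y', hy'p, η, hη, hηy', hηsy', hW⟩
  obtain ⟨_, _, η, hη, hηq, _, hW⟩ := main (ψ, p) hproj
  simp only at hηq
  have hηψ : η = ψ := by rw [← hηq, inf_eq_left.2 hη.1.le]
  obtain ⟨β, hb1, hb2, hb3⟩ := hW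
  rw [hηψ] at hb1 hb3
  refine ⟨φ ⊓ β, β, rfl, ?_, ?_, ?_⟩
  · rw [inf_comm ψ β, ← hb1, inf_comm β φ]
  · rw [sup_comm]; exact hb2
  · rw [sup_comm]; exact hb3
end

section
/- Condition (O) holds if and only if for every φ ∈ Cm and all a, b ∈ A: (a,b) ∈ φ⁺ implies that (a,b) ∈ φ or (1,a) ∈ φ or (1,b) ∈ φ. (This is Proposition 8 of the paper, characterizing when all quotients of an algebra are congruence orderable.) -/
variable {A : Type*}

/-- `η` is a completely meet irreducible member of `C`, with (unique) cover `p` in `C`. -/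
def IsCMI (C : Set (Setoid A)) (η p : Setoid A) : Prop :=
  η ∈ C ∧ p ∈ C ∧ η < p ∧ ∀ β ∈ C, η < β → p ≤ β

/-- A single up or down transposition between the intervals `I[pq.1, pq.2]`
and `I[rs.1, rs.2]` of `C`. -/
def Persp (C : Set (Setoid A)) (pq rs : Setoid A × Setoid A) : Prop :=
  pq.1 ∈ C ∧ pq.2 ∈ C ∧ rs.1 ∈ C ∧ rs.2 ∈ C ∧
    ((pq.1 = pq.2 ⊓ rs.1 ∧ rs.2 = pq.2 ⊔ rs.1) ∨
      (rs.1 = rs.2 ⊓ pq.1 ∧ pq.2 = rs.2 ⊔ pq.1))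

/-- Projectivity of intervals of `C`: a finite chain of up and down transpositions. -/
def Projective (C : Set (Setoid A)) : Setoid A × Setoid A → Setoid A × Setoid A → Prop :=
  Relation.ReflTransGen (Persp C)

/-- Prime interval projectivity `φ ∼ ψ`: the prime intervals `I[φ,φ⁺]` and `I[ψ,ψ⁺]`
over completely meet irreducible members of `C` are projective. -/
def PIP (C : Set (Setoid A)) (φ ψ : Setoid A) : Prop :=
  ∃ p q, IsCMI C φ p ∧ IsCMI C ψ q ∧ Projective C (φ, p) (ψ, q)

/-- `Θ(a,b)`: the least member of `C` containing the pair `(a, b)`. -/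
def theta (C : Set (Setoid A)) (a b : A) : Setoid A :=
  sInf {s | s ∈ C ∧ s.r a b}

/-- The relation `φ • ψ`: the pairs of `p = φ⁺ = ψ⁺` on which `φ` and `ψ` agree
(the complement of the symmetric difference of `φ` and `ψ` intersected with `p`). -/
def Bul (p φ ψ : Setoid A) (x y : A) : Prop :=
  p.r x y ∧ (φ.r x y ↔ ψ.r x y)

section helpers

variable (C : Set (Setoid A))

lemma le_rel {r s : Setoid A} (h : r ≤ s) {x y : A} (hxy : r.r x y) : s.r x y :=
  Setoid.le_def.mp h hxy

lemma theta_mem (hInf : ∀ S ⊆ C, sInf S ∈ C) (a b : A) : theta C a b ∈ C :=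
  hInf _ (fun s hs => hs.1)

lemma theta_rel (hInf : ∀ S ⊆ C, sInf S ∈ C) (a b : A) : (theta C a b).r a b := by
  intro s hs; exact hs.2

lemma theta_le {γ : Setoid A} (hγ : γ ∈ C) {a b : A} (h : γ.r a b) : theta C a b ≤ γ :=
  sInf_le ⟨hγ, h⟩

lemma sup_mem (hSup : ∀ S ⊆ C, sSup S ∈ C) {α β : Setoid A} (hα : α ∈ C) (hβ : β ∈ C) :
    α ⊔ β ∈ C := by
  rw [← sSup_pair]
  exact hSup _ (by rintro s (rfl | rfl) <;> assumption)

end helpers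

/-- Proposition 8: condition (O) (all quotients congruence orderable) holds iff for
every `φ ∈ Cm` and `a, b ∈ A`, `(a,b) ∈ φ⁺` implies `(a,b) ∈ φ` or `(1,a) ∈ φ` or
`(1,b) ∈ φ`. -/
theorem stmt4 (one : A) (C : Set (Setoid A))
    (hInf : ∀ S ⊆ C, sInf S ∈ C) (hSup : ∀ S ⊆ C, sSup S ∈ C)
    (hDir : ∀ D ⊆ C, D.Nonempty → DirectedOn (· ≤ ·) D →
      ∀ x y : A, (sSup D).r x y ↔ ∃ s ∈ D, s.r x y) :
    (∀ α ∈ C, ∀ a b : A, α ⊔ theta C one a = α ⊔ theta C one b ↔ α.r a b) ↔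
    (∀ φ p : Setoid A, IsCMI C φ p → ∀ a b : A, p.r a b →
      φ.r a b ∨ φ.r one a ∨ φ.r one b) := by
  constructor
  · -- (O) → CMI condition
    intro hO φ p ⟨hφC, hpC, hlt, hcov⟩ a b hpab
    by_contra h
    push_neg at h
    obtain ⟨hab, h1a, h1b⟩ := h
    -- φ ⊔ Θ(1,a) and φ ⊔ Θ(1,b) both strictly above φ, hence contain p
    have key : ∀ c : A, ¬ φ.r one c → p ≤ φ ⊔ theta C one c := by
      intro c h1c
      apply hcov _ (sup_mem C hSup hφC (theta_mem C hInf one c))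
      refine lt_of_le_of_ne le_sup_left ?_
      intro hEq
      apply h1c
      have : theta C one c ≤ φ := hEq ▸ le_sup_right
      exact this (theta_rel C hInf one c)
    have hpa := key a h1a
    have hpb := key b h1b
    -- (1,b) ∈ φ ⊔ Θ(1,a)
    have h1a' : (φ ⊔ theta C one a).r one a :=
      le_rel le_sup_right (theta_rel C hInf one a)
    have h1b' : (φ ⊔ theta C one b).r one b :=
      le_rel le_sup_right (theta_rel C hInf one b)
    have hEq : φ ⊔ theta C one a = φ ⊔ theta C one b := by
      apply le_antisymm
      · apply sup_le le_sup_left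
        apply theta_le C (sup_mem C hSup hφC (theta_mem C hInf one b))
        exact (φ ⊔ theta C one b).trans' h1b' ((φ ⊔ theta C one b).symm' (le_rel hpb hpab))
      · apply sup_le le_sup_left
        apply theta_le C (sup_mem C hSup hφC (theta_mem C hInf one a))
        exact (φ ⊔ theta C one a).trans' h1a' (le_rel hpa hpab)
    exact hab ((hO φ hφC a b).mp hEq)
  · -- CMI condition → (O)
    intro hCMI α hαC a b
    constructor
    · intro hEq
      by_contra hab
      -- Zorn: maximal φ ≥ α with ¬φ a b
      obtain ⟨φ, hαφ, hφS, hmax⟩ :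
          ∃ m, α ≤ m ∧ Maximal (· ∈ {β : Setoid A | β ∈ C ∧ α ≤ β ∧ ¬ β.r a b}) m := by
        apply zorn_le_nonempty₀ {β : Setoid A | β ∈ C ∧ α ≤ β ∧ ¬ β.r a b} ?_ α ⟨hαC, le_rfl, hab⟩
        intro c hcS hchain y hy
        refine ⟨sSup c, ⟨hSup _ (fun s hs => (hcS hs).1), ?_, ?_⟩, fun z hz => le_sSup hz⟩
        · exact le_trans (hcS hy).2.1 (le_sSup hy)
        · rw [hDir c (fun s hs => (hcS hs).1) ⟨y, hy⟩ hchain.directedOn]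
          rintro ⟨s, hs, hsab⟩
          exact (hcS hs).2.2 hsab
      obtain ⟨hφC, hαφ', hφab⟩ := hφS
      -- φ is CMI with cover φ ⊔ Θ(a,b)
      set p := φ ⊔ theta C a b with hp
      have hpC : p ∈ C := sup_mem C hSup hφC (theta_mem C hInf a b)
      have hpab : p.r a b := le_rel le_sup_right (theta_rel C hInf a b)
      have hφp : φ < p := lt_of_le_of_ne le_sup_left (fun h => hφab (h ▸ hpab))
      have hcov : ∀ β ∈ C, φ < β → p ≤ β := by
        intro β hβC hβ
        have hβab : β.r a b := by
          by_contra hβab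
          exact hβ.ne (le_antisymm hβ.le (hmax ⟨hβC, le_trans hαφ' hβ.le, hβab⟩ hβ.le))
        exact sup_le hβ.le (theta_le C hβC hβab)
      have := hCMI φ p ⟨hφC, hpC, hφp, hcov⟩ a b hpab
      rcases this with h | h1a | h1b
      · exact hφab h
      · -- θ(1,a) ≤ φ, so α ⊔ θ(1,a) ≤ φ, so (1,b) ∈ φ, so (a,b) ∈ φ
        have hθa : theta C one a ≤ φ := theta_le C hφC h1a
        have : α ⊔ theta C one b ≤ φ := hEq ▸ sup_le hαφ' hθa
        have h1b : φ.r one b := le_rel this (le_rel le_sup_right (theta_rel C hInf one b))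
        exact hφab (φ.trans' (φ.symm' h1a) h1b)
      · have hθb : theta C one b ≤ φ := theta_le C hφC h1b
        have : α ⊔ theta C one a ≤ φ := hEq ▸ sup_le hαφ' hθb
        have h1a : φ.r one a := le_rel this (le_rel le_sup_right (theta_rel C hInf one a))
        exact hφab (φ.trans' (φ.symm' h1a) h1b)
    · intro hab
      have key : ∀ c d : A, α.r c d → α ⊔ theta C one c ≤ α ⊔ theta C one d := by
        intro c d hcd
        apply sup_le le_sup_left
        apply theta_le C (sup_mem C hSup hαC (theta_mem C hInf one d))
        exact (α ⊔ theta C one d).trans'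
          (le_rel le_sup_right (theta_rel C hInf one d))
          (le_rel le_sup_left (α.symm' hcd))
      exact le_antisymm (key a b hab) (key b a (α.symm' hab))
end

section
/- Suppose A is finite, C is congruence orderable with respect to 1 (i.e., Θ(1,a) = Θ(1,b) implies a = b for a, b ∈ A), and C is congruence permutable (for all α, β ∈ C, the join α ⊔ β equals the relational composition of α and β; equivalently the compositions α∘β and β∘α coincide). Then condition (O) holds: for every α ∈ C and a, b ∈ A, α ⊔ Θ(1,a) = α ⊔ Θ(1,b) if and only if (a,b) ∈ α. (This is Proposition 19 of the paper: a finite, congruence orderable, congruence permutable algebra has all its quotients congruence orderable.) -/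
variable {A : Type*}

/-- Proposition 19: a finite, congruence orderable, congruence permutable algebra
has all its quotients congruence orderable, i.e. condition (O) holds. -/
theorem stmt6 [Finite A] (one : A) (C : Set (Setoid A))
    (hInf : ∀ S ⊆ C, sInf S ∈ C) (hSup : ∀ S ⊆ C, sSup S ∈ C)
    (hDir : ∀ D ⊆ C, D.Nonempty → DirectedOn (· ≤ ·) D →
      ∀ x y : A, (sSup D).r x y ↔ ∃ s ∈ D, s.r x y)
    (horder : ∀ a b : A, theta C one a = theta C one b → a = b)
    (hperm : ∀ α ∈ C, ∀ β ∈ C, ∀ x y : A,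
      (α ⊔ β).r x y ↔ ∃ z, α.r x z ∧ β.r z y) :
    ∀ α ∈ C, ∀ a b : A, α ⊔ theta C one a = α ⊔ theta C one b ↔ α.r a b := by
  intro α hα a b
  have hθmem : ∀ x : A, theta C one x ∈ C := fun x =>
    hInf _ (fun s hs => hs.1)
  have hθrel : ∀ x : A, (theta C one x).r one x := fun x s hs => hs.2
  have hθle : ∀ x : A, ∀ s ∈ C, s.r one x → theta C one x ≤ s :=
    fun x s hs hr => sInf_le ⟨hs, hr⟩
  have hsupmem : ∀ β ∈ C, ∀ γ ∈ C, β ⊔ γ ∈ C := by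
    intro β hβ γ hγ
    have h := hSup {β, γ} (by rintro s (rfl | rfl) <;> assumption)
    rwa [sSup_pair] at h
  constructor
  · -- hard direction
    intro h
    set T : Set A := {x | α ⊔ theta C one x = α ⊔ theta C one a} with hT
    have haT : a ∈ T := rfl
    have hbT : b ∈ T := h.symm
    obtain ⟨y, hyT, hymin⟩ := Set.Finite.exists_minimalFor (theta C one) T
      (Set.toFinite T) ⟨a, haT⟩
    have key : ∀ x ∈ T, α.r y x := by
      intro x hxT
      -- (one, x) ∈ θy ⊔ α
      have h1x : (theta C one y ⊔ α).r one x := by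
        have hsc : theta C one x ≤ theta C one y ⊔ α := by
          calc theta C one x ≤ α ⊔ theta C one x := le_sup_right
          _ = α ⊔ theta C one y := by rw [hxT, hyT]
          _ = theta C one y ⊔ α := sup_comm _ _
        exact Setoid.le_def.mp hsc (hθrel x)
      obtain ⟨v, hv1, hvx⟩ :=
        (hperm _ (hθmem y) _ hα one x).mp h1x
      have hvley : theta C one v ≤ theta C one y := hθle v _ (hθmem y) hv1
      have hvT : v ∈ T := by
        have hmem : α ⊔ theta C one v ∈ C := hsupmem _ hα _ (hθmem v)
        have h1 : α ⊔ theta C one a ≤ α ⊔ theta C one v := by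
          rw [← hxT]
          refine sup_le le_sup_left (hθle x _ hmem ?_)
          exact (α ⊔ theta C one v).trans (Setoid.le_def.mp (le_sup_right) (hθrel v))
            (Setoid.le_def.mp (le_sup_left (a := α)) hvx)
        have h2 : α ⊔ theta C one v ≤ α ⊔ theta C one a := by
          rw [← hyT]
          exact sup_le_sup_left hvley α
        exact le_antisymm h2 h1
      have : theta C one y = theta C one v := le_antisymm (hymin hvT hvley) hvley
      have hyv : y = v := horder _ _ this
      exact hyv ▸ hvx
    exact α.trans (α.symm (key a haT)) (key b hbT)
  · -- easy direction
    intro hab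
    have step : ∀ u v : A, α.r u v →
        α ⊔ theta C one v ≤ α ⊔ theta C one u := by
      intro u v huv
      have hmem : α ⊔ theta C one u ∈ C := hsupmem _ hα _ (hθmem u)
      refine sup_le le_sup_left (hθle v _ hmem ?_)
      exact (α ⊔ theta C one u).trans (Setoid.le_def.mp (le_sup_right) (hθrel u))
        (Setoid.le_def.mp (le_sup_left (a := α)) huv)
    exact le_antisymm (step b a (α.symm hab)) (step a b hab)
end

section
/- Assume conditions (M), (O), (R), (P). Let U ∈ Cm/∼ be a PIP equivalence class with common unique cover η⁺ of its elements, and Ū := U ∪ {η⁺}. Then for all φ, ψ ∈ Ū the relation φ • ψ belongs to Ū (in particular it is an equivalence relation belonging to C), and (Ū, •) is an abelian group with identity element η⁺ in which every element is its own inverse (a Boolean group). (This is Theorem 10 of the paper, the main structural result: each PIP class of completely meet irreducible congruences of a strongly Fregean algebra, supplemented with the common cover, forms a Boolean group under the complement of symmetric difference restricted to the cover.) -/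
variable {A : Type*}

/-! ### Auxiliary development -/

namespace FregeAux

structure Ctx (A : Type*) where
  one : A
  C : Set (Setoid A)
  hInf : ∀ S ⊆ C, sInf S ∈ C
  hSup : ∀ S ⊆ C, sSup S ∈ C
  hDir : ∀ D ⊆ C, D.Nonempty → DirectedOn (· ≤ ·) D →
      ∀ x y : A, (sSup D).r x y ↔ ∃ s ∈ D, s.r x y
  hM : ∀ x ∈ C, ∀ y ∈ C, ∀ z ∈ C, x ≤ z → x ⊔ y ⊓ z = (x ⊔ y) ⊓ z
  hO : ∀ α ∈ C, ∀ a b : A, α ⊔ theta C one a = α ⊔ theta C one b ↔ α.r a b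
  hR : ∀ α ∈ C, ∀ β ∈ C, (∀ x : A, α.r one x ↔ β.r one x) → α = β
  hP : ∀ φ ψ p q : Setoid A, IsCMI C φ p → IsCMI C ψ q →
      Projective C (φ, p) (ψ, q) → p = q

end FregeAux

namespace FregeAux.Ctx

variable {A : Type*} (K : FregeAux.Ctx A)

lemma rel_of_le {r s : Setoid A} (h : r ≤ s) {x y : A} (hx : r.r x y) : s.r x y := h hx

lemma le_of_rel_imp {r s : Setoid A} (h : ∀ x y, r.r x y → s.r x y) : r ≤ s :=
  fun _ _ hxy => h _ _ hxy

lemma exists_pair_not_le {r s : Setoid A} (h : ¬ r ≤ s) : ∃ x y, r.r x y ∧ ¬ s.r x y := by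
  by_contra hc
  push_neg at hc
  exact h (le_of_rel_imp hc)

lemma inf_rel {r s : Setoid A} {x y : A} : (r ⊓ s).r x y ↔ r.r x y ∧ s.r x y := Iff.rfl

lemma mem_inf (hr : r ∈ K.C) (hs : s ∈ K.C) : r ⊓ s ∈ K.C := by
  have := K.hInf {r, s} (by intro t ht; rcases ht with rfl | rfl <;> assumption)
  rwa [sInf_pair] at this

lemma mem_sup {r s : Setoid A} (hr : r ∈ K.C) (hs : s ∈ K.C) : r ⊔ s ∈ K.C := by
  have := K.hSup {r, s} (by intro t ht; rcases ht with rfl | rfl <;> assumption)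
  rwa [sSup_pair] at this

lemma theta_mem (a b : A) : theta K.C a b ∈ K.C :=
  K.hInf _ (fun _ hs => hs.1)

lemma theta_rel (a b : A) : (theta K.C a b).r a b := by
  intro s hs
  exact hs.2

lemma theta_le {s : Setoid A} (hs : s ∈ K.C) (h : s.r a b) : theta K.C a b ≤ s :=
  sInf_le ⟨hs, h⟩

/-- members of the interval `[φ, p]` for a CMI `φ` with cover `p`. -/
lemma cmi_prime {φ p : Setoid A} (h : IsCMI K.C φ p) {δ : Setoid A} (hδ : δ ∈ K.C)
    (h1 : φ ≤ δ) (h2 : δ ≤ p) : δ = φ ∨ δ = p := by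
  rcases eq_or_ne δ φ with rfl | hne
  · exact Or.inl rfl
  · exact Or.inr (le_antisymm h2 (h.2.2.2 δ hδ (lt_of_le_of_ne h1 (Ne.symm hne))))

lemma cmi_join {φ p : Setoid A} (h : IsCMI K.C φ p) {β : Setoid A} (hβ : β ∈ K.C)
    (hnle : ¬ β ≤ φ) : p ≤ φ ⊔ β := by
  apply h.2.2.2 (φ ⊔ β) (K.mem_sup h.1 hβ)
  refine lt_of_le_of_ne le_sup_left fun he => hnle ?_
  exact le_sup_right.trans he.ge

lemma cover_unique {φ p q : Setoid A} (h1 : IsCMI K.C φ p) (h2 : IsCMI K.C φ q) : p = q :=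
  le_antisymm (h1.2.2.2 q h2.2.1 h2.2.2.1) (h2.2.2.2 p h1.2.1 h1.2.2.1)

end FregeAux.Ctx

namespace FregeAux.Ctx

variable {A : Type*} (K : FregeAux.Ctx A)

/-- The 1-anchored principal congruence. -/
noncomputable abbrev Th (a : A) : Setoid A := theta K.C K.one a

/-- Index-2 lemma: for a CMI `χ` with cover `p`, two consecutive `p`-pairs outside `χ`
compose into `χ`. -/
lemma index2 {χ p : Setoid A} (hχ : IsCMI K.C χ p) {x y z : A}
    (hxy : p.r x y) (hyz : p.r y z) (nxy : ¬ χ.r x y) (nyz : ¬ χ.r y z) : χ.r x z := by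
  classical
  have hχC := hχ.1
  have hpC := hχ.2.1
  have hχp : χ ≤ p := le_of_lt hχ.2.2.1
  -- helper : for any (a,b) ∈ p \ χ we have χ ⊔ Θa ⊔ Θb = p ⊔ Θa
  have helper : ∀ a b : A, p.r a b → ¬ χ.r a b →
      (χ ⊔ K.Th a) ⊔ K.Th b = p ⊔ K.Th a := by
    intro a b hab hnab
    have hTa := K.theta_mem K.one a
    have hTb := K.theta_mem K.one b
    have hThab : p ⊔ K.Th a = p ⊔ K.Th b := (K.hO p hpC a b).mpr hab
    have hJC : (χ ⊔ K.Th a) ⊔ K.Th b ∈ K.C := K.mem_sup (K.mem_sup hχC hTa) hTb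
    have hJab : ((χ ⊔ K.Th a) ⊔ K.Th b).r a b := by
      have h1 : ((χ ⊔ K.Th a) ⊔ K.Th b).r K.one a :=
        rel_of_le (le_trans le_sup_right le_sup_left) (K.theta_rel K.one a)
      have h2 : ((χ ⊔ K.Th a) ⊔ K.Th b).r K.one b :=
        rel_of_le le_sup_right (K.theta_rel K.one b)
      exact Setoid.trans' _ (Setoid.symm' _ h1) h2
    have hχlt : χ < (χ ⊔ K.Th a) ⊔ K.Th b := by
      refine lt_of_le_of_ne (le_trans le_sup_left le_sup_left) fun he => hnab ?_
      rw [he]; exact hJab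
    have hple : p ≤ (χ ⊔ K.Th a) ⊔ K.Th b := hχ.2.2.2 _ hJC hχlt
    apply le_antisymm
    · refine sup_le (sup_le (hχp.trans le_sup_left) le_sup_right) ?_
      rw [hThab]; exact le_sup_right
    · exact sup_le hple (le_sup_right.trans le_sup_left)
  by_contra hxz
  have hpxz : p.r x z := Setoid.trans' _ hxy hyz
  -- Fy := χ ⊔ Th y
  set Fy := χ ⊔ K.Th y with hFy
  have hFyC : Fy ∈ K.C := K.mem_sup hχC (K.theta_mem K.one y)
  have h1 : Fy ⊔ K.Th x = p ⊔ K.Th x := by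
    have := helper y x (Setoid.symm' _ hxy) (fun h => nxy (Setoid.symm' _ h))
    -- (χ ⊔ Th y) ⊔ Th x = p ⊔ Th y = p ⊔ Th x
    rw [this]
    exact ((K.hO p hpC y x).mpr (Setoid.symm' _ hxy))
  have h2 : Fy ⊔ K.Th z = p ⊔ K.Th y := helper y z hyz nyz
  have hPyx : p ⊔ K.Th y = p ⊔ K.Th x := (K.hO p hpC y x).mpr (Setoid.symm' _ hxy)
  have hxzFy : Fy.r x z := by
    apply (K.hO Fy hFyC x z).mp
    rw [h1, h2, hPyx]
  have hmem : (Fy ⊓ p).r x z := ⟨hxzFy, hpxz⟩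
  have hFyp : Fy ⊓ p = χ ∨ Fy ⊓ p = p :=
    K.cmi_prime hχ (K.mem_inf hFyC hpC) (le_inf (le_sup_left) hχp) inf_le_right
  rcases hFyp with hl | hr
  · rw [hl] at hmem; exact hxz hmem
  · -- p ≤ Fy, so Fy = p ⊔ Th y
    have hpFy : p ≤ Fy := le_of_eq hr.symm |>.trans inf_le_left
    have hFyP : Fy = p ⊔ K.Th y :=
      le_antisymm (sup_le (hχp.trans le_sup_left) le_sup_right)
        (sup_le hpFy le_sup_right)
    set Fx := χ ⊔ K.Th x with hFxdef
    have hFxC : Fx ∈ K.C := K.mem_sup hχC (K.theta_mem K.one x)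
    by_cases hpFx : p ≤ Fx
    · -- then Fx = p ⊔ Th x = p ⊔ Th y = Fy, so χ.r x y, contradiction
      have hFxP : Fx = p ⊔ K.Th x :=
        le_antisymm (sup_le (hχp.trans le_sup_left) le_sup_right)
          (sup_le hpFx le_sup_right)
      have : χ ⊔ K.Th x = χ ⊔ K.Th y := by
        rw [hFxdef] at hFxP
        rw [hFy] at hFyP
        rw [hFxP, hFyP, hPyx]
      exact nxy ((K.hO χ hχC x y).mp this)
    · -- Fx ⊓ p = χ and (y,z) ∈ Fx
      have hFxp : Fx ⊓ p = χ := by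
        rcases K.cmi_prime hχ (K.mem_inf hFxC hpC) (le_inf le_sup_left hχp) inf_le_right with
          hl | hrr
        · exact hl
        · exact absurd (le_of_eq hrr.symm |>.trans inf_le_left) hpFx
      have e1 : Fx ⊔ K.Th y = p ⊔ K.Th x := helper x y hxy nxy
      have e2 : Fx ⊔ K.Th z = p ⊔ K.Th x := helper x z hpxz hxz
      have hyzFx : Fx.r y z := (K.hO Fx hFxC y z).mp (by rw [e1, e2])
      have : (Fx ⊓ p).r y z := ⟨hyzFx, hyz⟩
      rw [hFxp] at this
      exact nyz this

/-- `Bul p φ ψ` is an equivalence relation when `φ`, `ψ` are CMI with common cover `p`. -/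
lemma bul_equiv {φ ψ p : Setoid A} (hφ : IsCMI K.C φ p) (hψ : IsCMI K.C ψ p) :
    Equivalence (Bul p φ ψ) := by
  classical
  constructor
  · intro x; exact ⟨Setoid.refl' _ _, by simp [Setoid.refl' φ x, Setoid.refl' ψ x]⟩
  · rintro x y ⟨hp, hiff⟩
    exact ⟨Setoid.symm' _ hp, by
      constructor
      · intro h; exact Setoid.symm' _ (hiff.mp (Setoid.symm' _ h))
      · intro h; exact Setoid.symm' _ (hiff.mpr (Setoid.symm' _ h))⟩
  · rintro x y z ⟨hpxy, hixy⟩ ⟨hpyz, hiyz⟩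
    refine ⟨Setoid.trans' _ hpxy hpyz, ?_⟩
    by_cases h1 : φ.r x y
    · by_cases h2 : φ.r y z
      · constructor
        · intro _; exact Setoid.trans' _ (hixy.mp h1) (hiyz.mp h2)
        · intro _; exact Setoid.trans' _ h1 h2
      · have n2ψ : ¬ ψ.r y z := fun h => h2 (hiyz.mpr h)
        constructor
        · intro hxz
          exact absurd (Setoid.trans' _ (Setoid.symm' _ h1) hxz) h2
        · intro hxz
          exact absurd (Setoid.trans' _ (Setoid.symm' _ (hixy.mp h1)) hxz) n2ψ
    · by_cases h2 : φ.r y z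
      · have n1ψ : ¬ ψ.r x y := fun h => h1 (hixy.mpr h)
        constructor
        · intro hxz
          exact absurd (Setoid.trans' _ hxz (Setoid.symm' _ h2)) h1
        · intro hxz
          exact absurd (Setoid.trans' _ hxz (Setoid.symm' _ (hiyz.mp h2))) n1ψ
      · have n1ψ : ¬ ψ.r x y := fun h => h1 (hixy.mpr h)
        have n2ψ : ¬ ψ.r y z := fun h => h2 (hiyz.mpr h)
        constructor
        · intro _; exact K.index2 hψ hpxy hpyz n1ψ n2ψ
        · intro _; exact K.index2 hφ hpxy hpyz h1 h2

/-- The setoid with relation `Bul p φ ψ`. -/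
noncomputable def bulSetoid {φ ψ p : Setoid A} (hφ : IsCMI K.C φ p) (hψ : IsCMI K.C ψ p) :
    Setoid A := ⟨Bul p φ ψ, K.bul_equiv hφ hψ⟩

@[simp] lemma bulSetoid_rel {φ ψ p : Setoid A} (hφ : IsCMI K.C φ p) (hψ : IsCMI K.C ψ p)
    {x y : A} : (K.bulSetoid hφ hψ).r x y ↔ Bul p φ ψ x y := Iff.rfl

/-- From 1-regularity: a strictly smaller member of `C` misses a point of the 1-class. -/
lemma R_witness {α β : Setoid A} (hα : α ∈ K.C) (hβ : β ∈ K.C) (hle : β ≤ α) (hne : α ≠ β) :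
    ∃ w, α.r K.one w ∧ ¬ β.r K.one w := by
  by_contra hc
  push_neg at hc
  exact hne (K.hR α hα β hβ fun x => ⟨fun h => hc x h, fun h => hle h⟩)

end FregeAux.Ctx

namespace FregeAux.Ctx

variable {A : Type*} (K : FregeAux.Ctx A)

/-- Zorn: a maximal member of `C` above `σ` avoiding the pair `(a,b)`; it is CMI with
cover `ω ⊔ Θ(a,b)`. -/
lemma maxAvoider {σ : Setoid A} (hσ : σ ∈ K.C) {a b : A} (hab : ¬ σ.r a b) :
    ∃ ω, ω ∈ K.C ∧ σ ≤ ω ∧ ¬ ω.r a b ∧ IsCMI K.C ω (ω ⊔ theta K.C a b) := by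
  classical
  set S : Set (Setoid A) := {δ | δ ∈ K.C ∧ ¬ δ.r a b} with hS
  have hzorn := zorn_le_nonempty₀ S ?_ σ ⟨hσ, hab⟩
  · obtain ⟨m, hσm, hmS, hmax⟩ := hzorn
    refine ⟨m, hmS.1, hσm, hmS.2, hmS.1, K.mem_sup hmS.1 (K.theta_mem a b), ?_, ?_⟩
    · refine lt_of_le_of_ne le_sup_left fun he => hmS.2 ?_
      rw [he]
      exact rel_of_le le_sup_right (K.theta_rel a b)
    · intro β hβ hmβ
      by_cases hβab : β.r a b
      · exact sup_le hmβ.le (K.theta_le hβ hβab)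
      · exact absurd (le_antisymm (hmax ⟨hβ, hβab⟩ hmβ.le) hmβ.le) (ne_of_lt hmβ).symm
  · intro c hcS hchain y hyc
    refine ⟨sSup c, ⟨K.hSup c fun t ht => (hcS ht).1, ?_⟩, fun z hz => le_sSup hz⟩
    intro habs
    have hdir : DirectedOn (· ≤ ·) c := IsChain.directedOn hchain
    obtain ⟨s, hsc, hsab⟩ := (K.hDir c (fun t ht => (hcS ht).1) ⟨y, hyc⟩ hdir a b).mp habs
    exact (hcS hsc).2 hsab

/-- Transfer of primality upwards along a transposition. -/
lemma prime_up {a b c d : Setoid A} (hb : b ∈ K.C) (hc : c ∈ K.C)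
    (ha' : a = b ⊓ c) (hd' : d = b ⊔ c)
    (hprime : ∀ δ ∈ K.C, a ≤ δ → δ ≤ b → δ = a ∨ δ = b) :
    ∀ δ ∈ K.C, c ≤ δ → δ ≤ d → δ = c ∨ δ = d := by
  intro δ hδ h1 h2
  have he : δ ⊓ b = a ∨ δ ⊓ b = b := by
    apply hprime _ (K.mem_inf hδ hb)
    · rw [ha']; exact le_inf (inf_le_right.trans h1) inf_le_left
    · exact inf_le_right
  rcases he with he | he
  · left
    have hmod : c ⊔ b ⊓ δ = (c ⊔ b) ⊓ δ := K.hM c hc b hb δ hδ h1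
    have hbδ : b ⊓ δ = a := by rw [inf_comm]; exact he
    have hca : a ≤ c := by rw [ha']; exact inf_le_right
    have h3 : c = (c ⊔ b) ⊓ δ := by rw [← hmod, hbδ, sup_eq_left.mpr hca]
    have h4 : (c ⊔ b) ⊓ δ = δ := by rw [sup_comm c b, ← hd']; exact inf_eq_right.mpr h2
    exact (h3.trans h4).symm
  · right
    have hbδ : b ≤ δ := by rw [← he]; exact inf_le_left
    exact le_antisymm h2 (by rw [hd']; exact sup_le hbδ h1)

end FregeAux.Ctx

namespace FregeAux.Ctx

variable {A : Type*} (K : FregeAux.Ctx A)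

/-- Transfer of primality downwards along a transposition. -/
lemma prime_down {a b c d : Setoid A} (hb : b ∈ K.C) (hc : c ∈ K.C)
    (ha' : a = b ⊓ c) (hd' : d = b ⊔ c)
    (hprime : ∀ δ ∈ K.C, c ≤ δ → δ ≤ d → δ = c ∨ δ = d) :
    ∀ δ ∈ K.C, a ≤ δ → δ ≤ b → δ = a ∨ δ = b := by
  intro δ hδ h1 h2
  have hf : δ ⊔ c = c ∨ δ ⊔ c = d := by
    apply hprime _ (K.mem_sup hδ hc) le_sup_right
    rw [hd']; exact sup_le (h2.trans le_sup_left) le_sup_right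
  rcases hf with hf | hf
  · left
    have hδc : δ ≤ c := le_sup_left.trans hf.le
    exact le_antisymm (by rw [ha']; exact le_inf h2 hδc) h1
  · right
    have hmod : δ ⊔ c ⊓ b = (δ ⊔ c) ⊓ b := K.hM δ hδ c hc b hb h2
    have hcb : c ⊓ b = a := by rw [inf_comm, ← ha']
    have hthis : δ = d ⊓ b := by rw [← hf, ← hmod, hcb, sup_eq_left.mpr h1]
    rw [hthis, hd']
    exact inf_eq_right.mpr le_sup_left

lemma persp_symm {pq rs : Setoid A × Setoid A} {C : Set (Setoid A)}
    (h : Persp C pq rs) : Persp C rs pq :=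
  ⟨h.2.2.1, h.2.2.2.1, h.1, h.2.1, h.2.2.2.2.symm⟩

lemma projective_symm {x y : Setoid A × Setoid A} {C : Set (Setoid A)}
    (h : Projective C x y) : Projective C y x := by
  induction h with
  | refl => exact Relation.ReflTransGen.refl
  | tail _ hstep ih => exact Relation.ReflTransGen.head (persp_symm hstep) ih

end FregeAux.Ctx

namespace FregeAux.Ctx

variable {A : Type*} (K : FregeAux.Ctx A)

/-- Two distinct CMI members with the same cover are incomparable. -/
lemma cmi_not_le {φ ψ p : Setoid A} (hφ : IsCMI K.C φ p) (hψ : IsCMI K.C ψ p)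
    (hne : φ ≠ ψ) : ¬ φ ≤ ψ := by
  intro h
  have hlt : φ < ψ := lt_of_le_of_ne h hne
  exact absurd (hφ.2.2.2 ψ hψ.1 hlt) (not_le_of_gt hψ.2.2.1)

lemma cmi_join_eq {φ ψ p : Setoid A} (hφ : IsCMI K.C φ p) (hψ : IsCMI K.C ψ p)
    (hne : φ ≠ ψ) : φ ⊔ ψ = p :=
  le_antisymm (sup_le hφ.2.2.1.le hψ.2.2.1.le)
    (K.cmi_join hφ hψ.1 fun h => K.cmi_not_le hψ hφ (Ne.symm hne) h)

/-- The lower interval `[φ ⊓ ψ, φ]` is prime. -/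
lemma prime_low {φ ψ p : Setoid A} (hφ : IsCMI K.C φ p) (hψ : IsCMI K.C ψ p)
    (hne : φ ≠ ψ) : ∀ δ ∈ K.C, φ ⊓ ψ ≤ δ → δ ≤ φ → δ = φ ⊓ ψ ∨ δ = φ := by
  intro δ hδ h1 h2
  by_cases hδψ : δ ≤ ψ
  · exact Or.inl (le_antisymm (le_inf h2 hδψ) h1)
  · right
    have hjoin : ψ ⊔ δ = p :=
      le_antisymm (sup_le hψ.2.2.1.le (h2.trans hφ.2.2.1.le)) (K.cmi_join hψ hδ hδψ)
    have hmod : δ ⊔ ψ ⊓ φ = (δ ⊔ ψ) ⊓ φ := K.hM δ hδ ψ hψ.1 φ hφ.1 h2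
    have : δ ⊔ ψ ⊓ φ = φ := by
      rw [hmod, sup_comm δ ψ, hjoin]
      exact inf_eq_right.mpr hφ.2.2.1.le
    rw [← this, inf_comm ψ φ, sup_eq_left.mpr h1]

end FregeAux.Ctx

namespace FregeAux.Ctx

variable {A : Type*} (K : FregeAux.Ctx A)

/-- The key closure lemma. -/
lemma pair_closure {φ ψ p η : Setoid A} (hφ : IsCMI K.C φ p) (hψ : IsCMI K.C ψ p)
    (hne : φ ≠ ψ) (hηcmi : IsCMI K.C η p)
    (linkφ : Projective K.C (φ, p) (η, p)) (linkψ : Projective K.C (ψ, p) (η, p))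
    {σ : Setoid A} (hσC : σ ∈ K.C) (hσle : ∀ x y, σ.r x y → Bul p φ ψ x y)
    {a b : A} (hab : σ.r a b) (hnab : ¬ (φ ⊓ ψ).r a b) :
    ∃ γ, γ ∈ K.C ∧ IsCMI K.C γ p ∧ Projective K.C (γ, p) (η, p) ∧ γ.r = Bul p φ ψ := by
  classical
  have hφp : φ ≤ p := hφ.2.2.1.le
  have hψp : ψ ≤ p := hψ.2.2.1.le
  set θS : Setoid A := K.bulSetoid hφ hψ with hθSdef
  have hθ : ∀ x y : A, θS.r x y ↔ Bul p φ ψ x y := fun _ _ => Iff.rfl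
  set μ : Setoid A := φ ⊓ ψ with hμdef
  have hμC : μ ∈ K.C := K.mem_inf hφ.1 hψ.1
  have hμθ : μ ≤ θS := fun x y h => (hθ x y).mpr ⟨hφp h.1, iff_of_true h.1 h.2⟩
  have hσθ : σ ≤ θS := fun x y h => (hθ x y).mpr (hσle x y h)
  set D : Set (Setoid A) := {δ : Setoid A | δ ∈ K.C ∧ δ ≤ θS} with hDdef
  set Λ : Setoid A := sSup D with hΛdef
  have hΛC : Λ ∈ K.C := K.hSup D fun t ht => ht.1
  have hΛθ : ∀ {x y : A}, Λ.r x y → Bul p φ ψ x y := by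
    have h := sSup_le (fun δ (hδ : δ ∈ D) => hδ.2)
    intro x y hxy
    exact (hθ x y).mp (h hxy)
  have hμΛ : μ ≤ Λ := le_sSup ⟨hμC, hμθ⟩
  have hσΛ : σ ≤ Λ := le_sSup ⟨hσC, hσθ⟩
  have hΛab : Λ.r a b := hσΛ hab
  have hBab : Bul p φ ψ a b := hΛθ hΛab
  have hnφab : ¬ φ.r a b := fun h => hnab ⟨h, hBab.2.mp h⟩
  have hnψab : ¬ ψ.r a b := fun h => hnab ⟨hBab.2.mpr h, h⟩
  have hΛp : Λ ≤ p := fun x y h => (hΛθ h).1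
  have hΛφ : Λ ⊓ φ = μ := by
    apply le_antisymm
    · intro x y h
      exact ⟨h.2, (hΛθ h.1).2.mp h.2⟩
    · exact le_inf hμΛ inf_le_left
  have hΛψ : Λ ⊓ ψ = μ := by
    apply le_antisymm
    · intro x y h
      exact ⟨(hΛθ h.1).2.mpr h.2, h.2⟩
    · exact le_inf hμΛ inf_le_right
  have hΛnleφ : ¬ Λ ≤ φ := fun h => hnφab (h hΛab)
  have hΛnleψ : ¬ Λ ≤ ψ := fun h => hnψab (h hΛab)
  have hΛφp : Λ ⊔ φ = p := by
    apply le_antisymm (sup_le hΛp hφp)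
    have := K.cmi_join hφ hΛC hΛnleφ
    rwa [sup_comm φ Λ] at this
  have hΛψp : Λ ⊔ ψ = p := by
    apply le_antisymm (sup_le hΛp hψp)
    have := K.cmi_join hψ hΛC hΛnleψ
    rwa [sup_comm ψ Λ] at this
  have hp_eq : φ ⊔ ψ = p := K.cmi_join_eq hφ hψ hne
  have hprimeφ := K.prime_low hφ hψ hne
  have hprimeψ : ∀ δ ∈ K.C, μ ≤ δ → δ ≤ ψ → δ = μ ∨ δ = ψ := by
    intro δ hδ h1 h2
    have := K.prime_low hψ hφ (Ne.symm hne) δ hδ (by rwa [inf_comm ψ φ, ← hμdef]) h2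
    rcases this with h | h
    · left; rw [h, inf_comm ψ φ]
    · right; exact h
  have hprimeΛ : ∀ δ ∈ K.C, Λ ≤ δ → δ ≤ p → δ = Λ ∨ δ = p := by
    apply K.prime_up hφ.1 hΛC
    · rw [inf_comm φ Λ, hΛφ]
    · rw [sup_comm φ Λ, hΛφp]
    · exact hprimeφ
  -- the witness w ∈ [1]φ \ [1]μ
  have hφμne : φ ≠ μ := by
    intro h
    exact K.cmi_not_le hφ hψ hne (by rw [h]; exact inf_le_right)
  obtain ⟨w, hw1, hw2⟩ := K.R_witness hφ.1 hμC inf_le_left hφμne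
  have hwψ : ¬ ψ.r K.one w := fun h => hw2 ⟨hw1, h⟩
  have hwΛ : ¬ Λ.r K.one w := fun h => hwψ ((hΛθ h).2.mp hw1)
  -- Zorn
  obtain ⟨ω, hωC, hΛω, hωw, hωcmi⟩ := K.maxAvoider hΛC hwΛ
  set ωp : Setoid A := ω ⊔ theta K.C K.one w with hωpdef
  have hφnleω : ¬ φ ≤ ω := fun h => hωw (h hw1)
  have hψnleω : ¬ ψ ≤ ω := by
    intro h
    have hpω : p ≤ ω := by rw [← hΛψp]; exact sup_le hΛω h
    exact hωw (hpω (hφp hw1))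
  have hμω : μ ≤ ω := hμΛ.trans hΛω
  have hωφ : ω ⊓ φ = μ := by
    rcases hprimeφ (ω ⊓ φ) (K.mem_inf hωC hφ.1) (le_inf hμω inf_le_left) inf_le_right with h | h
    · exact h
    · exact absurd (by rw [← h]; exact inf_le_left : φ ≤ ω) hφnleω
  have hωltp' : ω < ωp := hωcmi.2.2.1
  have hωpleωφ : ωp ≤ ω ⊔ φ := by
    apply hωcmi.2.2.2 (ω ⊔ φ) (K.mem_sup hωC hφ.1)
    exact lt_of_le_of_ne le_sup_left fun he => hφnleω (le_sup_right.trans he.ge)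
  have hmod : ω ⊔ φ ⊓ ωp = (ω ⊔ φ) ⊓ ωp := K.hM ω hωC φ hφ.1 ωp hωcmi.2.1 le_sup_left
  have hωpφ : φ ≤ ωp := by
    rcases hprimeφ (ωp ⊓ φ) (K.mem_inf hωcmi.2.1 hφ.1)
        (le_inf (hμω.trans le_sup_left) inf_le_left) inf_le_right with h | h
    · exfalso
      have h2 : ω ⊔ φ ⊓ ωp = ωp := by rw [hmod]; exact inf_eq_right.mpr hωpleωφ
      have h3 : φ ⊓ ωp = μ := by rw [inf_comm φ ωp, h]
      rw [h3, sup_eq_left.mpr hμω] at h2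
      exact (ne_of_lt hωltp') h2
    · rw [← h]; exact inf_le_left
  have hωpeq : ωp = ω ⊔ φ := le_antisymm hωpleωφ (sup_le hωltp'.le hωpφ)
  have hPersp1 : Persp K.C (μ, φ) (ω, ωp) :=
    ⟨hμC, hφ.1, hωC, hωcmi.2.1, Or.inl ⟨by rw [inf_comm φ ω, hωφ], by rw [hωpeq, sup_comm φ ω]⟩⟩
  have hPersp2 : Persp K.C (μ, φ) (ψ, p) :=
    ⟨hμC, hφ.1, hψ.1, hφ.2.1, Or.inl ⟨rfl, hp_eq.symm⟩⟩
  have hproj : Projective K.C (ω, ωp) (η, p) :=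
    Relation.ReflTransGen.head (persp_symm hPersp1) (Relation.ReflTransGen.head hPersp2 linkψ)
  have hωp_p : ωp = p := K.hP ω η ωp p hωcmi hηcmi hproj
  have hωΛ : ω = Λ := by
    rcases hprimeΛ ω hωC hΛω (by rw [← hωp_p]; exact hωltp'.le) with h | h
    · exact h
    · exact absurd (by rw [h]; exact hφp hw1 : ω.r K.one w) hωw
  have hΛcmi : IsCMI K.C Λ p := by rw [← hωΛ, ← hωp_p]; exact hωcmi
  -- every pair of p is in φ, ψ or Λ
  have tri : ∀ u v z : A, (φ.r u v ∨ ψ.r u v ∨ Λ.r u v) → (φ.r v z ∨ ψ.r v z ∨ Λ.r v z) →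
      (φ.r u z ∨ ψ.r u z ∨ Λ.r u z) := by
    intro u v z h1 h2
    by_cases gφ : φ.r u z
    · exact Or.inl gφ
    by_cases gψ : ψ.r u z
    · exact Or.inr (Or.inl gψ)
    refine Or.inr (Or.inr ?_)
    by_contra gΛ
    rcases h1 with h1 | h1 | h1 <;> rcases h2 with h2 | h2 | h2
    · exact gφ (Setoid.trans' _ h1 h2)
    · -- φ then ψ : use index2 for Λ
      have nuv : ¬ Λ.r u v := fun h => gψ (Setoid.trans' _ ((hΛθ h).2.mp h1) h2)
      have nvz : ¬ Λ.r v z := fun h => gφ (Setoid.trans' _ h1 ((hΛθ h).2.mpr h2))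
      exact gΛ (K.index2 hΛcmi (hφp h1) (hψp h2) nuv nvz)
    · -- φ then Λ : use index2 for ψ
      have nφvz : ¬ φ.r v z := fun h => gφ (Setoid.trans' _ h1 h)
      have nψvz : ¬ ψ.r v z := fun h => nφvz ((hΛθ h2).2.mpr h)
      have nψuv : ¬ ψ.r u v := fun h =>
        gΛ (Setoid.trans' _ (hμΛ (show μ.r u v from ⟨h1, h⟩)) h2)
      exact gψ (K.index2 hψ (hφp h1) (hΛp h2) nψuv nψvz)
    · -- ψ then φ : index2 for Λ
      have nuv : ¬ Λ.r u v := fun h => gφ (Setoid.trans' _ ((hΛθ h).2.mpr h1) h2)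
      have nvz : ¬ Λ.r v z := fun h => gψ (Setoid.trans' _ h1 ((hΛθ h).2.mp h2))
      exact gΛ (K.index2 hΛcmi (hψp h1) (hφp h2) nuv nvz)
    · exact gψ (Setoid.trans' _ h1 h2)
    · -- ψ then Λ : index2 for φ
      have nψvz : ¬ ψ.r v z := fun h => gψ (Setoid.trans' _ h1 h)
      have nφvz : ¬ φ.r v z := fun h => nψvz ((hΛθ h2).2.mp h)
      have nφuv : ¬ φ.r u v := fun h =>
        gΛ (Setoid.trans' _ (hμΛ (show μ.r u v from ⟨h, h1⟩)) h2)
      exact gφ (K.index2 hφ (hψp h1) (hΛp h2) nφuv nφvz)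
    · -- Λ then φ : index2 for ψ
      have nφuv : ¬ φ.r u v := fun h => gφ (Setoid.trans' _ h h2)
      have nψuv : ¬ ψ.r u v := fun h => nφuv ((hΛθ h1).2.mpr h)
      have nψvz : ¬ ψ.r v z := fun h =>
        gΛ (Setoid.trans' _ h1 (hμΛ (show μ.r v z from ⟨h2, h⟩)))
      exact gψ (K.index2 hψ (hΛp h1) (hφp h2) nψuv nψvz)
    · -- Λ then ψ : index2 for φ
      have nψuv : ¬ ψ.r u v := fun h => gψ (Setoid.trans' _ h h2)
      have nφuv : ¬ φ.r u v := fun h => nψuv ((hΛθ h1).2.mp h)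
      have nφvz : ¬ φ.r v z := fun h =>
        gΛ (Setoid.trans' _ h1 (hμΛ (show μ.r v z from ⟨h, h2⟩)))
      exact gφ (K.index2 hφ (hΛp h1) (hψp h2) nφuv nφvz)
    · exact gΛ (Setoid.trans' _ h1 h2)
  have key0 : ∀ x y : A, Relation.EqvGen (fun a b => φ.r a b ∨ ψ.r a b) x y →
      (φ.r x y ∨ ψ.r x y ∨ Λ.r x y) := by
    intro x y hgen
    induction hgen with
    | rel a b h => rcases h with h | h
                   · exact Or.inl h
                   · exact Or.inr (Or.inl h)
    | refl a => exact Or.inl (Setoid.refl' _ _)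
    | symm a b _ ih =>
        rcases ih with h | h | h
        · exact Or.inl (Setoid.symm' _ h)
        · exact Or.inr (Or.inl (Setoid.symm' _ h))
        · exact Or.inr (Or.inr (Setoid.symm' _ h))
    | trans a b c _ _ ih1 ih2 => exact tri a b c ih1 ih2
  have key : ∀ x y : A, p.r x y → (φ.r x y ∨ ψ.r x y ∨ Λ.r x y) := by
    intro x y hxy
    have hsup : (φ ⊔ ψ).r x y := by rw [hp_eq]; exact hxy
    rw [Setoid.sup_eq_eqvGen] at hsup
    exact key0 x y hsup
  have hrel : Λ.r = Bul p φ ψ := by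
    funext x y
    apply propext
    constructor
    · exact fun h => hΛθ h
    · intro hB
      by_cases hφxy : φ.r x y
      · exact hμΛ (show μ.r x y from ⟨hφxy, hB.2.mp hφxy⟩)
      · have hψxy : ¬ ψ.r x y := fun h => hφxy (hB.2.mpr h)
        rcases key x y hB.1 with h | h | h
        · exact absurd h hφxy
        · exact absurd h hψxy
        · exact h
  have hPersp3 : Persp K.C (Λ, p) (μ, ψ) :=
    ⟨hΛC, hφ.2.1, hμC, hψ.1, Or.inr ⟨by rw [inf_comm ψ Λ, hΛψ], by rw [sup_comm ψ Λ, hΛψp]⟩⟩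
  have hPersp4 : Persp K.C (μ, ψ) (φ, p) :=
    ⟨hμC, hψ.1, hφ.1, hφ.2.1, Or.inl ⟨by rw [inf_comm ψ φ], by rw [sup_comm ψ φ, hp_eq]⟩⟩
  exact ⟨Λ, hΛC, hΛcmi,
    Relation.ReflTransGen.head hPersp3 (Relation.ReflTransGen.head hPersp4 linkφ), hrel⟩

end FregeAux.Ctx

/-- `γ` is a "good" congruence: in `C`, CMI with cover `p`, projectively linked to `(η,p)`. -/
def FregeAux.Ctx.Good {A : Type*} (K : FregeAux.Ctx A) (η p γ : Setoid A) : Prop :=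
  γ ∈ K.C ∧ IsCMI K.C γ p ∧ Projective K.C (γ, p) (η, p)

namespace FregeAux.Ctx

variable {A : Type*} (K : FregeAux.Ctx A)

lemma neighbor {η p ω₁ ω₂ κ : Setoid A} (hηcmi : IsCMI K.C η p)
    (h1 : K.Good η p ω₁) (h2 : K.Good η p ω₂) (hne : ω₁ ≠ ω₂)
    (hκ : κ ∈ K.C) (hinf : κ ⊓ ω₁ = κ ⊓ ω₂) (hs1 : κ ⊔ ω₁ = p) (hs2 : κ ⊔ ω₂ = p) :
    ∃ E, K.Good η p E ∧ E.r = Bul p ω₁ ω₂ := by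
  classical
  have hω₁p : ω₁ ≤ p := h1.2.1.2.2.1.le
  have hω₂p : ω₂ ≤ p := h2.2.1.2.2.1.le
  have hκp : κ ≤ p := by rw [← hs1]; exact le_sup_left
  have hκle : ∀ x y, κ.r x y → Bul p ω₁ ω₂ x y := by
    intro x y h
    refine ⟨hκp h, ?_⟩
    constructor
    · intro h'
      have hm : (κ ⊓ ω₁).r x y := ⟨h, h'⟩
      rw [hinf] at hm; exact hm.2
    · intro h'
      have hm : (κ ⊓ ω₂).r x y := ⟨h, h'⟩
      rw [← hinf] at hm; exact hm.2
  set σ : Setoid A := (ω₁ ⊓ ω₂) ⊔ κ with hσdef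
  have hσC : σ ∈ K.C := K.mem_sup (K.mem_inf h1.1 h2.1) hκ
  have hσle : ∀ x y, σ.r x y → Bul p ω₁ ω₂ x y := by
    intro x y h
    have : σ ≤ K.bulSetoid h1.2.1 h2.2.1 := by
      apply sup_le
      · intro u v huv
        exact ⟨hω₁p huv.1, iff_of_true huv.1 huv.2⟩
      · intro u v huv
        exact hκle u v huv
    exact this h
  have hκnle : ¬ κ ≤ ω₁ := by
    intro h
    have : κ ⊔ ω₁ = ω₁ := sup_eq_right.mpr h
    rw [hs1] at this
    exact absurd this.symm (ne_of_lt h1.2.1.2.2.1)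
  obtain ⟨a, b, hab1, hab2⟩ := exists_pair_not_le hκnle
  have hab : σ.r a b := (le_sup_right : κ ≤ σ) hab1
  have hnab : ¬ (ω₁ ⊓ ω₂).r a b := fun h => hab2 h.1
  obtain ⟨γ, hγC, hγcmi, hγlink, hγrel⟩ :=
    K.pair_closure h1.2.1 h2.2.1 hne hηcmi h1.2.2 h2.2.2 hσC hσle hab hnab
  exact ⟨γ, ⟨hγC, hγcmi, hγlink⟩, hγrel⟩

lemma trio {η p φ₀ ω ω' D E : Setoid A} (hηcmi : IsCMI K.C η p)
    (h0 : K.Good η p φ₀) (h1 : K.Good η p ω) (h2 : K.Good η p ω')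
    (hne01 : φ₀ ≠ ω) (hne02 : φ₀ ≠ ω')
    (hD : K.Good η p D) (hDrel : D.r = Bul p φ₀ ω)
    (hE : K.Good η p E) (hErel : E.r = Bul p ω ω') :
    ∃ F, K.Good η p F ∧ F.r = Bul p φ₀ ω' := by
  classical
  have hφ₀p : φ₀ ≤ p := h0.2.1.2.2.1.le
  have hωp : ω ≤ p := h1.2.1.2.2.1.le
  have hω'p : ω' ≤ p := h2.2.1.2.2.1.le
  have hDi : ∀ x y, D.r x y ↔ (p.r x y ∧ (φ₀.r x y ↔ ω.r x y)) := by
    intro x y; exact iff_of_eq (congrFun (congrFun hDrel x) y)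
  have hEi : ∀ x y, E.r x y ↔ (p.r x y ∧ (ω.r x y ↔ ω'.r x y)) := by
    intro x y; exact iff_of_eq (congrFun (congrFun hErel x) y)
  -- degenerate case : D = ω'
  by_cases hcaseB : D = ω'
  · refine ⟨ω, h1, ?_⟩
    funext x y
    apply propext
    have hω'i : ∀ u v : A, ω'.r u v ↔ (p.r u v ∧ (φ₀.r u v ↔ ω.r u v)) := by
      intro u v; rw [← hcaseB]; exact hDi u v
    constructor
    · intro h
      refine ⟨hωp h, ?_⟩
      constructor
      · intro hφ; exact (hω'i x y).mpr ⟨hωp h, iff_of_true hφ h⟩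
      · intro hω'; exact ((hω'i x y).mp hω').2.mpr h
    · rintro ⟨hp, hiff⟩
      by_cases hφ : φ₀.r x y
      · exact ((hω'i x y).mp (hiff.mp hφ)).2.mp hφ
      · by_contra hω
        exact hφ (((hω'i x y).mpr ⟨hp, iff_of_false hφ hω⟩) |> hiff.mpr)
  -- degenerate case : E = φ₀
  by_cases hcaseC : E = φ₀
  · refine ⟨ω, h1, ?_⟩
    funext x y
    apply propext
    have hφ₀i : ∀ u v : A, φ₀.r u v ↔ (p.r u v ∧ (ω.r u v ↔ ω'.r u v)) := by
      intro u v; rw [← hcaseC]; exact hEi u v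
    constructor
    · intro h
      refine ⟨hωp h, ?_⟩
      constructor
      · intro hφ; exact ((hφ₀i x y).mp hφ).2.mp h
      · intro hω'; exact (hφ₀i x y).mpr ⟨hωp h, iff_of_true h hω'⟩
    · rintro ⟨hp, hiff⟩
      by_cases hω : ω.r x y
      · exact hω
      · exfalso
        by_cases hω' : ω'.r x y
        · exact hω (((hφ₀i x y).mp (hiff.mpr hω')).2.mpr hω')
        · exact hω' (hiff.mp ((hφ₀i x y).mpr ⟨hp, iff_of_false hω hω'⟩))
  -- main case : find a seed pair (c,d) ∈ D ⊓ E outside φ₀ ⊓ ω'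
  have hmain : ∃ c d : A, D.r c d ∧ E.r c d ∧ ¬ φ₀.r c d ∧ ¬ ω.r c d ∧ ¬ ω'.r c d := by
    have hDnleω' : ¬ D ≤ ω' := K.cmi_not_le hD.2.1 h2.2.1 hcaseB
    have hDne : D ≠ D ⊓ ω' := by
      intro h
      exact hDnleω' (by rw [h]; exact inf_le_right)
    obtain ⟨z, hz1, hz2'⟩ := K.R_witness hD.1 (K.mem_inf hD.1 h2.1) inf_le_left hDne
    have hz2 : ¬ ω'.r K.one z := fun h => hz2' ⟨hz1, h⟩
    obtain ⟨hpz, hiffz⟩ := (hDi K.one z).mp hz1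
    by_cases hzφ : φ₀.r K.one z
    · -- z is related to one by φ₀ and ω but not ω'; need t
      have hzω : ω.r K.one z := hiffz.mp hzφ
      have hDneω : D ≠ ω := by
        intro h
        apply K.cmi_not_le h1.2.1 h0.2.1 (Ne.symm hne01)
        intro x y hxy
        have : D.r x y := by rw [h]; exact hxy
        exact ((hDi x y).mp this).2.mpr hxy
      have hDnleω : ¬ D ≤ ω := K.cmi_not_le hD.2.1 h1.2.1 hDneω
      have hDne2 : D ≠ D ⊓ ω := by
        intro h
        exact hDnleω (by rw [h]; exact inf_le_right)
      obtain ⟨t, ht1, ht2'⟩ := K.R_witness hD.1 (K.mem_inf hD.1 h1.1) inf_le_left hDne2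
      have ht2 : ¬ ω.r K.one t := fun h => ht2' ⟨ht1, h⟩
      obtain ⟨hpt, hifft⟩ := (hDi K.one t).mp ht1
      have htφ : ¬ φ₀.r K.one t := fun h => ht2 (hifft.mp h)
      by_cases htω' : ω'.r K.one t
      · -- seed pair (t, z)
        refine ⟨t, z, ?_, ?_, ?_, ?_, ?_⟩
        · have hptz : p.r t z := Setoid.trans' _ (Setoid.symm' _ hpt) hpz
          exact (hDi t z).mpr ⟨hptz, iff_of_false
            (fun h => htφ (Setoid.trans' _ hzφ (Setoid.symm' _ h)))
            (fun h => ht2 (Setoid.trans' _ hzω (Setoid.symm' _ h)))⟩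
        · have hptz : p.r t z := Setoid.trans' _ (Setoid.symm' _ hpt) hpz
          exact (hEi t z).mpr ⟨hptz, iff_of_false
            (fun h => ht2 (Setoid.trans' _ hzω (Setoid.symm' _ h)))
            (fun h => hz2 (Setoid.trans' _ htω' h))⟩
        · exact fun h => htφ (Setoid.trans' _ hzφ (Setoid.symm' _ h))
        · exact fun h => ht2 (Setoid.trans' _ hzω (Setoid.symm' _ h))
        · exact fun h => hz2 (Setoid.trans' _ htω' h)
      · -- seed pair (one, t)
        refine ⟨K.one, t, ht1, ?_, htφ, ht2, htω'⟩
        exact (hEi K.one t).mpr ⟨hpt, iff_of_false ht2 htω'⟩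
    · -- seed pair (one, z)
      have hzω : ¬ ω.r K.one z := fun h => hzφ (hiffz.mpr h)
      refine ⟨K.one, z, hz1, ?_, hzφ, hzω, hz2⟩
      exact (hEi K.one z).mpr ⟨hpz, iff_of_false hzω hz2⟩
  obtain ⟨c, d, hcD, hcE, hcφ, hcω, hcω'⟩ := hmain
  set σ : Setoid A := (φ₀ ⊓ ω') ⊔ (D ⊓ E) with hσdef
  have hσC : σ ∈ K.C := K.mem_sup (K.mem_inf h0.1 h2.1) (K.mem_inf hD.1 hE.1)
  have hσle : ∀ x y, σ.r x y → Bul p φ₀ ω' x y := by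
    intro x y h
    have : σ ≤ K.bulSetoid h0.2.1 h2.2.1 := by
      apply sup_le
      · intro u v huv
        exact ⟨hφ₀p huv.1, iff_of_true huv.1 huv.2⟩
      · intro u v huv
        obtain ⟨hpD, hiD⟩ := (hDi u v).mp huv.1
        obtain ⟨hpE, hiE⟩ := (hEi u v).mp huv.2
        exact ⟨hpD, hiD.trans hiE⟩
    exact this h
  have hab : σ.r c d := (le_sup_right : D ⊓ E ≤ σ) ⟨hcD, hcE⟩
  have hnab : ¬ (φ₀ ⊓ ω').r c d := fun h => hcφ h.1
  obtain ⟨γ, hγC, hγcmi, hγlink, hγrel⟩ :=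
    K.pair_closure h0.2.1 h2.2.1 hne02 hηcmi h0.2.2 h2.2.2 hσC hσle hab hnab
  exact ⟨γ, ⟨hγC, hγcmi, hγlink⟩, hγrel⟩

end FregeAux.Ctx

namespace FregeAux.Ctx

variable {A : Type*} (K : FregeAux.Ctx A)

/-- Given a transposition between prime intervals, a single CMI with cover `p` transposes
up from both of them. -/
lemma edge_avoider {η p : Setoid A} (hηcmi : IsCMI K.C η p)
    {a b a' b' : Setoid A} (hbC : b ∈ K.C) (ha'C : a' ∈ K.C) (hb'C : b' ∈ K.C)
    (e1 : a = b ⊓ a') (e2 : b' = b ⊔ a')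
    (hlink : Projective K.C (a, b) (η, p))
    (habne : a ≠ b)
    (hprab : ∀ δ ∈ K.C, a ≤ δ → δ ≤ b → δ = a ∨ δ = b)
    (hpra'b' : ∀ δ ∈ K.C, a' ≤ δ → δ ≤ b' → δ = a' ∨ δ = b') :
    ∃ ω', K.Good η p ω' ∧ (a = b ⊓ ω' ∧ p = b ⊔ ω') ∧ (a' = b' ⊓ ω' ∧ p = b' ⊔ ω') := by
  classical
  have hab : a ≤ b := by rw [e1]; exact inf_le_left
  have haa' : a ≤ a' := by rw [e1]; exact inf_le_right
  have hbb' : b ≤ b' := by rw [e2]; exact le_sup_left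
  have ha'b' : a' ≤ b' := by rw [e2]; exact le_sup_right
  -- pick a pair in b \ a
  obtain ⟨x, y, hx1, hx2⟩ := exists_pair_not_le (fun h : b ≤ a => habne (le_antisymm hab h))
  have hxa' : ¬ a'.r x y := by
    intro h
    exact hx2 (by rw [e1]; exact ⟨hx1, h⟩)
  obtain ⟨ω, hωC, ha'ω, hωxy, hωcmi⟩ := K.maxAvoider ha'C hxa'
  set ωp : Setoid A := ω ⊔ theta K.C x y with hωpdef
  have haω : a ≤ ω := haa'.trans ha'ω
  have hbnle : ¬ b ≤ ω := fun h => hωxy (h hx1)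
  have hb'nle : ¬ b' ≤ ω := fun h => hbnle (hbb'.trans h)
  have hωb : b ⊓ ω = a := by
    rcases hprab (b ⊓ ω) (K.mem_inf hbC hωC) (le_inf hab haω) inf_le_left with h | h
    · exact h
    · exact absurd (by rw [← h]; exact inf_le_right) hbnle
  have hωb' : b' ⊓ ω = a' := by
    rcases hpra'b' (b' ⊓ ω) (K.mem_inf hb'C hωC) (le_inf ha'b' ha'ω) inf_le_left with h | h
    · exact h
    · exact absurd (by rw [← h]; exact inf_le_right) hb'nle
  have hωlt : ω < ωp := hωcmi.2.2.1
  have hθb : theta K.C x y ≤ b := K.theta_le hbC hx1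
  have hωple : ωp ≤ ω ⊔ b := sup_le le_sup_left (hθb.trans le_sup_right)
  have hbωp : b ≤ ωp := by
    have hmod : ω ⊔ b ⊓ ωp = (ω ⊔ b) ⊓ ωp := K.hM ω hωC b hbC ωp hωcmi.2.1 le_sup_left
    have h2 : ω ⊔ b ⊓ ωp = ωp := by rw [hmod]; exact inf_eq_right.mpr hωple
    rcases hprab (b ⊓ ωp) (K.mem_inf hbC hωcmi.2.1)
        (le_inf hab (haω.trans hωlt.le)) inf_le_left with h | h
    · exfalso
      rw [h, sup_eq_left.mpr haω] at h2
      exact (ne_of_lt hωlt) h2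
    · rw [← h]; exact inf_le_right
  have hωpb : ωp = ω ⊔ b := le_antisymm hωple (sup_le hωlt.le hbωp)
  have hωpb' : ωp = ω ⊔ b' := by
    apply le_antisymm (hωpb.le.trans (sup_le le_sup_left (hbb'.trans le_sup_right)))
    rw [e2]
    refine sup_le le_sup_left (sup_le ?_ (ha'ω.trans le_sup_left))
    rw [hωpb]; exact le_sup_right
  have haC : a ∈ K.C := by rw [e1]; exact K.mem_inf hbC ha'C
  have hPerspb : Persp K.C (a, b) (ω, ωp) :=
    ⟨haC, hbC, hωC, hωcmi.2.1,
      Or.inl ⟨hωb.symm, by rw [hωpb, sup_comm ω b]⟩⟩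
  have hproj : Projective K.C (ω, ωp) (η, p) :=
    Relation.ReflTransGen.head (persp_symm hPerspb) hlink
  have hωp_p : ωp = p := K.hP ω η ωp p hωcmi hηcmi hproj
  have hωcmi' : IsCMI K.C ω p := by rw [← hωp_p]; exact hωcmi
  have hgood : K.Good η p ω := ⟨hωC, hωcmi', hωp_p ▸ hproj⟩
  refine ⟨ω, hgood, ⟨hωb.symm, ?_⟩, ⟨hωb'.symm, ?_⟩⟩
  · rw [← hωp_p, hωpb, sup_comm ω b]
  · rw [← hωp_p, hωpb', sup_comm ω b']

end FregeAux.Ctx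

namespace FregeAux.Ctx

variable {A : Type*} (K : FregeAux.Ctx A)

lemma acc_step {η p φ ω ω' κ : Setoid A} (hηcmi : IsCMI K.C η p)
    (hφg : K.Good η p φ) (hω : K.Good η p ω) (hω' : K.Good η p ω')
    (hκ : κ ∈ K.C) (hinf : κ ⊓ ω = κ ⊓ ω') (hs1 : κ ⊔ ω = p) (hs2 : κ ⊔ ω' = p)
    (acc : φ = ω ∨ ∃ F, K.Good η p F ∧ F.r = Bul p φ ω) :
    φ = ω' ∨ ∃ F, K.Good η p F ∧ F.r = Bul p φ ω' := by
  classical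
  by_cases heq : ω = ω'
  · rwa [heq] at acc
  obtain ⟨E, hEg, hErel⟩ := K.neighbor hηcmi hω hω' heq hκ hinf hs1 hs2
  by_cases h02 : φ = ω'
  · exact Or.inl h02
  rcases acc with h01 | ⟨F, hFg, hFrel⟩
  · exact Or.inr ⟨E, hEg, by rw [hErel, h01]⟩
  · by_cases h01 : φ = ω
    · exact Or.inr ⟨E, hEg, by rw [hErel, h01]⟩
    · obtain ⟨G, hGg, hGrel⟩ := K.trio hηcmi hφg hω hω' h01 h02 hFg hFrel hEg hErel
      exact Or.inr ⟨G, hGg, hGrel⟩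

/-- The main induction along a projectivity chain. -/
lemma chain_closure {η p φ : Setoid A} (hηcmi : IsCMI K.C η p) (hφg : K.Good η p φ) :
    ∀ J : Setoid A × Setoid A, Projective K.C (φ, p) J →
      J.1 ∈ K.C ∧ J.2 ∈ K.C ∧ J.1 ≠ J.2 ∧ J.1 ≤ J.2 ∧
      (∀ δ ∈ K.C, J.1 ≤ δ → δ ≤ J.2 → δ = J.1 ∨ δ = J.2) ∧
      ∃ ω, K.Good η p ω ∧ J.1 = J.2 ⊓ ω ∧ p = J.2 ⊔ ω ∧
        (φ = ω ∨ ∃ F, K.Good η p F ∧ F.r = Bul p φ ω) := by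
  intro J h
  induction h with
  | refl =>
      have hφlt : φ < p := hφg.2.1.2.2.1
      refine ⟨hφg.1, hηcmi.2.1, ne_of_lt hφlt, hφlt.le, ?_, φ, hφg, ?_, ?_, Or.inl rfl⟩
      · exact fun δ hδ h1 h2 => K.cmi_prime hφg.2.1 hδ h1 h2
      · exact (inf_eq_right.mpr hφlt.le).symm
      · exact (sup_eq_left.mpr hφlt.le).symm
  | @tail J J' hchain hstep ih =>
      obtain ⟨hJ1C, hJ2C, hJpr1C, hJpr2C, hdisj⟩ := id hstep
      obtain ⟨_, _, hJne, hJle, hJprime, ω, hωg, hJinf, hJsup, hacc⟩ := ih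
      -- link of J backwards to (η, p)
      have hlinkJ : Projective K.C J (η, p) :=
        Relation.ReflTransGen.trans (projective_symm hchain) hφg.2.2
      rcases hdisj with ⟨e1, e2⟩ | ⟨e1, e2⟩
      · -- J is the lower interval, J' the upper
        have hprJ' : ∀ δ ∈ K.C, J'.1 ≤ δ → δ ≤ J'.2 → δ = J'.1 ∨ δ = J'.2 :=
          K.prime_up hJ2C hJpr1C e1 e2 hJprime
        obtain ⟨ω', hω'g, ⟨f1, f2⟩, ⟨f3, f4⟩⟩ :=
          K.edge_avoider hηcmi hJ2C hJpr1C hJpr2C e1 e2 hlinkJ hJne hJprime hprJ'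
        have hacc' := K.acc_step hηcmi hφg hωg hω'g hJ2C
          (by rw [← hJinf, ← f1]) (by rw [← hJsup]) (by rw [← f2]) hacc
        have hJ'ne : J'.1 ≠ J'.2 := by
          intro he
          apply hJne
          have hbb' : J.2 ≤ J'.2 := by rw [e2]; exact le_sup_left
          rw [e1, he]
          exact (inf_eq_left.mpr hbb')
        have hJ'le : J'.1 ≤ J'.2 := by rw [e2]; exact le_sup_right
        exact ⟨hJpr1C, hJpr2C, hJ'ne, hJ'le, hprJ', ω', hω'g, f3, f4, hacc'⟩
      · -- J' is the lower interval, J the upper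
        have hprJ' : ∀ δ ∈ K.C, J'.1 ≤ δ → δ ≤ J'.2 → δ = J'.1 ∨ δ = J'.2 :=
          K.prime_down hJpr2C hJ1C e1 e2 hJprime
        have hlinkJ' : Projective K.C J' (η, p) :=
          Relation.ReflTransGen.head (persp_symm hstep) hlinkJ
        have hJ'ne : J'.1 ≠ J'.2 := by
          intro he
          apply hJne
          have hba' : J'.2 ≤ J.1 := by
            conv_lhs => rw [← he, e1]
            exact inf_le_right
          rw [e2]
          exact (sup_eq_right.mpr hba').symm
        obtain ⟨ω', hω'g, ⟨f1, f2⟩, ⟨f3, f4⟩⟩ :=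
          K.edge_avoider hηcmi hJpr2C hJ1C hJ2C e1 e2 hlinkJ' hJ'ne hprJ' hJprime
        have hacc' := K.acc_step hηcmi hφg hωg hω'g hJ2C
          (by rw [← hJinf, ← f3]) (by rw [← hJsup]) (by rw [← f4]) hacc
        have hJ'le : J'.1 ≤ J'.2 := by rw [e1]; exact inf_le_left
        exact ⟨hJpr1C, hJpr2C, hJ'ne, hJ'le, hprJ', ω', hω'g, f1, f2, hacc'⟩

end FregeAux.Ctx

namespace FregeAux.Ctx

variable {A : Type*} (K : FregeAux.Ctx A)

lemma pip_good {η p φ : Setoid A} (hηcmi : IsCMI K.C η p) (h : PIP K.C φ η) :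
    K.Good η p φ := by
  obtain ⟨p', q', h1, h2, hproj⟩ := h
  have hq' : q' = p := K.cover_unique h2 hηcmi
  rw [hq'] at hproj
  have hp' : p' = p := K.hP φ η p' p h1 hηcmi hproj
  rw [hp'] at hproj h1
  exact ⟨h1.1, h1, hproj⟩

lemma good_pip {η p φ : Setoid A} (hηcmi : IsCMI K.C η p) (h : K.Good η p φ) :
    PIP K.C φ η :=
  ⟨p, p, h.2.1, hηcmi, h.2.2⟩

/-- Main closure result. -/
lemma closure {η p : Setoid A} (hηcmi : IsCMI K.C η p) (φ χ : Setoid A)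
    (hφ : φ ∈ ({ψ | PIP K.C ψ η} ∪ {p} : Set (Setoid A)))
    (hχ : χ ∈ ({ψ | PIP K.C ψ η} ∪ {p} : Set (Setoid A))) :
    ∃ γ, γ ∈ ({ψ | PIP K.C ψ η} ∪ {p} : Set (Setoid A)) ∧ γ ∈ K.C ∧ γ.r = Bul p φ χ := by
  classical
  have hrel_self : ∀ (δ : Setoid A), δ ≤ p → Bul p δ δ = p.r := by
    intro δ _
    funext x y
    exact propext ⟨fun h => h.1, fun h => ⟨h, Iff.rfl⟩⟩
  rcases hφ with hφU | hφp
  · have hφg : K.Good η p φ := K.pip_good hηcmi hφU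
    have hφle : φ ≤ p := hφg.2.1.2.2.1.le
    rcases hχ with hχU | hχp
    · have hχg : K.Good η p χ := K.pip_good hηcmi hχU
      by_cases heq : φ = χ
      · subst heq
        refine ⟨p, Or.inr rfl, hηcmi.2.1, ?_⟩
        funext x y
        exact propext ⟨fun h => ⟨h, Iff.rfl⟩, fun h => h.1⟩
      · have hchain : Projective K.C (φ, p) (χ, p) :=
          Relation.ReflTransGen.trans hφg.2.2 (projective_symm hχg.2.2)
        obtain ⟨_, _, _, _, _, ω, hωg, hJinf, _, hacc⟩ :=
          K.chain_closure hηcmi hφg (χ, p) hchain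
        have hωχ : ω = χ := by
          have : p ⊓ ω = ω := inf_eq_right.mpr hωg.2.1.2.2.1.le
          simpa [this] using hJinf.symm
        subst hωχ
        rcases hacc with h | ⟨F, hFg, hFrel⟩
        · exact absurd h heq
        · exact ⟨F, Or.inl (K.good_pip hηcmi hFg), hFg.1, hFrel⟩
    · have hχp' : χ = p := hχp
      refine ⟨φ, Or.inl hφU, hφg.1, ?_⟩
      rw [hχp']
      funext x y
      exact propext ⟨fun h => ⟨hφle h, iff_of_true h (hφle h)⟩, fun h => h.2.mpr h.1⟩
  · have hφp' : φ = p := hφp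
    rcases hχ with hχU | hχp
    · have hχg : K.Good η p χ := K.pip_good hηcmi hχU
      have hχle : χ ≤ p := hχg.2.1.2.2.1.le
      refine ⟨χ, Or.inl hχU, hχg.1, ?_⟩
      rw [hφp']
      funext x y
      exact propext ⟨fun h => ⟨hχle h, iff_of_true (hχle h) h⟩, fun h => h.2.mp h.1⟩
    · have hχp' : χ = p := hχp
      refine ⟨p, Or.inr rfl, hηcmi.2.1, ?_⟩
      rw [hφp', hχp']
      funext x y
      exact propext ⟨fun h => ⟨h, Iff.rfl⟩, fun h => h.1⟩

end FregeAux.Ctx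

open FregeAux in
theorem stmt7' {A : Type*} (one : A) (C : Set (Setoid A))
    (hInf : ∀ S ⊆ C, sInf S ∈ C) (hSup : ∀ S ⊆ C, sSup S ∈ C)
    (hDir : ∀ D ⊆ C, D.Nonempty → DirectedOn (· ≤ ·) D →
      ∀ x y : A, (sSup D).r x y ↔ ∃ s ∈ D, s.r x y)
    (hM : ∀ x ∈ C, ∀ y ∈ C, ∀ z ∈ C, x ≤ z → x ⊔ y ⊓ z = (x ⊔ y) ⊓ z)
    (hO : ∀ α ∈ C, ∀ a b : A, α ⊔ theta C one a = α ⊔ theta C one b ↔ α.r a b)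
    (hR : ∀ α ∈ C, ∀ β ∈ C, (∀ x : A, α.r one x ↔ β.r one x) → α = β)
    (hP : ∀ φ ψ p q : Setoid A, IsCMI C φ p → IsCMI C ψ q →
      Projective C (φ, p) (ψ, q) → p = q)
    (η p : Setoid A) (hη : IsCMI C η p) :
    ∃ op : Setoid A → Setoid A → Setoid A,
      (∀ φ ∈ {ψ | PIP C ψ η} ∪ {p}, ∀ χ ∈ {ψ | PIP C ψ η} ∪ {p},
        op φ χ ∈ {ψ | PIP C ψ η} ∪ {p} ∧ op φ χ ∈ C ∧ (op φ χ).r = Bul p φ χ) ∧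
      (∀ φ ∈ {ψ | PIP C ψ η} ∪ {p}, ∀ χ ∈ {ψ | PIP C ψ η} ∪ {p},
        ∀ ρ ∈ {ψ | PIP C ψ η} ∪ {p}, op (op φ χ) ρ = op φ (op χ ρ)) ∧
      (∀ φ ∈ {ψ | PIP C ψ η} ∪ {p}, ∀ χ ∈ {ψ | PIP C ψ η} ∪ {p}, op φ χ = op χ φ) ∧
      (∀ φ ∈ {ψ | PIP C ψ η} ∪ {p}, op φ p = φ ∧ op φ φ = p) := by
  classical
  set K : FregeAux.Ctx A := ⟨one, C, hInf, hSup, hDir, hM, hO, hR, hP⟩ with hKdef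
  have hηK : IsCMI K.C η p := hη
  -- the operation
  set op : Setoid A → Setoid A → Setoid A := fun φ χ =>
    if h : ∃ γ, γ ∈ ({ψ | PIP C ψ η} ∪ {p} : Set (Setoid A)) ∧ γ ∈ C ∧ γ.r = Bul p φ χ
    then h.choose else p with hopdef
  have hop : ∀ φ ∈ ({ψ | PIP C ψ η} ∪ {p} : Set (Setoid A)),
      ∀ χ ∈ ({ψ | PIP C ψ η} ∪ {p} : Set (Setoid A)),
      op φ χ ∈ ({ψ | PIP C ψ η} ∪ {p} : Set (Setoid A)) ∧ op φ χ ∈ C ∧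
        (op φ χ).r = Bul p φ χ := by
    intro φ hφ χ hχ
    have h : ∃ γ, γ ∈ ({ψ | PIP C ψ η} ∪ {p} : Set (Setoid A)) ∧ γ ∈ C ∧ γ.r = Bul p φ χ :=
      K.closure hηK φ χ hφ hχ
    have : op φ χ = h.choose := dif_pos h
    rw [this]
    exact h.choose_spec
  have huniq : ∀ γ₁ γ₂ : Setoid A, γ₁.r = γ₂.r → γ₁ = γ₂ := by
    intro γ₁ γ₂ h
    exact Setoid.ext fun a b => iff_of_eq (congrFun (congrFun h a) b)
  have hle_p : ∀ φ ∈ ({ψ | PIP C ψ η} ∪ {p} : Set (Setoid A)), φ ≤ p := by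
    intro φ hφ
    rcases hφ with hφU | hφp
    · exact (K.pip_good hηK hφU).2.1.2.2.1.le
    · exact (show φ = p from hφp).le
  refine ⟨op, hop, ?_, ?_, ?_⟩
  · -- associativity
    intro φ hφ χ hχ ρ hρ
    obtain ⟨hm1, _, hr1⟩ := hop φ hφ χ hχ
    obtain ⟨hm2, _, hr2⟩ := hop χ hχ ρ hρ
    obtain ⟨_, _, hr3⟩ := hop (op φ χ) hm1 ρ hρ
    obtain ⟨_, _, hr4⟩ := hop φ hφ (op χ ρ) hm2
    apply huniq
    rw [hr3, hr4]
    funext x y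
    have e1 : (op φ χ).r x y = Bul p φ χ x y := by rw [hr1]
    have e2 : (op χ ρ).r x y = Bul p χ ρ x y := by rw [hr2]
    apply propext
    unfold Bul
    rw [e1, e2]
    unfold Bul
    constructor
    · rintro ⟨hp, hi⟩
      exact ⟨hp, by tauto⟩
    · rintro ⟨hp, hi⟩
      exact ⟨hp, by tauto⟩
  · -- commutativity
    intro φ hφ χ hχ
    obtain ⟨_, _, hr1⟩ := hop φ hφ χ hχ
    obtain ⟨_, _, hr2⟩ := hop χ hχ φ hφ
    apply huniq
    rw [hr1, hr2]
    funext x y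
    apply propext
    unfold Bul
    tauto
  · -- identity and inverses
    intro φ hφ
    have hφle := hle_p φ hφ
    have hpmem : p ∈ ({ψ | PIP C ψ η} ∪ {p} : Set (Setoid A)) := Or.inr rfl
    constructor
    · obtain ⟨_, _, hr⟩ := hop φ hφ p hpmem
      apply huniq
      rw [hr]
      funext x y
      apply propext
      unfold Bul
      exact ⟨fun h => h.2.mpr h.1, fun h => ⟨hφle h, iff_of_true h (hφle h)⟩⟩
    · obtain ⟨_, _, hr⟩ := hop φ hφ φ hφ
      apply huniq
      rw [hr]
      funext x y
      apply propext
      unfold Bul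
      exact ⟨fun h => h.1, fun h => ⟨h, Iff.rfl⟩⟩


/-- Theorem 10: each PIP class `U` of completely meet irreducible congruences,
supplemented with the common cover `p = η⁺`, is a Boolean group under `•`
(the complement of symmetric difference restricted to `η⁺`): `•` maps `Ū × Ū` into
`Ū` (in particular `φ • ψ` is an equivalence relation belonging to `C`), is
associative and commutative, has identity `p`, and every element is its own
inverse. -/
theorem stmt7 (one : A) (C : Set (Setoid A))
    (hInf : ∀ S ⊆ C, sInf S ∈ C) (hSup : ∀ S ⊆ C, sSup S ∈ C)
    (hDir : ∀ D ⊆ C, D.Nonempty → DirectedOn (· ≤ ·) D →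
      ∀ x y : A, (sSup D).r x y ↔ ∃ s ∈ D, s.r x y)
    (hM : ∀ x ∈ C, ∀ y ∈ C, ∀ z ∈ C, x ≤ z → x ⊔ y ⊓ z = (x ⊔ y) ⊓ z)
    (hO : ∀ α ∈ C, ∀ a b : A, α ⊔ theta C one a = α ⊔ theta C one b ↔ α.r a b)
    (hR : ∀ α ∈ C, ∀ β ∈ C, (∀ x : A, α.r one x ↔ β.r one x) → α = β)
    (hP : ∀ φ ψ p q : Setoid A, IsCMI C φ p → IsCMI C ψ q →
      Projective C (φ, p) (ψ, q) → p = q)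
    (η p : Setoid A) (hη : IsCMI C η p) :
    ∃ op : Setoid A → Setoid A → Setoid A,
      (∀ φ ∈ {ψ | PIP C ψ η} ∪ {p}, ∀ χ ∈ {ψ | PIP C ψ η} ∪ {p},
        op φ χ ∈ {ψ | PIP C ψ η} ∪ {p} ∧ op φ χ ∈ C ∧ (op φ χ).r = Bul p φ χ) ∧
      (∀ φ ∈ {ψ | PIP C ψ η} ∪ {p}, ∀ χ ∈ {ψ | PIP C ψ η} ∪ {p},
        ∀ ρ ∈ {ψ | PIP C ψ η} ∪ {p}, op (op φ χ) ρ = op φ (op χ ρ)) ∧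
      (∀ φ ∈ {ψ | PIP C ψ η} ∪ {p}, ∀ χ ∈ {ψ | PIP C ψ η} ∪ {p}, op φ χ = op χ φ) ∧
      (∀ φ ∈ {ψ | PIP C ψ η} ∪ {p}, op φ p = φ ∧ op φ φ = p) := by
  exact stmt7' one C hInf hSup hDir hM hO hR hP η p hη
end

section
/- Assume conditions (M), (O), (R), (P). Let φ, ψ ∈ Cm with φ ≠ ψ and φ⁺ = ψ⁺. Then the following are equivalent: (1) φ ∼ ψ; (2) the relation φ • ψ is a member of Cm; (3) the relation φ • ψ is a member of C. (This is Corollary 11 of the paper.) -/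
variable {A : Type*}

namespace S8

theorem rle {a b : Setoid A} (h : a ≤ b) {x y : A} (hxy : a.r x y) : b.r x y := h hxy

theorem le_mk {a b : Setoid A} (h : ∀ x y, a.r x y → b.r x y) : a ≤ b :=
  Setoid.le_def.mpr fun {x y} => h x y

theorem lt_pair {a b : Setoid A} (h : a < b) : ∃ x y, b.r x y ∧ ¬ a.r x y := by
  by_contra hc
  push_neg at hc
  exact h.not_ge (le_mk hc)

theorem mem_sup2 (C : Set (Setoid A)) (hSup : ∀ S ⊆ C, sSup S ∈ C) {a b : Setoid A}
    (ha : a ∈ C) (hb : b ∈ C) : a ⊔ b ∈ C := by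
  have h := hSup {a, b} ?_
  · rwa [sSup_pair] at h
  · intro x hx
    simp only [Set.mem_insert_iff, Set.mem_singleton_iff] at hx
    rcases hx with rfl | rfl
    · exact ha
    · exact hb

theorem mem_inf2 (C : Set (Setoid A)) (hInf : ∀ S ⊆ C, sInf S ∈ C) {a b : Setoid A}
    (ha : a ∈ C) (hb : b ∈ C) : a ⊓ b ∈ C := by
  have h := hInf {a, b} ?_
  · rwa [sInf_pair] at h
  · intro x hx
    simp only [Set.mem_insert_iff, Set.mem_singleton_iff] at hx
    rcases hx with rfl | rfl
    · exact ha
    · exact hb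

theorem theta_mem (C : Set (Setoid A)) (hInf : ∀ S ⊆ C, sInf S ∈ C) (a b : A) :
    theta C a b ∈ C := hInf _ (fun s hs => hs.1)

theorem theta_rel (C : Set (Setoid A)) (a b : A) : (theta C a b).r a b :=
  fun _s hs => hs.2

theorem theta_le (C : Set (Setoid A)) {s : Setoid A} (hs : s ∈ C) {a b : A} (h : s.r a b) :
    theta C a b ≤ s := sInf_le ⟨hs, h⟩

/-- relative primality in `C` -/
def CPrime (C : Set (Setoid A)) (a b : Setoid A) : Prop :=
  a ∈ C ∧ b ∈ C ∧ a < b ∧ ∀ γ ∈ C, a ≤ γ → γ ≤ b → γ = a ∨ γ = b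

theorem cmi_prime {C : Set (Setoid A)} {φ p : Setoid A} (h : IsCMI C φ p) : CPrime C φ p := by
  refine ⟨h.1, h.2.1, h.2.2.1, fun γ hγ hφγ hγp => ?_⟩
  rcases eq_or_lt_of_le hφγ with he | hlt
  · exact Or.inl he.symm
  · exact Or.inr (le_antisymm hγp (h.2.2.2 γ hγ hlt))

theorem cover_unique {C : Set (Setoid A)} {φ p q : Setoid A}
    (h1 : IsCMI C φ p) (h2 : IsCMI C φ q) : p = q :=
  le_antisymm (h1.2.2.2 q h2.2.1 h2.2.2.1) (h2.2.2.2 p h1.2.1 h1.2.2.1)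

theorem cmi_sup_eq (C : Set (Setoid A)) (hSup : ∀ S ⊆ C, sSup S ∈ C)
    {p θ θ' : Setoid A} (h : IsCMI C θ p) (h' : IsCMI C θ' p) (hne : θ ≠ θ') :
    θ ⊔ θ' = p := by
  have hn : ¬ θ' ≤ θ := by
    intro hle
    rcases eq_or_lt_of_le hle with he | hlt
    · exact hne he.symm
    · exact h.2.2.1.not_ge (h'.2.2.2 θ h.1 hlt)
  have hlt : θ < θ ⊔ θ' := lt_of_le_of_ne le_sup_left (fun he => hn (le_sup_right.trans he.ge))
  exact le_antisymm (sup_le h.2.2.1.le h'.2.2.1.le)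
    (h.2.2.2 _ (mem_sup2 C hSup h.1 h'.1) hlt)

theorem primeUp (C : Set (Setoid A)) (hInf : ∀ S ⊆ C, sInf S ∈ C)
    (hM : ∀ x ∈ C, ∀ y ∈ C, ∀ z ∈ C, x ≤ z → x ⊔ y ⊓ z = (x ⊔ y) ⊓ z)
    {a b c d : Setoid A} (hc : c ∈ C) (hd : d ∈ C)
    (hpr : CPrime C a b) (hac : a = b ⊓ c) (hd' : d = b ⊔ c) : CPrime C c d := by
  obtain ⟨haC, hbC, hab, hmax⟩ := hpr
  have hcd : c ≤ d := hd' ▸ le_sup_right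
  refine ⟨hc, hd, lt_of_le_of_ne hcd ?_, ?_⟩
  · intro he
    have hbc : b ≤ c := by
      rw [he, hd']; exact le_sup_left
    exact hab.ne (hac.trans (inf_eq_left.mpr hbc))
  · intro γ hγC hcγ hγd
    have hmod : c ⊔ b ⊓ γ = (c ⊔ b) ⊓ γ := hM c hc b hbC γ hγC hcγ
    have hcb : c ⊔ b = d := by rw [sup_comm, hd']
    have hdγ : (c ⊔ b) ⊓ γ = γ := by rw [hcb]; exact inf_eq_right.mpr hγd
    have hγ' : c ⊔ b ⊓ γ = γ := hmod.trans hdγ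
    have hbγmem : b ⊓ γ ∈ C := mem_inf2 C hInf hbC hγC
    have h1 : a ≤ b ⊓ γ := hac.le.trans (inf_le_inf_left b hcγ)
    rcases hmax (b ⊓ γ) hbγmem h1 inf_le_left with he | he
    · left
      have hca : a ≤ c := hac ▸ inf_le_right
      rw [← hγ', he, sup_eq_left.mpr hca]
    · right
      have : b ≤ γ := he ▸ inf_le_right
      exact le_antisymm hγd (hd' ▸ sup_le this hcγ)

theorem primeDown (C : Set (Setoid A)) (hSup : ∀ S ⊆ C, sSup S ∈ C)
    (hM : ∀ x ∈ C, ∀ y ∈ C, ∀ z ∈ C, x ≤ z → x ⊔ y ⊓ z = (x ⊔ y) ⊓ z)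
    {a b c d : Setoid A} (haC : a ∈ C) (hbC : b ∈ C)
    (hpr : CPrime C c d) (hac : a = b ⊓ c) (hd' : d = b ⊔ c) : CPrime C a b := by
  obtain ⟨hcC, hdC, hcd, hmax⟩ := hpr
  have hab : a ≤ b := hac ▸ inf_le_left
  refine ⟨haC, hbC, lt_of_le_of_ne hab ?_, ?_⟩
  · intro he
    have hbc : b ≤ c := by rw [← he, hac]; exact inf_le_right
    exact hcd.ne ((hd'.trans (sup_eq_right.mpr hbc)).symm)
  · intro γ hγC haγ hγb
    have hmod : γ ⊔ c ⊓ b = (γ ⊔ c) ⊓ b := hM γ hγC c hcC b hbC hγb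
    have hcb : c ⊓ b = a := by rw [inf_comm, ← hac]
    have hγ' : γ = (γ ⊔ c) ⊓ b := by
      rw [← hmod, hcb, sup_eq_left.mpr haγ]
    have hγcmem : γ ⊔ c ∈ C := mem_sup2 C hSup hγC hcC
    have hbd : b ≤ d := hd' ▸ le_sup_left
    have hγcd : γ ⊔ c ≤ d := sup_le (hγb.trans hbd) (hd' ▸ le_sup_right)
    rcases hmax (γ ⊔ c) hγcmem le_sup_right hγcd with he | he
    · left
      have hγc : γ ≤ c := le_sup_left.trans he.le
      exact le_antisymm ((le_inf hγb hγc).trans hac.ge) haγ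
    · right
      rw [hγ', he, inf_eq_right.mpr hbd]

theorem xor_flip {a b c : Prop} (h : ¬(a ↔ b)) (h2 : ¬(c ↔ b)) : c ↔ a := by tauto

theorem tri_iff {a b c : Prop} : (a ↔ b) ↔ ((a ↔ c) ↔ (b ↔ c)) := by tauto

theorem xor_trans {a b c : Prop} (h1 : ¬(a ↔ b)) (h2 : ¬(a ↔ c)) : b ↔ c := by tauto

theorem lemD (one : A) (C : Set (Setoid A))
    (hInf : ∀ S ⊆ C, sInf S ∈ C) (hSup : ∀ S ⊆ C, sSup S ∈ C)
    (hO : ∀ α ∈ C, ∀ a b : A, α ⊔ theta C one a = α ⊔ theta C one b ↔ α.r a b)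
    {p θ : Setoid A} (hθ : IsCMI C θ p) :
    ∀ x y : A, θ.r x y ↔ (p.r x y ∧ (θ.r one x ↔ θ.r one y)) := by
  intro x y
  have hθp : θ ≤ p := hθ.2.2.1.le
  constructor
  · intro h
    exact ⟨rle hθp h, ⟨fun h1 => θ.trans' h1 h, fun h1 => θ.trans' h1 (θ.symm' h)⟩⟩
  · rintro ⟨hpxy, hiff⟩
    by_cases h1x : θ.r one x
    · exact θ.trans' (θ.symm' h1x) (hiff.mp h1x)
    · have h1y : ¬ θ.r one y := fun h => h1x (hiff.mpr h)
      have key : ∀ z : A, ¬ θ.r one z → θ ⊔ theta C one z = p ⊔ theta C one z := by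
        intro z hz
        have hθz : ¬ theta C one z ≤ θ := fun hle => hz (rle hle (theta_rel C one z))
        have hlt : θ < θ ⊔ theta C one z :=
          lt_of_le_of_ne le_sup_left (fun h => hθz (le_sup_right.trans h.ge))
        have hmem : θ ⊔ theta C one z ∈ C := mem_sup2 C hSup hθ.1 (theta_mem C hInf one z)
        have hple : p ≤ θ ⊔ theta C one z := hθ.2.2.2 _ hmem hlt
        exact le_antisymm (sup_le (hθp.trans le_sup_left) le_sup_right)
          (sup_le hple le_sup_right)
      have e1 := key x h1x
      have e2 := key y h1y
      have e3 : p ⊔ theta C one x = p ⊔ theta C one y := (hO p hθ.2.1 x y).mpr hpxy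
      exact (hO θ hθ.1 x y).mp (e1.trans (e3.trans e2.symm))

theorem split_facts (one : A) (C : Set (Setoid A))
    (hInf : ∀ S ⊆ C, sInf S ∈ C) (hSup : ∀ S ⊆ C, sSup S ∈ C)
    (hO : ∀ α ∈ C, ∀ a b : A, α ⊔ theta C one a = α ⊔ theta C one b ↔ α.r a b)
    {p θ : Setoid A} (hθ : IsCMI C θ p) {x y : A}
    (hp : p.r x y) (hn : ¬ θ.r x y) :
    p.r one x ∧ p.r one y ∧ ¬(θ.r one x ↔ θ.r one y) := by
  have D := lemD one C hInf hSup hO hθ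
  have hs : ¬ (θ.r one x ↔ θ.r one y) := fun h => hn ((D x y).mpr ⟨hp, h⟩)
  have hθp : θ ≤ p := hθ.2.2.1.le
  have h1x : p.r one x := by
    by_contra h1x
    have h1y : ¬ p.r one y := fun h => h1x (p.trans' h (p.symm' hp))
    exact hs (iff_of_false (fun h => h1x (rle hθp h)) (fun h => h1y (rle hθp h)))
  exact ⟨h1x, p.trans' h1x hp, hs⟩

theorem maxAvoid (C : Set (Setoid A)) (hSup : ∀ S ⊆ C, sSup S ∈ C)
    (hDir : ∀ D ⊆ C, D.Nonempty → DirectedOn (· ≤ ·) D →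
      ∀ x y : A, (sSup D).r x y ↔ ∃ s ∈ D, s.r x y)
    {ρ : Setoid A} (hρ : ρ ∈ C) {c d : A} (hcd : ¬ ρ.r c d) :
    ∃ θ ∈ C, ρ ≤ θ ∧ ¬ θ.r c d ∧ ∀ γ ∈ C, θ ≤ γ → ¬ γ.r c d → γ = θ := by
  have hz := zorn_le_nonempty₀ {s | s ∈ C ∧ ¬ s.r c d} ?side ρ ⟨hρ, hcd⟩
  · obtain ⟨θ, hρθ, hmax⟩ := hz
    exact ⟨θ, hmax.prop.1, hρθ, hmax.prop.2,
      fun γ hγ hθγ hγcd => hmax.eq_of_ge ⟨hγ, hγcd⟩ hθγ⟩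
  case side =>
    intro ch hch hchain y hy
    refine ⟨sSup ch, ⟨hSup ch (fun s hs => (hch hs).1), ?_⟩, fun z hz => le_sSup hz⟩
    rw [hDir ch (fun s hs => (hch hs).1) ⟨y, hy⟩ hchain.directedOn c d]
    rintro ⟨s, hs, hscd⟩
    exact (hch hs).2 hscd

theorem persp_symm {C : Set (Setoid A)} {I J : Setoid A × Setoid A} (h : Persp C I J) :
    Persp C J I :=
  ⟨h.2.2.1, h.2.2.2.1, h.1, h.2.1, h.2.2.2.2.symm⟩

theorem proj_symm {C : Set (Setoid A)} {I J : Setoid A × Setoid A} (h : Projective C I J) :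
    Projective C J I :=
  (@Relation.ReflTransGen.stdSymm _ (Persp C) ⟨fun _ _ hh => persp_symm hh⟩).symm _ _ h

theorem ext_lemma (one : A) (C : Set (Setoid A))
    (hInf : ∀ S ⊆ C, sInf S ∈ C) (hSup : ∀ S ⊆ C, sSup S ∈ C)
    (hDir : ∀ D ⊆ C, D.Nonempty → DirectedOn (· ≤ ·) D →
      ∀ x y : A, (sSup D).r x y ↔ ∃ s ∈ D, s.r x y)
    (hM : ∀ x ∈ C, ∀ y ∈ C, ∀ z ∈ C, x ≤ z → x ⊔ y ⊓ z = (x ⊔ y) ⊓ z)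
    (hP : ∀ φ ψ p q : Setoid A, IsCMI C φ p → IsCMI C ψ q →
      Projective C (φ, p) (ψ, q) → p = q)
    {φ p χ π : Setoid A} (hφ : IsCMI C φ p)
    (hpr : CPrime C χ π) (hproj : Projective C (φ, p) (χ, π))
    {c d : A} (hπcd : π.r c d) (hχcd : ¬ χ.r c d) :
    ∃ θ, IsCMI C θ p ∧ Projective C (φ, p) (θ, p) ∧ χ ≤ θ ∧ ¬ θ.r c d ∧ θ ⊓ π = χ := by
  obtain ⟨hχC, hπC, hχπ, hmax⟩ := hpr
  obtain ⟨θ, hθC, hχθ, hθcd, hθmax⟩ := maxAvoid C hSup hDir hχC hχcd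
  have hqC : θ ⊔ theta C c d ∈ C := mem_sup2 C hSup hθC (theta_mem C hInf c d)
  have hθq : θ < θ ⊔ theta C c d :=
    lt_of_le_of_ne le_sup_left
      (fun h => hθcd (rle (le_sup_right.trans h.ge) (theta_rel C c d)))
  have hcmi : IsCMI C θ (θ ⊔ theta C c d) := by
    refine ⟨hθC, hqC, hθq, fun β hβ hθβ => ?_⟩
    have hβcd : β.r c d := by
      by_contra hbc
      exact (ne_of_gt hθβ) (hθmax β hβ hθβ.le hbc)
    exact sup_le hθβ.le (theta_le C hβ hβcd)
  have hθπ : θ ⊓ π = χ := by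
    rcases hmax (θ ⊓ π) (mem_inf2 C hInf hθC hπC) (le_inf hχθ hχπ.le) inf_le_right with h | h
    · exact h
    · exact absurd (rle (le_of_eq h.symm |>.trans inf_le_left) hπcd) hθcd
  have hprθ : CPrime C θ (θ ⊔ π) :=
    primeUp C hInf hM hθC (mem_sup2 C hSup hθC hπC) ⟨hχC, hπC, hχπ, hmax⟩
      (by rw [inf_comm, hθπ]) (by rw [sup_comm])
  have hlt2 : θ < θ ⊔ π :=
    lt_of_le_of_ne le_sup_left (fun h => hθcd (rle (le_sup_right.trans h.ge) hπcd))
  have hqle : θ ⊔ theta C c d ≤ θ ⊔ π := hcmi.2.2.2 _ (mem_sup2 C hSup hθC hπC) hlt2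
  have hq2 : θ ⊔ theta C c d = θ ⊔ π := by
    rcases hprθ.2.2.2 _ hqC hθq.le hqle with h | h
    · exact absurd h (ne_of_gt hθq)
    · exact h
  have hcmi2 : IsCMI C θ (θ ⊔ π) := hq2 ▸ hcmi
  have hpersp : Persp C (χ, π) (θ, θ ⊔ π) :=
    ⟨hχC, hπC, hθC, mem_sup2 C hSup hθC hπC, Or.inl ⟨by rw [inf_comm, hθπ], by rw [sup_comm]⟩⟩
  have hproj2 : Projective C (φ, p) (θ, θ ⊔ π) := Relation.ReflTransGen.tail hproj hpersp
  have hpq : p = θ ⊔ π := hP φ θ p (θ ⊔ π) hφ hcmi2 hproj2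
  rw [← hpq] at hcmi2 hproj2
  exact ⟨θ, hcmi2, hproj2, hχθ, hθcd, hθπ⟩

theorem skew (one : A) (C : Set (Setoid A))
    (hInf : ∀ S ⊆ C, sInf S ∈ C) (hSup : ∀ S ⊆ C, sSup S ∈ C)
    (hDir : ∀ D ⊆ C, D.Nonempty → DirectedOn (· ≤ ·) D →
      ∀ x y : A, (sSup D).r x y ↔ ∃ s ∈ D, s.r x y)
    (hM : ∀ x ∈ C, ∀ y ∈ C, ∀ z ∈ C, x ≤ z → x ⊔ y ⊓ z = (x ⊔ y) ⊓ z)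
    (hR : ∀ α ∈ C, ∀ β ∈ C, (∀ x : A, α.r one x ↔ β.r one x) → α = β)
    (hP : ∀ φ ψ p q : Setoid A, IsCMI C φ p → IsCMI C ψ q →
      Projective C (φ, p) (ψ, q) → p = q)
    {φ p B : Setoid A}
    (hφ : IsCMI C φ p) (hB : B ∈ C) (hBp : B < p) (hpr : CPrime C B p)
    (hproj : Projective C (φ, p) (B, p)) : IsCMI C B p := by
  refine ⟨hB, hφ.2.1, hBp, ?_⟩
  intro γ hγC hBγ
  rcases hpr.2.2.2 (γ ⊓ p) (mem_inf2 C hInf hγC hφ.2.1) (le_inf hBγ.le hBp.le)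
      inf_le_right with h | h
  swap
  · exact h ▸ inf_le_left
  · exfalso
    have hne : γ ≠ B := ne_of_gt hBγ
    have hx : ¬ ∀ x, γ.r one x ↔ B.r one x := fun hall => hne (hR γ hγC B hB hall)
    have hx2 : ∃ x, ¬ (γ.r one x ↔ B.r one x) := by
      by_contra hc
      push_neg at hc
      exact hx fun x => hc x
    obtain ⟨x, hx3⟩ := hx2
    have hBx : ¬ B.r one x := fun hh => hx3 (iff_of_true (rle hBγ.le hh) hh)
    have hγx : γ.r one x := by
      by_contra hh
      exact hx3 (iff_of_false hh hBx)
    have hpx : ¬ p.r one x := fun hpx => hBx (h ▸ (⟨hγx, hpx⟩ : (γ ⊓ p).r one x))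
    have hγ₀C : B ⊔ theta C one x ∈ C := mem_sup2 C hSup hB (theta_mem C hInf one x)
    have hγ₀γ : B ⊔ theta C one x ≤ γ := sup_le hBγ.le (theta_le C hγC hγx)
    have hγ₀p : (B ⊔ theta C one x) ⊓ p = B :=
      le_antisymm ((inf_le_inf_right p hγ₀γ).trans h.le) (le_inf le_sup_left hBp.le)
    have hWC : p ⊔ (B ⊔ theta C one x) ∈ C := mem_sup2 C hSup hφ.2.1 hγ₀C
    have hγ₀W : B ⊔ theta C one x < p ⊔ (B ⊔ theta C one x) := by
      refine lt_of_le_of_ne le_sup_right ?_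
      intro hEq
      have h1 : p ≤ B ⊔ theta C one x := le_sup_left.trans hEq.ge
      have h2 : p ≤ B := by rw [← hγ₀p]; exact le_inf h1 le_rfl
      exact hBp.not_ge h2
    have hprW : CPrime C (B ⊔ theta C one x) (p ⊔ (B ⊔ theta C one x)) :=
      primeUp C hInf hM hγ₀C hWC hpr (by rw [inf_comm, hγ₀p]) rfl
    obtain ⟨u, v, hWuv, hγ₀uv⟩ := lt_pair hγ₀W
    have hpersp : Persp C (B, p) (B ⊔ theta C one x, p ⊔ (B ⊔ theta C one x)) :=
      ⟨hB, hφ.2.1, hγ₀C, hWC, Or.inl ⟨by rw [inf_comm, hγ₀p], rfl⟩⟩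
    have hproj2 := Relation.ReflTransGen.tail hproj hpersp
    obtain ⟨θ, hθcmi, _, hγ₀θ, hθuv, hθW⟩ :=
      ext_lemma one C hInf hSup hDir hM hP hφ hprW hproj2 hWuv hγ₀uv
    exact hpx (rle hθcmi.2.2.1.le (rle (le_sup_right.trans hγ₀θ) (theta_rel C one x)))

/-- the candidate Bul relation as a setoid, via 1-class indicators -/
def BulS (one : A) (p θ θ' : Setoid A) : Setoid A :=
  ⟨fun x y => p.r x y ∧ ((θ.r one x ↔ θ.r one y) ↔ (θ'.r one x ↔ θ'.r one y)),
   ⟨fun x => ⟨p.refl' x, by tauto⟩,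
    fun {x y} h => ⟨p.symm' h.1, by tauto⟩,
    fun {x y z} h1 h2 => ⟨p.trans' h1.1 h2.1, by tauto⟩⟩⟩

theorem bulS_iff (one : A) (C : Set (Setoid A))
    (hInf : ∀ S ⊆ C, sInf S ∈ C) (hSup : ∀ S ⊆ C, sSup S ∈ C)
    (hO : ∀ α ∈ C, ∀ a b : A, α ⊔ theta C one a = α ⊔ theta C one b ↔ α.r a b)
    {p θ θ' : Setoid A} (hθ : IsCMI C θ p) (hθ' : IsCMI C θ' p) (x y : A) :
    (BulS one p θ θ').r x y ↔ Bul p θ θ' x y := by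
  have D := lemD one C hInf hSup hO hθ x y
  have D' := lemD one C hInf hSup hO hθ' x y
  show (p.r x y ∧ ((θ.r one x ↔ θ.r one y) ↔ (θ'.r one x ↔ θ'.r one y))) ↔
    (p.r x y ∧ (θ.r x y ↔ θ'.r x y))
  constructor
  · rintro ⟨hp, hiff⟩
    refine ⟨hp, ?_⟩
    constructor
    · intro h
      exact D'.mpr ⟨hp, hiff.mp (D.mp h).2⟩
    · intro h
      exact D.mpr ⟨hp, hiff.mpr (D'.mp h).2⟩
  · rintro ⟨hp, hiff⟩
    refine ⟨hp, ?_⟩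
    constructor
    · intro h
      exact (D'.mp (hiff.mp (D.mpr ⟨hp, h⟩))).2
    · intro h
      exact (D.mp (hiff.mpr (D'.mpr ⟨hp, h⟩))).2

theorem claimB (one : A) (C : Set (Setoid A))
    (hInf : ∀ S ⊆ C, sInf S ∈ C) (hSup : ∀ S ⊆ C, sSup S ∈ C)
    (hO : ∀ α ∈ C, ∀ a b : A, α ⊔ theta C one a = α ⊔ theta C one b ↔ α.r a b)
    {p θ θ' B : Setoid A}
    (hθ : IsCMI C θ p) (hθ' : IsCMI C θ' p) (hB : IsCMI C B p) (hne : θ ≠ θ')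
    (h1 : B ⊓ θ = θ ⊓ θ') (h2 : B ⊓ θ' = θ ⊓ θ') :
    ∀ x y, B.r x y ↔ Bul p θ θ' x y := by
  have Dθ := lemD one C hInf hSup hO hθ
  have Dθ' := lemD one C hInf hSup hO hθ'
  have DB := lemD one C hInf hSup hO hB
  intro x y
  constructor
  · intro hBxy
    refine ⟨rle hB.2.2.1.le hBxy, ?_⟩
    constructor
    · intro hθxy
      have hh : (B ⊓ θ).r x y := ⟨hBxy, hθxy⟩
      rw [h1] at hh
      exact hh.2
    · intro hh'
      have hh : (B ⊓ θ').r x y := ⟨hBxy, hh'⟩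
      rw [h2] at hh
      exact hh.1
  · rintro ⟨hpxy, hiff⟩
    by_cases hθxy : θ.r x y
    · have hθ'xy := hiff.mp hθxy
      have hh : (θ ⊓ θ').r x y := ⟨hθxy, hθ'xy⟩
      rw [← h1] at hh
      exact hh.1
    · have hθ'xy : ¬ θ'.r x y := fun h => hθxy (hiff.mpr h)
      obtain ⟨hp1x, hp1y, hsθ⟩ := split_facts one C hInf hSup hO hθ hpxy hθxy
      have hsθ' : ¬ (θ'.r one x ↔ θ'.r one y) :=
        (split_facts one C hInf hSup hO hθ' hpxy hθ'xy).2.2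
      by_cases hz : ∃ z, p.r one z ∧ (θ.r one z ↔ θ.r one x) ∧ (θ'.r one z ↔ θ'.r one y)
      · obtain ⟨z, hpz, hzθ, hzθ'⟩ := hz
        have hpxz : p.r x z := p.trans' (p.symm' hp1x) hpz
        have hpzy : p.r z y := p.trans' (p.symm' hpz) hp1y
        have hθxz : θ.r x z := (Dθ x z).mpr ⟨hpxz, hzθ.symm⟩
        have hθ'xz : ¬ θ'.r x z := by
          intro hc
          exact hsθ' (((Dθ' x z).mp hc).2.trans hzθ')
        have hBxz : ¬ B.r x z := by
          intro hc
          have hh : (B ⊓ θ).r x z := ⟨hc, hθxz⟩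
          rw [h1] at hh
          exact hθ'xz hh.2
        have hθ'zy : θ'.r z y := (Dθ' z y).mpr ⟨hpzy, hzθ'⟩
        have hθzy : ¬ θ.r z y := by
          intro hc
          exact hsθ (hzθ.symm.trans ((Dθ z y).mp hc).2)
        have hBzy : ¬ B.r z y := by
          intro hc
          have hh : (B ⊓ θ').r z y := ⟨hc, hθ'zy⟩
          rw [h2] at hh
          exact hθzy hh.1
        have hBxz' : ¬ (B.r one x ↔ B.r one z) := fun h => hBxz ((DB x z).mpr ⟨hpxz, h⟩)
        have hBzy' : ¬ (B.r one z ↔ B.r one y) := fun h => hBzy ((DB z y).mpr ⟨hpzy, h⟩)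
        refine (DB x y).mpr ⟨hpxy, ?_⟩
        clear * - hBxz' hBzy'
        tauto
      · by_cases hz' : ∃ z, p.r one z ∧ (θ.r one z ↔ θ.r one y) ∧ (θ'.r one z ↔ θ'.r one x)
        · obtain ⟨z, hpz, hzθ, hzθ'⟩ := hz'
          have hpzy : p.r z y := p.trans' (p.symm' hpz) hp1y
          have hpxz : p.r x z := p.trans' (p.symm' hp1x) hpz
          have hθzy : θ.r z y := (Dθ z y).mpr ⟨hpzy, hzθ⟩
          have hθ'zy : ¬ θ'.r z y := by
            intro hc
            exact hsθ' (hzθ'.symm.trans ((Dθ' z y).mp hc).2)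
          have hBzy : ¬ B.r z y := by
            intro hc
            have hh : (B ⊓ θ).r z y := ⟨hc, hθzy⟩
            rw [h1] at hh
            exact hθ'zy hh.2
          have hθ'xz : θ'.r x z := (Dθ' x z).mpr ⟨hpxz, hzθ'.symm⟩
          have hθxz : ¬ θ.r x z := by
            intro hc
            exact hsθ (((Dθ x z).mp hc).2.trans hzθ)
          have hBxz : ¬ B.r x z := by
            intro hc
            have hh : (B ⊓ θ').r x z := ⟨hc, hθ'xz⟩
            rw [h2] at hh
            exact hθxz hh.1
          have hBxz' : ¬ (B.r one x ↔ B.r one z) := fun h => hBxz ((DB x z).mpr ⟨hpxz, h⟩)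
          have hBzy' : ¬ (B.r one z ↔ B.r one y) := fun h => hBzy ((DB z y).mpr ⟨hpzy, h⟩)
          refine (DB x y).mpr ⟨hpxy, ?_⟩
          clear * - hBxz' hBzy'
          tauto
        · exfalso
          apply hne
          apply Setoid.ext
          intro u v
          show θ.r u v ↔ θ'.r u v
          by_cases hpuv : p.r u v
          · by_cases hp1u : p.r one u
            · have hp1v : p.r one v := p.trans' hp1u hpuv
              have Hu : ¬((θ.r one u ↔ θ.r one x) ∧ (θ'.r one u ↔ θ'.r one y)) :=
                fun hand => hz ⟨u, hp1u, hand.1, hand.2⟩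
              have Hv : ¬((θ.r one v ↔ θ.r one x) ∧ (θ'.r one v ↔ θ'.r one y)) :=
                fun hand => hz ⟨v, hp1v, hand.1, hand.2⟩
              have Hu' : ¬((θ.r one u ↔ θ.r one y) ∧ (θ'.r one u ↔ θ'.r one x)) :=
                fun hand => hz' ⟨u, hp1u, hand.1, hand.2⟩
              have Hv' : ¬((θ.r one v ↔ θ.r one y) ∧ (θ'.r one v ↔ θ'.r one x)) :=
                fun hand => hz' ⟨v, hp1v, hand.1, hand.2⟩
              have keyu : (θ.r one u ↔ θ.r one x) ↔ (θ'.r one u ↔ θ'.r one x) :=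
                ⟨fun h => xor_flip hsθ' (fun hq => Hu ⟨h, hq⟩),
                 fun h => xor_flip hsθ (fun hq => Hu' ⟨hq, h⟩)⟩
              have keyv : (θ.r one v ↔ θ.r one x) ↔ (θ'.r one v ↔ θ'.r one x) :=
                ⟨fun h => xor_flip hsθ' (fun hq => Hv ⟨h, hq⟩),
                 fun h => xor_flip hsθ (fun hq => Hv' ⟨hq, h⟩)⟩
              rw [Dθ u v, Dθ' u v]
              have main : (θ.r one u ↔ θ.r one v) ↔ (θ'.r one u ↔ θ'.r one v) :=
                tri_iff.trans ((iff_congr keyu keyv).trans tri_iff.symm)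
              constructor
              · rintro ⟨-, hh⟩
                exact ⟨hpuv, main.mp hh⟩
              · rintro ⟨-, hh⟩
                exact ⟨hpuv, main.mpr hh⟩
            · have hp1v : ¬ p.r one v := fun h => hp1u (p.trans' h (p.symm' hpuv))
              have f1 : ¬ θ.r one u := fun h => hp1u (rle hθ.2.2.1.le h)
              have f2 : ¬ θ.r one v := fun h => hp1v (rle hθ.2.2.1.le h)
              have f3 : ¬ θ'.r one u := fun h => hp1u (rle hθ'.2.2.1.le h)
              have f4 : ¬ θ'.r one v := fun h => hp1v (rle hθ'.2.2.1.le h)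
              rw [Dθ u v, Dθ' u v]
              exact iff_of_true ⟨hpuv, iff_of_false f1 f2⟩ ⟨hpuv, iff_of_false f3 f4⟩
          · constructor
            · intro h
              exact absurd (rle hθ.2.2.1.le h) hpuv
            · intro h
              exact absurd (rle hθ'.2.2.1.le h) hpuv

theorem common (one : A) (C : Set (Setoid A))
    (hInf : ∀ S ⊆ C, sInf S ∈ C) (hSup : ∀ S ⊆ C, sSup S ∈ C)
    (hDir : ∀ D ⊆ C, D.Nonempty → DirectedOn (· ≤ ·) D →
      ∀ x y : A, (sSup D).r x y ↔ ∃ s ∈ D, s.r x y)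
    (hM : ∀ x ∈ C, ∀ y ∈ C, ∀ z ∈ C, x ≤ z → x ⊔ y ⊓ z = (x ⊔ y) ⊓ z)
    (hO : ∀ α ∈ C, ∀ a b : A, α ⊔ theta C one a = α ⊔ theta C one b ↔ α.r a b)
    (hR : ∀ α ∈ C, ∀ β ∈ C, (∀ x : A, α.r one x ↔ β.r one x) → α = β)
    (hP : ∀ φ ψ p q : Setoid A, IsCMI C φ p → IsCMI C ψ q →
      Projective C (φ, p) (ψ, q) → p = q)
    {φ p M₀ M₂ W : Setoid A}
    (hφ : IsCMI C φ p) (h0 : IsCMI C M₀ p) (h2 : IsCMI C M₂ p) (hne : M₀ ≠ M₂)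
    (hproj2 : Projective C (φ, p) (M₂, p))
    (hWC : W ∈ C) (hW : ∀ x y, W.r x y → Bul p M₀ M₂ x y)
    {u v : A} (hWuv : W.r u v) (h0uv : ¬ M₀.r u v) :
    ∃ X, IsCMI C X p ∧ Projective C (φ, p) (X, p) ∧ ∀ x y, X.r x y ↔ Bul p M₀ M₂ x y := by
  have D0 := lemD one C hInf hSup hO h0
  have D2 := lemD one C hInf hSup hO h2
  have hτC : M₀ ⊓ M₂ ∈ C := mem_inf2 C hInf h0.1 h2.1
  have hXC : M₀ ⊓ M₂ ⊔ W ∈ C := mem_sup2 C hSup hτC hWC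
  -- X ≤ BulS
  have hXle : M₀ ⊓ M₂ ⊔ W ≤ BulS one p M₀ M₂ := by
    refine sup_le (le_mk fun x y hxy => ?_) (le_mk fun x y hxy => ?_)
    · exact (bulS_iff one C hInf hSup hO h0 h2 x y).mpr
        ⟨rle h0.2.2.1.le hxy.1, iff_of_true hxy.1 hxy.2⟩
    · exact (bulS_iff one C hInf hSup hO h0 h2 x y).mpr (hW x y hxy)
  have hXBul : ∀ x y, (M₀ ⊓ M₂ ⊔ W).r x y → Bul p M₀ M₂ x y :=
    fun x y h => (bulS_iff one C hInf hSup hO h0 h2 x y).mp (rle hXle h)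
  have hXp : M₀ ⊓ M₂ ⊔ W ≤ p := le_mk fun x y h => (hXBul x y h).1
  have hX0 : (M₀ ⊓ M₂ ⊔ W) ⊓ M₀ = M₀ ⊓ M₂ := by
    apply le_antisymm
    · exact le_mk fun x y h => ⟨h.2, ((hXBul x y h.1).2).mp h.2⟩
    · exact le_inf le_sup_left inf_le_left
  have hX2 : (M₀ ⊓ M₂ ⊔ W) ⊓ M₂ = M₀ ⊓ M₂ := by
    apply le_antisymm
    · exact le_mk fun x y h => ⟨((hXBul x y h.1).2).mpr h.2, h.2⟩
    · exact le_inf le_sup_left inf_le_right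
  have h2uv : ¬ M₂.r u v := fun h => h0uv ((hW u v hWuv).2.mpr h)
  have hpuv : p.r u v := (hW u v hWuv).1
  obtain ⟨hp1u, hp1v, hsu0⟩ := split_facts one C hInf hSup hO h0 hpuv h0uv
  have hsu2 : ¬ (M₂.r one u ↔ M₂.r one v) :=
    (split_facts one C hInf hSup hO h2 hpuv h2uv).2.2
  have hjoin : ∀ (M : Setoid A), IsCMI C M p →
      (∀ x y, M.r x y ↔ (p.r x y ∧ (M.r one x ↔ M.r one y))) →
      ¬ (M.r one u ↔ M.r one v) → (M₀ ⊓ M₂ ⊔ W) ⊔ M = p := by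
    intro M hMcmi DM hMuv
    apply le_antisymm (sup_le hXp hMcmi.2.2.1.le)
    refine le_mk fun x y hpxy => ?_
    by_cases hMxy : M.r x y
    · exact rle le_sup_right hMxy
    · obtain ⟨hp1x, hp1y, hsx⟩ := split_facts one C hInf hSup hO hMcmi hpxy hMxy
      by_cases hw : M.r one x ↔ M.r one u
      · have s1 : M.r x u := (DM x u).mpr ⟨p.trans' (p.symm' hp1x) hp1u, hw⟩
        have s2 : (M₀ ⊓ M₂ ⊔ W).r u v := rle le_sup_right hWuv
        have hxv : ¬ (M.r one x ↔ M.r one v) := fun hq => hMuv (hw.symm.trans hq)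
        have s3 : M.r v y := (DM v y).mpr ⟨p.trans' (p.symm' hp1v) hp1y,
          xor_trans hxv hsx⟩
        exact (M₀ ⊓ M₂ ⊔ W ⊔ M).trans' (rle le_sup_right s1)
          ((M₀ ⊓ M₂ ⊔ W ⊔ M).trans' (rle le_sup_left s2) (rle le_sup_right s3))
      · have hw' : ¬ (M.r one u ↔ M.r one x) := fun hq => hw hq.symm
        have s1 : M.r x v := (DM x v).mpr ⟨p.trans' (p.symm' hp1x) hp1v,
          xor_trans hw' hMuv⟩
        have s2 : (M₀ ⊓ M₂ ⊔ W).r v u := (M₀ ⊓ M₂ ⊔ W).symm' (rle le_sup_right hWuv)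
        have s3 : M.r u y := (DM u y).mpr ⟨p.trans' (p.symm' hp1u) hp1y,
          xor_trans hw hsx⟩
        exact (M₀ ⊓ M₂ ⊔ W ⊔ M).trans' (rle le_sup_right s1)
          ((M₀ ⊓ M₂ ⊔ W ⊔ M).trans' (rle le_sup_left s2) (rle le_sup_right s3))
  have hj0 : (M₀ ⊓ M₂ ⊔ W) ⊔ M₀ = p := hjoin M₀ h0 D0 hsu0
  have hj2 : (M₀ ⊓ M₂ ⊔ W) ⊔ M₂ = p := hjoin M₂ h2 D2 hsu2
  have hsup02 : M₀ ⊔ M₂ = p := cmi_sup_eq C hSup h0 h2 hne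
  have hprτ : CPrime C (M₀ ⊓ M₂) M₀ :=
    primeDown C hSup hM hτC h0.1 (cmi_prime h2) rfl hsup02.symm
  have hprX : CPrime C (M₀ ⊓ M₂ ⊔ W) p :=
    primeUp C hInf hM hXC hφ.2.1 hprτ
      (by rw [inf_comm M₀ (M₀ ⊓ M₂ ⊔ W), hX0]) (by rw [sup_comm M₀ (M₀ ⊓ M₂ ⊔ W), hj0])
  have hXltp : M₀ ⊓ M₂ ⊔ W < p := by
    refine lt_of_le_of_ne hXp ?_
    intro hEq
    have hτ0 : M₀ ⊓ M₂ = M₀ := by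
      rw [← hX0, hEq, inf_eq_right.mpr h0.2.2.1.le]
    have hle : M₀ ≤ M₂ := inf_eq_left.mp hτ0
    exact h2.2.2.1.not_ge (h0.2.2.2 M₂ h2.1 (lt_of_le_of_ne hle hne))
  have hpersp1 : Persp C (M₀ ⊓ M₂ ⊔ W, p) (M₀ ⊓ M₂, M₀) :=
    ⟨hXC, hφ.2.1, hτC, h0.1, Or.inr ⟨by rw [inf_comm M₀ (M₀ ⊓ M₂ ⊔ W), hX0],
      by rw [sup_comm M₀ (M₀ ⊓ M₂ ⊔ W), hj0]⟩⟩
  have hpersp2 : Persp C (M₀ ⊓ M₂, M₀) (M₂, p) :=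
    ⟨hτC, h0.1, h2.1, hφ.2.1, Or.inl ⟨rfl, hsup02.symm⟩⟩
  have hprojX : Projective C (φ, p) (M₀ ⊓ M₂ ⊔ W, p) :=
    Relation.ReflTransGen.tail
      (Relation.ReflTransGen.tail hproj2 (persp_symm hpersp2)) (persp_symm hpersp1)
  have hXcmi : IsCMI C (M₀ ⊓ M₂ ⊔ W) p :=
    skew one C hInf hSup hDir hM hR hP hφ hXC hXltp hprX hprojX
  exact ⟨M₀ ⊓ M₂ ⊔ W, hXcmi, hprojX,
    claimB one C hInf hSup hO h0 h2 hXcmi hne hX0 hX2⟩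

theorem mid_iff {a b c : Prop} : ((a ↔ b) ↔ (b ↔ c)) ↔ (a ↔ c) := by tauto

theorem parity100 {a0x a1x a2x a0y a1y a2y a0s a1s a2s a0t a1t a2t : Prop}
    (hxy0 : ¬(a0x ↔ a0y)) (hxy1 : a1x ↔ a1y) (hxy2 : a2x ↔ a2y)
    (hst : ((a0s ↔ a0t) ∧ ¬(a1s ↔ a1t) ∧ ¬(a2s ↔ a2t)) ∨
           (¬(a0s ↔ a0t) ∧ ¬(a1s ↔ a1t) ∧ (a2s ↔ a2t)))
    (c1 : ¬((a0x ↔ a0s) ∧ ¬(a1x ↔ a1s) ∧ (a2x ↔ a2s)))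
    (c2 : ¬(¬(a0x ↔ a0s) ∧ ¬(a1x ↔ a1s) ∧ ¬(a2x ↔ a2s)))
    (c3 : ¬((a0x ↔ a0t) ∧ ¬(a1x ↔ a1t) ∧ (a2x ↔ a2t)))
    (c4 : ¬(¬(a0x ↔ a0t) ∧ ¬(a1x ↔ a1t) ∧ ¬(a2x ↔ a2t)))
    (c5 : ¬((a0y ↔ a0s) ∧ ¬(a1y ↔ a1s) ∧ (a2y ↔ a2s)))
    (c6 : ¬(¬(a0y ↔ a0s) ∧ ¬(a1y ↔ a1s) ∧ ¬(a2y ↔ a2s)))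
    (c7 : ¬((a0y ↔ a0t) ∧ ¬(a1y ↔ a1t) ∧ (a2y ↔ a2t)))
    (c8 : ¬(¬(a0y ↔ a0t) ∧ ¬(a1y ↔ a1t) ∧ ¬(a2y ↔ a2t))) : False := by
  rcases hst with ⟨st0, st1, st2⟩ | ⟨st0, st1, st2⟩
  · by_cases m0 : a0x ↔ a0s
    · by_cases m1 : a1x ↔ a1s
      · by_cases m2 : a2x ↔ a2s
        · exact c8 ⟨(fun h => ((fun h => hxy0 ((h.trans m0.symm).symm))) (h.trans st0.symm)), (fun h => st1 (((hxy1.symm.trans m1)).symm.trans h)), (fun h => st2 (((hxy2.symm.trans m2)).symm.trans h))⟩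
        · exact c3 ⟨(m0.trans st0), (fun h => st1 (m1.symm.trans h)), (xor_trans (fun h => m2 h.symm) st2)⟩
      · by_cases m2 : a2x ↔ a2s
        · exact c1 ⟨m0, m1, m2⟩
        · exact c6 ⟨(fun h => hxy0 ((h.trans m0.symm).symm)), (fun h => m1 (hxy1.trans h)), (fun h => m2 (hxy2.trans h))⟩
    · by_cases m1 : a1x ↔ a1s
      · by_cases m2 : a2x ↔ a2s
        · exact c4 ⟨(fun h => m0 (h.trans st0.symm)), (fun h => st1 (m1.symm.trans h)), (fun h => st2 (m2.symm.trans h))⟩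
        · exact c7 ⟨(((xor_trans hxy0 m0)).trans st0), (fun h => st1 (((hxy1.symm.trans m1)).symm.trans h)), (xor_trans (fun h => ((fun h => m2 (hxy2.trans h))) h.symm) st2)⟩
      · by_cases m2 : a2x ↔ a2s
        · exact c5 ⟨(xor_trans hxy0 m0), (fun h => m1 (hxy1.trans h)), (hxy2.symm.trans m2)⟩
        · exact c2 ⟨m0, m1, m2⟩
  · by_cases m0 : a0x ↔ a0s
    · by_cases m1 : a1x ↔ a1s
      · by_cases m2 : a2x ↔ a2s
        · exact c7 ⟨(xor_trans (fun h => ((fun h => hxy0 ((h.trans m0.symm).symm))) h.symm) st0), (fun h => st1 (((hxy1.symm.trans m1)).symm.trans h)), (((hxy2.symm.trans m2)).trans st2)⟩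
        · exact c4 ⟨(fun h => st0 (m0.symm.trans h)), (fun h => st1 (m1.symm.trans h)), (fun h => m2 (h.trans st2.symm))⟩
      · by_cases m2 : a2x ↔ a2s
        · exact c1 ⟨m0, m1, m2⟩
        · exact c6 ⟨(fun h => hxy0 ((h.trans m0.symm).symm)), (fun h => m1 (hxy1.trans h)), (fun h => m2 (hxy2.trans h))⟩
    · by_cases m1 : a1x ↔ a1s
      · by_cases m2 : a2x ↔ a2s
        · exact c3 ⟨(xor_trans (fun h => m0 h.symm) st0), (fun h => st1 (m1.symm.trans h)), (m2.trans st2)⟩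
        · exact c8 ⟨(fun h => st0 (((xor_trans hxy0 m0)).symm.trans h)), (fun h => st1 (((hxy1.symm.trans m1)).symm.trans h)), (fun h => ((fun h => m2 (hxy2.trans h))) (h.trans st2.symm))⟩
      · by_cases m2 : a2x ↔ a2s
        · exact c5 ⟨(xor_trans hxy0 m0), (fun h => m1 (hxy1.trans h)), (hxy2.symm.trans m2)⟩
        · exact c2 ⟨m0, m1, m2⟩

/-- realizability of `Bul p a b` by a CMI member of the projectivity class -/
def Real1 (one : A) (C : Set (Setoid A)) (φ p a b : Setoid A) : Prop :=
  a = b ∨ ∃ B, IsCMI C B p ∧ Projective C (φ, p) (B, p) ∧ ∀ x y, B.r x y ↔ Bul p a b x y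

theorem tri (one : A) (C : Set (Setoid A))
    (hInf : ∀ S ⊆ C, sInf S ∈ C) (hSup : ∀ S ⊆ C, sSup S ∈ C)
    (hDir : ∀ D ⊆ C, D.Nonempty → DirectedOn (· ≤ ·) D →
      ∀ x y : A, (sSup D).r x y ↔ ∃ s ∈ D, s.r x y)
    (hM : ∀ x ∈ C, ∀ y ∈ C, ∀ z ∈ C, x ≤ z → x ⊔ y ⊓ z = (x ⊔ y) ⊓ z)
    (hO : ∀ α ∈ C, ∀ a b : A, α ⊔ theta C one a = α ⊔ theta C one b ↔ α.r a b)
    (hR : ∀ α ∈ C, ∀ β ∈ C, (∀ x : A, α.r one x ↔ β.r one x) → α = β)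
    (hP : ∀ φ ψ p q : Setoid A, IsCMI C φ p → IsCMI C ψ q →
      Projective C (φ, p) (ψ, q) → p = q)
    {φ p A₀ A₁ A₂ : Setoid A} (hφ : IsCMI C φ p)
    (h0 : IsCMI C A₀ p) (h1 : IsCMI C A₁ p) (h2 : IsCMI C A₂ p)
    (hq1 : Projective C (φ, p) (A₁, p)) (hq2 : Projective C (φ, p) (A₂, p))
    (r01 : Real1 one C φ p A₀ A₁) (r12 : Real1 one C φ p A₁ A₂) :
    Real1 one C φ p A₀ A₂ := by
  rcases r01 with rfl | ⟨P01, hP01cmi, hP01proj, hP01⟩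
  · exact r12
  rcases r12 with rfl | ⟨P12, hP12cmi, hP12proj, hP12⟩
  · exact Or.inr ⟨P01, hP01cmi, hP01proj, hP01⟩
  by_cases h02 : A₀ = A₂
  · exact Or.inl h02
  have rep : ∀ (θ : Setoid A), IsCMI C θ p → ∀ a b : A, p.r a b →
      (θ.r a b ↔ (θ.r one a ↔ θ.r one b)) := by
    intro θ hθ a b hab
    rw [lemD one C hInf hSup hO hθ a b]
    exact ⟨fun h => h.2, fun h => ⟨hab, h⟩⟩
  by_cases h111 : ∃ u v, p.r u v ∧ ¬ A₀.r u v ∧ ¬ A₁.r u v ∧ ¬ A₂.r u v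
  · obtain ⟨u, v, hpuv, hu0, hu1, hu2⟩ := h111
    have hWC : P01 ⊓ P12 ∈ C := mem_inf2 C hInf hP01cmi.1 hP12cmi.1
    have hW : ∀ x y, (P01 ⊓ P12).r x y → Bul p A₀ A₂ x y := by
      intro x y h
      obtain ⟨ha, hb⟩ := h
      have e1 := (hP01 x y).mp ha
      have e2 := (hP12 x y).mp hb
      exact ⟨e1.1, e1.2.trans e2.2⟩
    have hWuv : (P01 ⊓ P12).r u v :=
      ⟨(hP01 u v).mpr ⟨hpuv, iff_of_false hu0 hu1⟩,
       (hP12 u v).mpr ⟨hpuv, iff_of_false hu1 hu2⟩⟩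
    obtain ⟨X, hXcmi, hXproj, hXiff⟩ :=
      common one C hInf hSup hDir hM hO hR hP hφ h0 h2 h02 hq2 hWC hW hWuv hu0
    exact Or.inr ⟨X, hXcmi, hXproj, hXiff⟩
  by_cases h010 : ∃ u v, p.r u v ∧ A₀.r u v ∧ ¬ A₁.r u v ∧ A₂.r u v
  · obtain ⟨u, v, hpuv, hu0, hu1, hu2⟩ := h010
    have hPP : P01 ≠ P12 := by
      intro hEq
      apply h02
      apply Setoid.ext
      intro x y
      show A₀.r x y ↔ A₂.r x y
      by_cases hpxy : p.r x y
      · have e1 : Bul p A₀ A₁ x y ↔ Bul p A₁ A₂ x y := by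
          rw [← hP01 x y, hEq, hP12 x y]
        have e2 : (A₀.r x y ↔ A₁.r x y) ↔ (A₁.r x y ↔ A₂.r x y) :=
          ⟨fun h => (e1.mp ⟨hpxy, h⟩).2, fun h => (e1.mpr ⟨hpxy, h⟩).2⟩
        exact mid_iff.mp e2
      · exact iff_of_false (fun h => hpxy (rle h0.2.2.1.le h))
          (fun h => hpxy (rle h2.2.2.1.le h))
    have hWC : A₀ ⊓ A₂ ∈ C := mem_inf2 C hInf h0.1 h2.1
    have e01 : ∀ x y, p.r x y → (P01.r x y ↔ (A₀.r x y ↔ A₁.r x y)) := by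
      intro x y hp
      exact (hP01 x y).trans ⟨fun h => h.2, fun h => ⟨hp, h⟩⟩
    have e12 : ∀ x y, p.r x y → (P12.r x y ↔ (A₁.r x y ↔ A₂.r x y)) := by
      intro x y hp
      exact (hP12 x y).trans ⟨fun h => h.2, fun h => ⟨hp, h⟩⟩
    have hW : ∀ x y, (A₀ ⊓ A₂).r x y → Bul p P01 P12 x y := by
      intro x y h
      obtain ⟨ha, hb⟩ := h
      have hpxy : p.r x y := rle h0.2.2.1.le ha
      refine ⟨hpxy, ?_⟩
      constructor
      · intro hh
        exact (e12 x y hpxy).mpr (iff_of_true (((e01 x y hpxy).mp hh).mp ha) hb)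
      · intro hh
        exact (e01 x y hpxy).mpr (iff_of_true ha (((e12 x y hpxy).mp hh).mpr hb))
    have hWuv : (A₀ ⊓ A₂).r u v := ⟨hu0, hu2⟩
    have hP01uv : ¬ P01.r u v := fun h => hu1 (((hP01 u v).mp h).2.mp hu0)
    obtain ⟨X, hXcmi, hXproj, hXiff⟩ :=
      common one C hInf hSup hDir hM hO hR hP hφ hP01cmi hP12cmi hPP hP12proj hWC hW hWuv hP01uv
    refine Or.inr ⟨X, hXcmi, hXproj, fun x y => (hXiff x y).trans ?_⟩
    constructor
    · rintro ⟨hp, hiff⟩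
      refine ⟨hp, ?_⟩
      exact mid_iff.mp ((((e01 x y hp).symm.trans hiff).trans (e12 x y hp)))
    · rintro ⟨hp, hiff⟩
      refine ⟨hp, ?_⟩
      exact (e01 x y hp).trans ((mid_iff.mpr hiff).trans (e12 x y hp).symm)
  · -- parity case : A₁ realizes Bul p A₀ A₂
    have heven : ∀ x y, p.r x y → (A₁.r x y ↔ (A₀.r x y ↔ A₂.r x y)) := by
      intro x y hpxy
      by_contra hodd
      have hxyP : (¬ A₀.r x y ∧ A₁.r x y ∧ A₂.r x y) ∨ (A₀.r x y ∧ A₁.r x y ∧ ¬ A₂.r x y) := by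
        by_cases c0 : A₀.r x y
        · by_cases c1 : A₁.r x y
          · by_cases c2 : A₂.r x y
            · exact absurd (iff_of_true c1 (iff_of_true c0 c2)) hodd
            · exact Or.inr ⟨c0, c1, c2⟩
          · by_cases c2 : A₂.r x y
            · exact absurd ⟨x, y, hpxy, c0, c1, c2⟩ h010
            · exact absurd (iff_of_false c1 (fun h => c2 (h.mp c0))) hodd
        · by_cases c1 : A₁.r x y
          · by_cases c2 : A₂.r x y
            · exact Or.inl ⟨c0, c1, c2⟩
            · exact absurd (iff_of_true c1 (iff_of_false c0 c2)) hodd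
          · by_cases c2 : A₂.r x y
            · exact absurd (iff_of_false c1 (fun h => c0 (h.mpr c2))) hodd
            · exact absurd ⟨x, y, hpxy, c0, c1, c2⟩ h111
      obtain ⟨sₐ, t, hpst, hst1⟩ := lt_pair h1.2.2.1
      have hst02 : (A₀.r sₐ t ∧ ¬ A₂.r sₐ t) ∨ (¬ A₀.r sₐ t ∧ A₂.r sₐ t) := by
        by_cases d0 : A₀.r sₐ t
        · by_cases d2 : A₂.r sₐ t
          · exact absurd ⟨sₐ, t, hpst, d0, hst1, d2⟩ h010
          · exact Or.inl ⟨d0, d2⟩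
        · by_cases d2 : A₂.r sₐ t
          · exact Or.inr ⟨d0, d2⟩
          · exact absurd ⟨sₐ, t, hpst, d0, hst1, d2⟩ h111
      -- all four points are in the `p`-class of `one`
      have hx1 : p.r one x ∧ p.r one y := by
        rcases hxyP with ⟨c0, -, -⟩ | ⟨-, -, c2⟩
        · obtain ⟨a, b, -⟩ := split_facts one C hInf hSup hO h0 hpxy c0
          exact ⟨a, b⟩
        · obtain ⟨a, b, -⟩ := split_facts one C hInf hSup hO h2 hpxy c2
          exact ⟨a, b⟩
      obtain ⟨hp1x, hp1y⟩ := hx1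
      obtain ⟨hp1s, hp1t, -⟩ := split_facts one C hInf hSup hO h1 hpst hst1
      have hpxs : p.r x sₐ := p.trans' (p.symm' hp1x) hp1s
      have hpxt : p.r x t := p.trans' (p.symm' hp1x) hp1t
      have hpys : p.r y sₐ := p.trans' (p.symm' hp1y) hp1s
      have hpyt : p.r y t := p.trans' (p.symm' hp1y) hp1t
      -- cross-pair constraints in indicator form
      have crA : ∀ z w, p.r z w →
          ¬((A₀.r one z ↔ A₀.r one w) ∧ ¬(A₁.r one z ↔ A₁.r one w) ∧
            (A₂.r one z ↔ A₂.r one w)) := by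
        rintro z w hzw ⟨u0, u1, u2⟩
        exact h010 ⟨z, w, hzw, (rep A₀ h0 z w hzw).mpr u0,
          fun hA => u1 ((rep A₁ h1 z w hzw).mp hA), (rep A₂ h2 z w hzw).mpr u2⟩
      have crB : ∀ z w, p.r z w →
          ¬(¬(A₀.r one z ↔ A₀.r one w) ∧ ¬(A₁.r one z ↔ A₁.r one w) ∧
            ¬(A₂.r one z ↔ A₂.r one w)) := by
        rintro z w hzw ⟨u0, u1, u2⟩
        exact h111 ⟨z, w, hzw, fun hA => u0 ((rep A₀ h0 z w hzw).mp hA),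
          fun hA => u1 ((rep A₁ h1 z w hzw).mp hA),
          fun hA => u2 ((rep A₂ h2 z w hzw).mp hA)⟩
      -- (s,t) pattern in indicator form
      have hst1' : ¬(A₁.r one sₐ ↔ A₁.r one t) := fun h => hst1 ((rep A₁ h1 sₐ t hpst).mpr h)
      rcases hxyP with ⟨c0, c1, c2⟩ | ⟨c0, c1, c2⟩
      · -- pattern (1,0,0)
        have hxy0 : ¬(A₀.r one x ↔ A₀.r one y) := fun h => c0 ((rep A₀ h0 x y hpxy).mpr h)
        have hxy1 : A₁.r one x ↔ A₁.r one y := (rep A₁ h1 x y hpxy).mp c1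
        have hxy2 : A₂.r one x ↔ A₂.r one y := (rep A₂ h2 x y hpxy).mp c2
        have hstI : ((A₀.r one sₐ ↔ A₀.r one t) ∧ ¬(A₁.r one sₐ ↔ A₁.r one t) ∧
            ¬(A₂.r one sₐ ↔ A₂.r one t)) ∨
            (¬(A₀.r one sₐ ↔ A₀.r one t) ∧ ¬(A₁.r one sₐ ↔ A₁.r one t) ∧
            (A₂.r one sₐ ↔ A₂.r one t)) := by
          rcases hst02 with ⟨d0, d2⟩ | ⟨d0, d2⟩
          · exact Or.inl ⟨(rep A₀ h0 sₐ t hpst).mp d0, hst1',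
              fun h => d2 ((rep A₂ h2 sₐ t hpst).mpr h)⟩
          · exact Or.inr ⟨fun h => d0 ((rep A₀ h0 sₐ t hpst).mpr h), hst1',
              (rep A₂ h2 sₐ t hpst).mp d2⟩
        exact parity100 hxy0 hxy1 hxy2 hstI
          (fun ⟨u0, u1, u2⟩ => crA x sₐ hpxs ⟨u0, u1, u2⟩)
          (fun ⟨u0, u1, u2⟩ => crB x sₐ hpxs ⟨u0, u1, u2⟩)
          (fun ⟨u0, u1, u2⟩ => crA x t hpxt ⟨u0, u1, u2⟩)
          (fun ⟨u0, u1, u2⟩ => crB x t hpxt ⟨u0, u1, u2⟩)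
          (fun ⟨u0, u1, u2⟩ => crA y sₐ hpys ⟨u0, u1, u2⟩)
          (fun ⟨u0, u1, u2⟩ => crB y sₐ hpys ⟨u0, u1, u2⟩)
          (fun ⟨u0, u1, u2⟩ => crA y t hpyt ⟨u0, u1, u2⟩)
          (fun ⟨u0, u1, u2⟩ => crB y t hpyt ⟨u0, u1, u2⟩)
      · -- pattern (0,0,1) : apply parity100 with coordinates 0 and 2 swapped
        have hxy2' : ¬(A₂.r one x ↔ A₂.r one y) := fun h => c2 ((rep A₂ h2 x y hpxy).mpr h)
        have hxy1 : A₁.r one x ↔ A₁.r one y := (rep A₁ h1 x y hpxy).mp c1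
        have hxy0' : A₀.r one x ↔ A₀.r one y := (rep A₀ h0 x y hpxy).mp c0
        have hstI : ((A₂.r one sₐ ↔ A₂.r one t) ∧ ¬(A₁.r one sₐ ↔ A₁.r one t) ∧
            ¬(A₀.r one sₐ ↔ A₀.r one t)) ∨
            (¬(A₂.r one sₐ ↔ A₂.r one t) ∧ ¬(A₁.r one sₐ ↔ A₁.r one t) ∧
            (A₀.r one sₐ ↔ A₀.r one t)) := by
          rcases hst02 with ⟨d0, d2⟩ | ⟨d0, d2⟩
          · exact Or.inr ⟨fun h => d2 ((rep A₂ h2 sₐ t hpst).mpr h), hst1',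
              (rep A₀ h0 sₐ t hpst).mp d0⟩
          · exact Or.inl ⟨(rep A₂ h2 sₐ t hpst).mp d2, hst1',
              fun h => d0 ((rep A₀ h0 sₐ t hpst).mpr h)⟩
        exact parity100 hxy2' hxy1 hxy0' hstI
          (fun ⟨u0, u1, u2⟩ => crA x sₐ hpxs ⟨u2, u1, u0⟩)
          (fun ⟨u0, u1, u2⟩ => crB x sₐ hpxs ⟨u2, u1, u0⟩)
          (fun ⟨u0, u1, u2⟩ => crA x t hpxt ⟨u2, u1, u0⟩)
          (fun ⟨u0, u1, u2⟩ => crB x t hpxt ⟨u2, u1, u0⟩)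
          (fun ⟨u0, u1, u2⟩ => crA y sₐ hpys ⟨u2, u1, u0⟩)
          (fun ⟨u0, u1, u2⟩ => crB y sₐ hpys ⟨u2, u1, u0⟩)
          (fun ⟨u0, u1, u2⟩ => crA y t hpyt ⟨u2, u1, u0⟩)
          (fun ⟨u0, u1, u2⟩ => crB y t hpyt ⟨u2, u1, u0⟩)
    refine Or.inr ⟨A₁, h1, hq1, fun x y => ?_⟩
    constructor
    · intro h
      have hpxy : p.r x y := rle h1.2.2.1.le h
      exact ⟨hpxy, (heven x y hpxy).mp h⟩
    · rintro ⟨hpxy, hiff⟩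
      exact (heven x y hpxy).mpr hiff

theorem sameSigma (one : A) (C : Set (Setoid A))
    (hInf : ∀ S ⊆ C, sInf S ∈ C) (hSup : ∀ S ⊆ C, sSup S ∈ C)
    (hDir : ∀ D ⊆ C, D.Nonempty → DirectedOn (· ≤ ·) D →
      ∀ x y : A, (sSup D).r x y ↔ ∃ s ∈ D, s.r x y)
    (hM : ∀ x ∈ C, ∀ y ∈ C, ∀ z ∈ C, x ≤ z → x ⊔ y ⊓ z = (x ⊔ y) ⊓ z)
    (hO : ∀ α ∈ C, ∀ a b : A, α ⊔ theta C one a = α ⊔ theta C one b ↔ α.r a b)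
    (hR : ∀ α ∈ C, ∀ β ∈ C, (∀ x : A, α.r one x ↔ β.r one x) → α = β)
    (hP : ∀ φ ψ p q : Setoid A, IsCMI C φ p → IsCMI C ψ q →
      Projective C (φ, p) (ψ, q) → p = q)
    {φ p χ π θ θ' : Setoid A} (hφ : IsCMI C φ p) (hpr : CPrime C χ π)
    (hθ : IsCMI C θ p) (hθ' : IsCMI C θ' p) (hne : θ ≠ θ')
    (hθπ : θ ⊓ π = χ) (hθ'π : θ' ⊓ π = χ)
    (hproj' : Projective C (φ, p) (θ', p)) :
    ∃ B, IsCMI C B p ∧ Projective C (φ, p) (B, p) ∧ ∀ x y, B.r x y ↔ Bul p θ θ' x y := by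
  obtain ⟨hχC, hπC, hχπ, hmax⟩ := hpr
  have hsup02 : θ ⊔ θ' = p := cmi_sup_eq C hSup hθ hθ' hne
  have hπθ : ¬ π ≤ θ := fun h => hχπ.ne (hθπ.symm.trans (inf_eq_right.mpr h))
  have hθlt : θ < θ ⊔ π := lt_of_le_of_ne le_sup_left (fun h => hπθ (le_sup_right.trans h.ge))
  have hsupC : θ ⊔ π ∈ C := mem_sup2 C hSup hθ.1 hπC
  have hprθsup : CPrime C θ (θ ⊔ π) :=
    primeUp C hInf hM hθ.1 hsupC ⟨hχC, hπC, hχπ, hmax⟩ (by rw [inf_comm, hθπ]) (by rw [sup_comm])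
  have hple : p ≤ θ ⊔ π := hθ.2.2.2 _ hsupC hθlt
  have hpsup : θ ⊔ π = p := by
    rcases hprθsup.2.2.2 p hφ.2.1 hθ.2.2.1.le hple with h | h
    · exact absurd h.symm hθ.2.2.1.ne
    · exact h.symm
  have hπ'θ : ¬ π ≤ θ' := fun h => hχπ.ne (hθ'π.symm.trans (inf_eq_right.mpr h))
  have hθ'lt : θ' < θ' ⊔ π := lt_of_le_of_ne le_sup_left (fun h => hπ'θ (le_sup_right.trans h.ge))
  have hsupC' : θ' ⊔ π ∈ C := mem_sup2 C hSup hθ'.1 hπC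
  have hprθ'sup : CPrime C θ' (θ' ⊔ π) :=
    primeUp C hInf hM hθ'.1 hsupC' ⟨hχC, hπC, hχπ, hmax⟩ (by rw [inf_comm, hθ'π]) (by rw [sup_comm])
  have hple' : p ≤ θ' ⊔ π := hθ'.2.2.2 _ hsupC' hθ'lt
  have hpsup' : θ' ⊔ π = p := by
    rcases hprθ'sup.2.2.2 p hφ.2.1 hθ'.2.2.1.le hple' with h | h
    · exact absurd h.symm hθ'.2.2.1.ne
    · exact h.symm
  have hτC : θ ⊓ θ' ∈ C := mem_inf2 C hInf hθ.1 hθ'.1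
  have hBC : θ ⊓ θ' ⊔ π ∈ C := mem_sup2 C hSup hτC hπC
  have hχτ : χ ≤ θ ⊓ θ' := le_inf (hθπ ▸ inf_le_left) (hθ'π ▸ inf_le_left)
  have hBθ : (θ ⊓ θ' ⊔ π) ⊓ θ = θ ⊓ θ' := by
    have hmod := hM (θ ⊓ θ') hτC π hπC θ hθ.1 inf_le_left
    rw [inf_comm π θ, hθπ, sup_eq_left.mpr hχτ] at hmod
    exact hmod.symm
  have hBθ' : (θ ⊓ θ' ⊔ π) ⊓ θ' = θ ⊓ θ' := by
    have hmod := hM (θ ⊓ θ') hτC π hπC θ' hθ'.1 inf_le_right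
    rw [inf_comm π θ', hθ'π, sup_eq_left.mpr hχτ] at hmod
    exact hmod.symm
  have hBθsup : (θ ⊓ θ' ⊔ π) ⊔ θ = p := by
    rw [sup_assoc, sup_eq_right.mpr (inf_le_left.trans le_sup_right), sup_comm π θ, hpsup]
  have hBθ'sup : (θ ⊓ θ' ⊔ π) ⊔ θ' = p := by
    rw [sup_assoc, sup_eq_right.mpr (inf_le_right.trans le_sup_right), sup_comm π θ', hpsup']
  have hBlep : θ ⊓ θ' ⊔ π ≤ p := by
    rw [← hpsup]
    exact sup_le (inf_le_left.trans le_sup_left) le_sup_right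
  have hBltp : θ ⊓ θ' ⊔ π < p := by
    refine lt_of_le_of_ne hBlep ?_
    intro hEq
    have hτθ : θ ⊓ θ' = θ := by
      rw [← hBθ, hEq, inf_eq_right.mpr hθ.2.2.1.le]
    have hle : θ ≤ θ' := inf_eq_left.mp hτθ
    exact hθ'.2.2.1.not_ge (hθ.2.2.2 θ' hθ'.1 (lt_of_le_of_ne hle hne))
  have hprτθ : CPrime C (θ ⊓ θ') θ :=
    primeDown C hSup hM hτC hθ.1 (cmi_prime hθ') rfl hsup02.symm
  have hprB : CPrime C (θ ⊓ θ' ⊔ π) p :=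
    primeUp C hInf hM hBC hφ.2.1 hprτθ
      (by rw [inf_comm θ (θ ⊓ θ' ⊔ π), hBθ]) (by rw [sup_comm θ (θ ⊓ θ' ⊔ π), hBθsup])
  have hpersp1 : Persp C (θ ⊓ θ' ⊔ π, p) (θ ⊓ θ', θ) :=
    ⟨hBC, hφ.2.1, hτC, hθ.1, Or.inr ⟨by rw [inf_comm θ (θ ⊓ θ' ⊔ π), hBθ],
      by rw [sup_comm θ (θ ⊓ θ' ⊔ π), hBθsup]⟩⟩
  have hpersp2 : Persp C (θ ⊓ θ', θ) (θ', p) :=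
    ⟨hτC, hθ.1, hθ'.1, hφ.2.1, Or.inl ⟨rfl, hsup02.symm⟩⟩
  have hprojB : Projective C (φ, p) (θ ⊓ θ' ⊔ π, p) :=
    Relation.ReflTransGen.tail
      (Relation.ReflTransGen.tail hproj' (persp_symm hpersp2)) (persp_symm hpersp1)
  have hBcmi : IsCMI C (θ ⊓ θ' ⊔ π) p :=
    skew one C hInf hSup hDir hM hR hP hφ hBC hBltp hprB hprojB
  exact ⟨θ ⊓ θ' ⊔ π, hBcmi, hprojB, claimB one C hInf hSup hO hθ hθ' hBcmi hne hBθ hBθ'⟩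

theorem l2pair (one : A) (C : Set (Setoid A))
    (hR : ∀ α ∈ C, ∀ β ∈ C, (∀ x : A, α.r one x ↔ β.r one x) → α = β)
    {φ ψ p : Setoid A} (hφ : IsCMI C φ p) (hψ : IsCMI C ψ p) :
    ∃ a b, p.r a b ∧ ¬ φ.r a b ∧ ¬ ψ.r a b := by
  have hφp : φ ≤ p := hφ.2.2.1.le
  have hψp : ψ ≤ p := hψ.2.2.1.le
  by_cases hFG : ∃ a, φ.r one a ∧ ¬ ψ.r one a
  · obtain ⟨a, hfa, hga⟩ := hFG
    by_cases hGF : ∃ b, ψ.r one b ∧ ¬ φ.r one b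
    · obtain ⟨b, hgb, hfb⟩ := hGF
      refine ⟨a, b, p.trans' (p.symm' (rle hφp hfa)) (rle hψp hgb), ?_, ?_⟩
      · exact fun h => hfb (φ.trans' hfa h)
      · exact fun h => hga (ψ.trans' hgb (ψ.symm' h))
    · push_neg at hGF
      have hyF : ∃ y, p.r one y ∧ ¬ φ.r one y := by
        by_contra hc
        push_neg at hc
        exact hφ.2.2.1.ne (hR φ hφ.1 p hφ.2.1 fun x => ⟨fun h => rle hφp h, fun h => hc x h⟩)
      obtain ⟨y, hpy, hfy⟩ := hyF
      exact ⟨one, y, hpy, hfy, fun h => hfy (hGF y h)⟩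
  · push_neg at hFG
    have hyG : ∃ y, p.r one y ∧ ¬ ψ.r one y := by
      by_contra hc
      push_neg at hc
      exact hψ.2.2.1.ne (hR ψ hψ.1 p hφ.2.1 fun x => ⟨fun h => rle hψp h, fun h => hc x h⟩)
    obtain ⟨y, hpy, hgy⟩ := hyG
    exact ⟨one, y, hpy, fun h => hgy (hFG y h), hgy⟩

theorem forward (one : A) (C : Set (Setoid A))
    (hInf : ∀ S ⊆ C, sInf S ∈ C) (hSup : ∀ S ⊆ C, sSup S ∈ C)
    (hDir : ∀ D ⊆ C, D.Nonempty → DirectedOn (· ≤ ·) D →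
      ∀ x y : A, (sSup D).r x y ↔ ∃ s ∈ D, s.r x y)
    (hM : ∀ x ∈ C, ∀ y ∈ C, ∀ z ∈ C, x ≤ z → x ⊔ y ⊓ z = (x ⊔ y) ⊓ z)
    (hO : ∀ α ∈ C, ∀ a b : A, α ⊔ theta C one a = α ⊔ theta C one b ↔ α.r a b)
    (hR : ∀ α ∈ C, ∀ β ∈ C, (∀ x : A, α.r one x ↔ β.r one x) → α = β)
    (hP : ∀ φ ψ p q : Setoid A, IsCMI C φ p → IsCMI C ψ q →
      Projective C (φ, p) (ψ, q) → p = q)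
    {φ ψ p : Setoid A}
    (hφ : IsCMI C φ p) (hψ : IsCMI C ψ p) (hne : φ ≠ ψ) (hpip : PIP C φ ψ) :
    ∃ B, IsCMI C B p ∧ ∀ x y, B.r x y ↔ Bul p φ ψ x y := by
  obtain ⟨p1, q1, hφ', hψ', hproj0⟩ := hpip
  have hp1 : p1 = p := cover_unique hφ' hφ
  have hq1 : q1 = p := cover_unique hψ' hψ
  rw [hp1, hq1] at hproj0
  have main : ∀ I : Setoid A × Setoid A, Projective C (φ, p) I →
      CPrime C I.1 I.2 ∧ ∃ θ, IsCMI C θ p ∧ Projective C (φ, p) (θ, p) ∧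
        θ ⊓ I.2 = I.1 ∧ Real1 one C φ p φ θ := by
    intro I hI
    have hI' : Relation.ReflTransGen (Persp C) (φ, p) I := hI
    induction hI' with
    | refl =>
      refine ⟨⟨hφ.1, hφ.2.1, hφ.2.2.1, ?_⟩, φ, hφ, Relation.ReflTransGen.refl,
        inf_eq_left.mpr hφ.2.2.1.le, Or.inl rfl⟩
      intro γ hγ hφγ hγp
      rcases eq_or_lt_of_le hφγ with h | h
      · exact Or.inl h.symm
      · exact Or.inr (le_antisymm hγp (hφ.2.2.2 γ hγ h))
    | @tail J K hJ hJK ih =>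
      obtain ⟨hprJ, θI, hθIcmi, hθIproj, hθIJ, hθIreal⟩ := ih hJ
      have hprojK : Projective C (φ, p) K := Relation.ReflTransGen.tail hJ hJK
      obtain ⟨hJ1C, hJ2C, hK1C, hK2C, hcase⟩ := hJK
      rcases hcase with ⟨hup1, hup2⟩ | ⟨hdn1, hdn2⟩
      · -- K above J
        have hprK : CPrime C K.1 K.2 := primeUp C hInf hM hK1C hK2C hprJ hup1 hup2
        obtain ⟨c, d, hcd1, hcd2⟩ := lt_pair hprK.2.2.1
        have hprojK' : Projective C (φ, p) (K.1, K.2) := hprojK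
        obtain ⟨θK, hθKcmi, hθKproj, -, -, hθKK⟩ :=
          ext_lemma one C hInf hSup hDir hM hP hφ hprK hprojK' hcd1 hcd2
        have hJle : J.2 ≤ K.2 := hup2 ▸ le_sup_left
        have hθKJ : θK ⊓ J.2 = J.1 := by
          calc θK ⊓ J.2 = θK ⊓ (K.2 ⊓ J.2) := by rw [inf_eq_right.mpr hJle]
            _ = (θK ⊓ K.2) ⊓ J.2 := (inf_assoc θK K.2 J.2).symm
            _ = K.1 ⊓ J.2 := by rw [hθKK]
            _ = J.1 := by rw [inf_comm]; exact hup1.symm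
        have hreal : Real1 one C φ p φ θK := by
          by_cases hEq : θI = θK
          · exact hEq ▸ hθIreal
          · obtain ⟨B, hBcmi, hBproj, hBiff⟩ :=
              sameSigma one C hInf hSup hDir hM hO hR hP hφ hprJ hθIcmi hθKcmi hEq
                hθIJ hθKJ hθKproj
            exact tri one C hInf hSup hDir hM hO hR hP hφ hφ hθIcmi hθKcmi hθIproj hθKproj
              hθIreal (Or.inr ⟨B, hBcmi, hBproj, hBiff⟩)
        exact ⟨hprK, θK, hθKcmi, hθKproj, hθKK, hreal⟩
      · -- K below J
        have hprK : CPrime C K.1 K.2 := primeDown C hSup hM hK1C hK2C hprJ hdn1 hdn2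
        have hKle : K.2 ≤ J.2 := hdn2 ▸ le_sup_left
        have hθIK : θI ⊓ K.2 = K.1 := by
          calc θI ⊓ K.2 = θI ⊓ (J.2 ⊓ K.2) := by rw [inf_eq_right.mpr hKle]
            _ = (θI ⊓ J.2) ⊓ K.2 := (inf_assoc θI J.2 K.2).symm
            _ = J.1 ⊓ K.2 := by rw [hθIJ]
            _ = K.1 := by rw [inf_comm]; exact hdn1.symm
        exact ⟨hprK, θI, hθIcmi, hθIproj, hθIK, hθIreal⟩
  obtain ⟨-, θ, hθcmi, -, hθp2, hreal⟩ := main (ψ, p) hproj0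
  have hθψ : θ = ψ := by
    have he : θ ⊓ p = θ := inf_eq_left.mpr hθcmi.2.2.1.le
    rw [he] at hθp2
    exact hθp2
  rw [hθψ] at hreal
  rcases hreal with h | ⟨B, hBcmi, -, hBiff⟩
  · exact absurd h hne
  · exact ⟨B, hBcmi, hBiff⟩

end S8

/-- Corollary 11: for distinct `φ, ψ ∈ Cm` with `φ⁺ = ψ⁺ = p`, the conditions
`φ ∼ ψ`, `φ • ψ ∈ Cm` and `φ • ψ ∈ C` are equivalent. -/
theorem stmt8 (one : A) (C : Set (Setoid A))
    (hInf : ∀ S ⊆ C, sInf S ∈ C) (hSup : ∀ S ⊆ C, sSup S ∈ C)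
    (hDir : ∀ D ⊆ C, D.Nonempty → DirectedOn (· ≤ ·) D →
      ∀ x y : A, (sSup D).r x y ↔ ∃ s ∈ D, s.r x y)
    (hM : ∀ x ∈ C, ∀ y ∈ C, ∀ z ∈ C, x ≤ z → x ⊔ y ⊓ z = (x ⊔ y) ⊓ z)
    (hO : ∀ α ∈ C, ∀ a b : A, α ⊔ theta C one a = α ⊔ theta C one b ↔ α.r a b)
    (hR : ∀ α ∈ C, ∀ β ∈ C, (∀ x : A, α.r one x ↔ β.r one x) → α = β)
    (hP : ∀ φ ψ p q : Setoid A, IsCMI C φ p → IsCMI C ψ q →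
      Projective C (φ, p) (ψ, q) → p = q)
    (φ ψ p : Setoid A) (hφ : IsCMI C φ p) (hψ : IsCMI C ψ p) (hne : φ ≠ ψ) :
    (PIP C φ ψ ↔ ∃ σ q : Setoid A, IsCMI C σ q ∧ σ.r = Bul p φ ψ) ∧
    (PIP C φ ψ ↔ ∃ σ ∈ C, σ.r = Bul p φ ψ) := by
  have hφp : φ ≤ p := hφ.2.2.1.le
  have hψp : ψ ≤ p := hψ.2.2.1.le
  have l31 : (∃ σ ∈ C, σ.r = Bul p φ ψ) → PIP C φ ψ := by
    rintro ⟨σ, hσC, hσr⟩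
    have hσ : ∀ x y, σ.r x y ↔ Bul p φ ψ x y := fun x y => by rw [hσr]
    obtain ⟨a, b, hpab, hfab, hgab⟩ := S8.l2pair one C hR hφ hψ
    have hab : σ.r a b := (hσ a b).mpr ⟨hpab, iff_of_false hfab hgab⟩
    have hσp : σ ≤ p := S8.le_mk fun x y h => ((hσ x y).mp h).1
    have hδσ : φ ⊓ ψ ≤ σ := S8.le_mk fun x y h =>
      (hσ x y).mpr ⟨S8.rle hφp h.1, iff_of_true h.1 h.2⟩
    have hσφ : σ ⊓ φ = φ ⊓ ψ := le_antisymm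
      (S8.le_mk fun x y h => ⟨h.2, ((hσ x y).mp h.1).2.mp h.2⟩)
      (le_inf hδσ inf_le_left)
    have hσψ : σ ⊓ ψ = φ ⊓ ψ := le_antisymm
      (S8.le_mk fun x y h => ⟨((hσ x y).mp h.1).2.mpr h.2, h.2⟩)
      (le_inf hδσ inf_le_right)
    have hsupφ : σ ⊔ φ = p := by
      have h1 : φ < σ ⊔ φ := lt_of_le_of_ne le_sup_right
        (fun h => hfab (S8.rle (le_sup_left.trans h.ge) hab))
      exact le_antisymm (sup_le hσp hφp)
        (hφ.2.2.2 _ (S8.mem_sup2 C hSup hσC hφ.1) h1)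
    have hsupψ : σ ⊔ ψ = p := by
      have h1 : ψ < σ ⊔ ψ := lt_of_le_of_ne le_sup_right
        (fun h => hgab (S8.rle (le_sup_left.trans h.ge) hab))
      exact le_antisymm (sup_le hσp hψp)
        (hψ.2.2.2 _ (S8.mem_sup2 C hSup hσC hψ.1) h1)
    have hδC : φ ⊓ ψ ∈ C := S8.mem_inf2 C hInf hφ.1 hψ.1
    have hs1 : Persp C (φ, p) (φ ⊓ ψ, σ) :=
      ⟨hφ.1, hφ.2.1, hδC, hσC, Or.inr ⟨hσφ.symm, hsupφ.symm⟩⟩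
    have hs2 : Persp C (φ ⊓ ψ, σ) (ψ, p) :=
      ⟨hδC, hσC, hψ.1, hφ.2.1, Or.inl ⟨hσψ.symm, hsupψ.symm⟩⟩
    exact ⟨p, p, hφ, hψ, Relation.ReflTransGen.tail
      (Relation.ReflTransGen.tail Relation.ReflTransGen.refl hs1) hs2⟩
  have l12 : PIP C φ ψ → ∃ σ q : Setoid A, IsCMI C σ q ∧ σ.r = Bul p φ ψ := by
    intro h
    obtain ⟨B, hBcmi, hBiff⟩ := S8.forward one C hInf hSup hDir hM hO hR hP hφ hψ hne h
    exact ⟨B, p, hBcmi, funext fun x => funext fun y => propext (hBiff x y)⟩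
  constructor
  · exact ⟨l12, fun ⟨σ, q, hcmi, hr⟩ => l31 ⟨σ, hcmi.1, hr⟩⟩
  · constructor
    · intro h
      obtain ⟨σ, q, hcmi, hr⟩ := l12 h
      exact ⟨σ, hcmi.1, hr⟩
    · exact l31
end
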